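/- arXiv:1207.4678 — 4 statements merged into one kernel-verified Lean document; each statement's English description precedes it below -/
import Mathlib

section
/- Let ρ be any probability distribution on ℕ, and for n ∈ ℕ define γ_n(G,θ) = (1/2)√((1+2Gθ)/(n(1−θ))) and Λ_n(ρ) = γ_n(G,θ)·∑_{y : ρ_y ≥ 1/n} √ρ_y + min{ γ_n(G,θ)·∑_{y : ρ_y < 1/n} √ρ_y , ∑_{y : ρ_y < 1/n} ρ_y }, where 1 ≤ G < ∞ and 0 ≤ θ < 1 are fixed constants. Then Λ_n(ρ) → 0 as n → ∞. -/
open scoped BigOperators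
open Filter

noncomputable section

/-- Total variation distance `‖μ − ν‖_TV = (1/2) ∑ₛ |μ(s) − ν(s)|`. -/
def tv {α : Type*} (μ ν : α → ℝ) : ℝ := (1 / 2) * ∑' s, |μ s - ν s|

/-- Column-stochastic Markov kernel on ℕ: `A y x = A(y|x)`. -/
def IsKernel (A : ℕ → ℕ → ℝ) : Prop :=
  (∀ y x, 0 ≤ A y x) ∧ ∀ x, ∑' y, A y x = 1

/-- Stochastic vector on ℕ. -/
def IsStochastic (ξ : ℕ → ℝ) : Prop := (∀ x, 0 ≤ ξ x) ∧ ∑' x, ξ x = 1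

/-- Kernel applied to a vector: `(Aξ)_y = ∑ₓ A(y|x) ξₓ`. -/
def kerApp (A : ℕ → ℕ → ℝ) (ξ : ℕ → ℝ) : ℕ → ℝ := fun y => ∑' x, A y x * ξ x

/-- Iterated kernel application: `kerIter A s ξ = Aˢ ξ`. -/
def kerIter (A : ℕ → ℕ → ℝ) : ℕ → (ℕ → ℝ) → ℕ → ℝ
  | 0, ξ => ξ
  | s + 1, ξ => kerApp A (kerIter A s ξ)

/-- Point mass at `x`. -/
def dirac (x : ℕ) : ℕ → ℝ := fun y => if y = x then 1 else 0

/-- `(G,θ)`-geometric ergodicity of the kernel `A` with stationary distribution `π`: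
`τ_{s+1} = sup_x ‖Aˢ δₓ − π‖_TV ≤ G θˢ` for all `s ≥ 0` (i.e. `τ_s ≤ G θ^{s-1}` for `s ≥ 1`),
with `1 ≤ G` and `0 ≤ θ < 1`. -/
def IsGeomErgodic (A : ℕ → ℕ → ℝ) (π : ℕ → ℝ) (G θ : ℝ) : Prop :=
  1 ≤ G ∧ 0 ≤ θ ∧ θ < 1 ∧ IsStochastic π ∧ kerApp A π = π ∧
    ∀ (s x : ℕ), tv (kerIter A s (dirac x)) π ≤ G * θ ^ s

/-- Joint law of the Markov chain `(p₁, A)` on `ℕⁿ`. -/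
def markovLaw (p : ℕ → ℝ) (A : ℕ → ℕ → ℝ) : (n : ℕ) → (Fin n → ℕ) → ℝ
  | 0, _ => 1
  | n + 1, x => p (x 0) * ∏ i : Fin n, A (x i.succ) (x i.castSucc)

/-- Joint law of the hidden Markov chain `(p₁, A, B)` on `ℕⁿ`. -/
def hmmLaw (p : ℕ → ℝ) (A B : ℕ → ℕ → ℝ) (n : ℕ) (y : Fin n → ℕ) : ℝ :=
  ∑' x : Fin n → ℕ, markovLaw p A n x * ∏ i : Fin n, B (y i) (x i)

/-- Probability of an event under a law. -/
def prob {α : Type*} (μ : α → ℝ) (S : Set α) : ℝ := ∑' s : S, μ s.1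

/-- Expectation of a function under a law. -/
def expect {α : Type*} (μ : α → ℝ) (f : α → ℝ) : ℝ := ∑' s, μ s * f s

/-- Empirical distribution of a sample `Y ∈ ℕⁿ`. -/
def emp {n : ℕ} (Y : Fin n → ℕ) (v : ℕ) : ℝ :=
  (∑ i : Fin n, if Y i = v then (1 : ℝ) else 0) / n


/-- `γ_n(G,θ) = (1/2)√((1+2Gθ)/(n(1−θ)))`. -/
def gam (G θ : ℝ) (n : ℕ) : ℝ := (1 / 2) * Real.sqrt ((1 + 2 * G * θ) / (n * (1 - θ)))

/-- `Λ_n(ρ) = γ_n ∑_{ρ_y ≥ 1/n} √ρ_y + min( γ_n ∑_{ρ_y < 1/n} √ρ_y , ∑_{ρ_y < 1/n} ρ_y )`. -/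
def Lam (G θ : ℝ) (ρ : ℕ → ℝ) (n : ℕ) : ℝ :=
  gam G θ n * (∑' y, if 1 / (n : ℝ) ≤ ρ y then Real.sqrt (ρ y) else 0) +
    min (gam G θ n * ∑' y, if ρ y < 1 / (n : ℝ) then Real.sqrt (ρ y) else 0)
      (∑' y, if ρ y < 1 / (n : ℝ) then ρ y else 0)

/-- **Theorem 3(a).** For every probability distribution `ρ` on ℕ, `Λ_n(ρ) → 0` as `n → ∞`. -/
theorem Lam_tendsto_zero (G θ : ℝ) (hG : 1 ≤ G) (hθ0 : 0 ≤ θ) (hθ1 : θ < 1)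
    (ρ : ℕ → ℝ) (hρ : IsStochastic ρ) :
    Filter.Tendsto (fun n : ℕ => Lam G θ ρ n) Filter.atTop (nhds 0) := by
  have hG0 : (0:ℝ) ≤ G := by linarith
  have h1θ : (0:ℝ) < 1 - θ := by linarith
  set c : ℝ := (1/2) * Real.sqrt ((1 + 2*G*θ)/(1-θ)) with hc
  have hc0 : 0 ≤ c := by positivity
  have hgam : ∀ n : ℕ, gam G θ n = c / Real.sqrt n := by
    intro n
    unfold gam
    rw [hc, mul_div_assoc, ← Real.sqrt_div (by positivity) n, div_div, mul_comm (1-θ) (n:ℝ)]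
  have hgamnn : ∀ n : ℕ, 0 ≤ gam G θ n := by
    intro n; rw [hgam]; positivity
  have hρ0 := hρ.1
  have hρsum : Summable ρ := by
    by_contra h
    have h1 := hρ.2
    rw [tsum_eq_zero_of_not_summable h] at h1
    norm_num at h1
  -- gam → 0
  have hgam0 : Tendsto (fun n : ℕ => gam G θ n) atTop (nhds 0) := by
    have h1 : Tendsto (fun n : ℕ => Real.sqrt (1/(n:ℝ))) atTop (nhds 0) := by
      have := (Real.continuous_sqrt.tendsto 0).comp tendsto_one_div_atTop_nhds_zero_nat
      rw [Real.sqrt_zero] at this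
      exact this
    have h2 : Tendsto (fun n : ℕ => c * Real.sqrt (1/(n:ℝ))) atTop (nhds 0) := by
      simpa using h1.const_mul c
    refine h2.congr fun n => ?_
    rw [hgam, one_div, Real.sqrt_inv, mul_comm, inv_mul_eq_div]
  -- Claim A
  have hA : Tendsto (fun n : ℕ => gam G θ n *
      ∑' y, if 1/(n:ℝ) ≤ ρ y then Real.sqrt (ρ y) else 0) atTop (nhds 0) := by
    have key := tendsto_tsum_of_dominated_convergence
      (f := fun (n : ℕ) (y : ℕ) => gam G θ n * (if 1/(n:ℝ) ≤ ρ y then Real.sqrt (ρ y) else 0))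
      (g := fun _ : ℕ => (0:ℝ)) (bound := fun y => c * ρ y)
      (𝓕 := atTop) (hρsum.mul_left c)
      (fun y => ?_) ?_
    · simpa only [tsum_mul_left, tsum_zero] using key
    · -- pointwise limit
      have hb : ∀ n : ℕ, |gam G θ n * (if 1/(n:ℝ) ≤ ρ y then Real.sqrt (ρ y) else 0)| ≤
          gam G θ n * Real.sqrt (ρ y) := by
        intro n
        have hite : (0:ℝ) ≤ if 1/(n:ℝ) ≤ ρ y then Real.sqrt (ρ y) else 0 := by
          split_ifs <;> simp [Real.sqrt_nonneg]
        rw [abs_of_nonneg (mul_nonneg (hgamnn n) hite)]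
        refine mul_le_mul_of_nonneg_left ?_ (hgamnn n)
        split_ifs <;> simp [Real.sqrt_nonneg]
      have hlim : Tendsto (fun n : ℕ => gam G θ n * Real.sqrt (ρ y)) atTop (nhds 0) := by
        simpa using hgam0.mul_const (Real.sqrt (ρ y))
      show Tendsto (fun n : ℕ => gam G θ n * (if 1/(n:ℝ) ≤ ρ y then Real.sqrt (ρ y) else 0))
        atTop (nhds 0)
      refine squeeze_zero_norm (fun n => ?_) hlim
      simpa using hb n
    · -- dominating bound
      refine Filter.Eventually.of_forall fun n y => ?_
      have hnn : 0 ≤ gam G θ n * (if 1/(n:ℝ) ≤ ρ y then Real.sqrt (ρ y) else 0) := by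
        refine mul_nonneg (hgamnn n) ?_
        split_ifs <;> simp [Real.sqrt_nonneg]
      rw [Real.norm_eq_abs, abs_of_nonneg hnn]
      split_ifs with h
      · rcases Nat.eq_zero_or_pos n with rfl | hn
        · simp [hgam, mul_nonneg hc0 (hρ0 y)]
        · have hnpos : (0:ℝ) < n := by exact_mod_cast hn
          have hs : 1 / Real.sqrt n ≤ Real.sqrt (ρ y) := by
            rw [one_div, ← Real.sqrt_inv]
            exact Real.sqrt_le_sqrt (by rwa [one_div] at h)
          calc gam G θ n * Real.sqrt (ρ y) = c * ((1 / Real.sqrt n) * Real.sqrt (ρ y)) := by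
                rw [hgam]; ring
            _ ≤ c * (Real.sqrt (ρ y) * Real.sqrt (ρ y)) := by
                refine mul_le_mul_of_nonneg_left ?_ hc0
                exact mul_le_mul_of_nonneg_right hs (Real.sqrt_nonneg _)
            _ = c * ρ y := by rw [Real.mul_self_sqrt (hρ0 y)]
      · simpa using mul_nonneg hc0 (hρ0 y)
  -- Claim B
  have hB : Tendsto (fun n : ℕ => ∑' y, if ρ y < 1/(n:ℝ) then ρ y else 0) atTop (nhds 0) := by
    have key := tendsto_tsum_of_dominated_convergence
      (f := fun (n : ℕ) (y : ℕ) => if ρ y < 1/(n:ℝ) then ρ y else 0)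
      (g := fun _ : ℕ => (0:ℝ)) (bound := ρ) (𝓕 := atTop) hρsum
      (fun y => ?_) ?_
    · simpa using key
    · rcases eq_or_lt_of_le (hρ0 y) with h | h
      · simp only [← h, ite_self]; exact tendsto_const_nhds
      · have hev : ∀ᶠ n : ℕ in atTop, (if ρ y < 1/(n:ℝ) then ρ y else 0) = 0 := by
          filter_upwards [tendsto_one_div_atTop_nhds_zero_nat.eventually_lt_const h] with n hn
          rw [if_neg (not_lt.mpr hn.le)]
        exact Tendsto.congr' (Filter.EventuallyEq.symm hev) tendsto_const_nhds
    · refine Filter.Eventually.of_forall fun n y => ?_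
      show |if ρ y < 1/(n:ℝ) then ρ y else 0| ≤ ρ y
      split_ifs
      · rw [abs_of_nonneg (hρ0 y)]
      · simpa using hρ0 y
  -- conclude by squeeze
  have hup : Tendsto (fun n : ℕ =>
      gam G θ n * (∑' y, if 1/(n:ℝ) ≤ ρ y then Real.sqrt (ρ y) else 0) +
      ∑' y, if ρ y < 1/(n:ℝ) then ρ y else 0) atTop (nhds 0) := by
    simpa using hA.add hB
  refine tendsto_of_tendsto_of_tendsto_of_le_of_le tendsto_const_nhds hup
    (fun n => ?_) (fun n => ?_)
  · unfold Lam
    have h1 : 0 ≤ gam G θ n * (∑' y, if 1/(n:ℝ) ≤ ρ y then Real.sqrt (ρ y) else 0) :=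
      mul_nonneg (hgamnn n) (tsum_nonneg fun y => by split_ifs <;> simp [Real.sqrt_nonneg])
    have h2 : 0 ≤ gam G θ n * (∑' y, if ρ y < 1/(n:ℝ) then Real.sqrt (ρ y) else 0) :=
      mul_nonneg (hgamnn n) (tsum_nonneg fun y => by split_ifs <;> simp [Real.sqrt_nonneg])
    have h3 : 0 ≤ ∑' y, if ρ y < 1/(n:ℝ) then ρ y else 0 :=
      tsum_nonneg fun y => by split_ifs <;> simp [hρ0 y]
    have := le_min h2 h3
    linarith
  · unfold Lam
    exact add_le_add le_rfl (min_le_right _ _)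

end
end

section
/- Let Y₁,…,Yₙ be a stationary (G,θ)-geometrically ergodic hidden Markov chain on ℕ with stationary output distribution ρ, and let ρ̂ = ρ̂⁽ⁿ⁾ be the empirical distribution ρ̂_y = (1/n)∑_{i=1}^n 1[Y_i = y]. Then E[ sup_{y∈ℕ} |ρ_y − ρ̂_y| ] ≤ √((1+2Gθ)/(n(1−θ))). -/
open scoped BigOperators
open Filter

noncomputable section

namespace HMMAux

/-- Fubini package for nonnegative doubly-indexed families. -/
theorem fub {α β : Type*} {f : α → β → ℝ} (h0 : ∀ a b, 0 ≤ f a b)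
    (h1 : ∀ a, Summable (f a)) (h2 : Summable fun a => ∑' b, f a b) :
    Summable (Function.uncurry f) ∧ (∀ b, Summable fun a => f a b) ∧
      (Summable fun b => ∑' a, f a b) ∧ (∑' a, ∑' b, f a b) = ∑' b, ∑' a, f a b := by
  have hs : Summable (Function.uncurry f) :=
    (summable_prod_of_nonneg (fun p => h0 p.1 p.2)).2 ⟨h1, h2⟩
  have hcol : ∀ b, Summable fun a => f a b := fun b => hs.prod_symm.prod_factor b
  have hmar : Summable fun b => ∑' a, f a b :=
    ((summable_prod_of_nonneg (f := fun p : β × α => f p.2 p.1)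
      (fun p => h0 p.2 p.1)).1 hs.prod_symm).2
  refine ⟨hs, hcol, hmar, ?_⟩
  calc ∑' a, ∑' b, f a b = ∑' p : α × β, Function.uncurry f p := (Summable.tsum_prod hs).symm
    _ = ∑' p : β × α, Function.uncurry f p.swap := ((Equiv.prodComm β α).tsum_eq _).symm
    _ = ∑' b, ∑' a, f a b := Summable.tsum_prod hs.prod_symm

theorem stoch_summable {ξ : ℕ → ℝ} (h : IsStochastic ξ) : Summable ξ := by
  by_contra hc
  have := h.2
  rw [tsum_eq_zero_of_not_summable hc] at this
  exact absurd this (by norm_num)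

theorem stoch_le_one {ξ : ℕ → ℝ} (h : IsStochastic ξ) (x : ℕ) : ξ x ≤ 1 := by
  rw [← h.2]
  exact Summable.le_tsum (stoch_summable h) x (fun y _ => h.1 y)

theorem ker_col_stoch {A : ℕ → ℕ → ℝ} (hA : IsKernel A) (x : ℕ) :
    IsStochastic (fun y => A y x) := ⟨fun y => hA.1 y x, hA.2 x⟩

theorem dirac_stoch (x : ℕ) : IsStochastic (dirac x) := by
  constructor
  · intro y; unfold dirac; positivity
  · exact tsum_ite_eq x (fun _ => (1:ℝ))

theorem tsum_mul_dirac (x : ℕ) (g : ℕ → ℝ) : ∑' y, g y * dirac x y = g x := by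
  have : (fun y => g y * dirac x y) = fun y => if y = x then g x else 0 := by
    funext y; by_cases h : y = x <;> simp [dirac, h]
  rw [this]
  exact tsum_ite_eq x (fun _ => g x)

theorem tsum_dirac_mul (x : ℕ) (g : ℕ → ℝ) : ∑' y, dirac x y * g y = g x := by
  simp_rw [mul_comm]; exact tsum_mul_dirac x g

end HMMAux
namespace HMMAux

theorem mul01 {ξ φ : ℕ → ℝ} (hξ : IsStochastic ξ) (h0 : ∀ x, 0 ≤ φ x) (h1 : ∀ x, φ x ≤ 1) :
    Summable (fun x => ξ x * φ x) ∧ 0 ≤ (∑' x, ξ x * φ x) ∧ (∑' x, ξ x * φ x) ≤ 1 := by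
  have hs : Summable (fun x => ξ x * φ x) := by
    refine Summable.of_nonneg_of_le (fun x => mul_nonneg (hξ.1 x) (h0 x))
      (fun x => ?_) (stoch_summable hξ)
    calc ξ x * φ x ≤ ξ x * 1 := mul_le_mul_of_nonneg_left (h1 x) (hξ.1 x)
      _ = ξ x := mul_one _
  refine ⟨hs, tsum_nonneg fun x => mul_nonneg (hξ.1 x) (h0 x), ?_⟩
  rw [← hξ.2]
  refine Summable.tsum_le_tsum (fun x => ?_) hs (stoch_summable hξ)
  calc ξ x * φ x ≤ ξ x * 1 := mul_le_mul_of_nonneg_left (h1 x) (hξ.1 x)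
    _ = ξ x := mul_one _

theorem kerApp_stoch {A : ℕ → ℕ → ℝ} {ξ : ℕ → ℝ} (hA : IsKernel A) (hξ : IsStochastic ξ) :
    IsStochastic (kerApp A ξ) := by
  have h0 : ∀ x y, 0 ≤ A y x * ξ x := fun x y => mul_nonneg (hA.1 y x) (hξ.1 x)
  have h1 : ∀ x, Summable fun y => A y x * ξ x :=
    fun x => (stoch_summable (ker_col_stoch hA x)).mul_right (ξ x)
  have hrow : ∀ x, (∑' y, A y x * ξ x) = ξ x := by
    intro x; rw [tsum_mul_right, hA.2 x, one_mul]
  have h2 : Summable fun x => ∑' y, A y x * ξ x := by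
    simp_rw [hrow]; exact stoch_summable hξ
  obtain ⟨-, hcol, hmar, hswap⟩ := fub h0 h1 h2
  constructor
  · intro y; exact tsum_nonneg fun x => h0 x y
  · have : (∑' x : ℕ, ∑' y : ℕ, A y x * ξ x) = 1 := by simp_rw [hrow]; exact hξ.2
    rw [show (kerApp A ξ) = fun y => ∑' x, A y x * ξ x from rfl]
    rw [← hswap, this]

theorem kerIter_stoch {A : ℕ → ℕ → ℝ} {ξ : ℕ → ℝ} (hA : IsKernel A) (hξ : IsStochastic ξ) :
    ∀ s, IsStochastic (kerIter A s ξ)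
  | 0 => hξ
  | s + 1 => kerApp_stoch hA (kerIter_stoch hA hξ s)

theorem kerIter_comm {A : ℕ → ℕ → ℝ} {ξ : ℕ → ℝ} :
    ∀ s, kerIter A s (kerApp A ξ) = kerIter A (s + 1) ξ
  | 0 => rfl
  | s + 1 => by
      show kerApp A (kerIter A s (kerApp A ξ)) = _
      rw [kerIter_comm s]; rfl

theorem kerApp_dirac (A : ℕ → ℕ → ℝ) (x : ℕ) : kerApp A (dirac x) = fun y => A y x := by
  funext y; exact tsum_mul_dirac x (fun u => A y u)

theorem kerIter_linear {A : ℕ → ℕ → ℝ} {ξ : ℕ → ℝ} (hA : IsKernel A) (hξ : IsStochastic ξ) :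
    ∀ s v, kerIter A s ξ v = ∑' x, ξ x * kerIter A s (dirac x) v := by
  intro s
  induction s with
  | zero =>
    intro v
    show ξ v = ∑' x, ξ x * dirac x v
    have : ∀ x, dirac x v = dirac v x := by intro x; simp [dirac, eq_comm]
    simp_rw [this]
    exact (tsum_mul_dirac v ξ).symm
  | succ s ih =>
    intro v
    have hK := fun x => kerIter_stoch hA (dirac_stoch x) s
    have hKle : ∀ x u, kerIter A s (dirac x) u ≤ 1 := fun x u => stoch_le_one (hK x) u
    have hKnn : ∀ x u, 0 ≤ kerIter A s (dirac x) u := fun x u => (hK x).1 u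
    have h0 : ∀ u x, 0 ≤ A v u * (ξ x * kerIter A s (dirac x) u) :=
      fun u x => mul_nonneg (hA.1 v u) (mul_nonneg (hξ.1 x) (hKnn x u))
    have h1 : ∀ u, Summable fun x => A v u * (ξ x * kerIter A s (dirac x) u) := by
      intro u
      exact ((mul01 hξ (fun x => hKnn x u) (fun x => hKle x u)).1).mul_left (A v u)
    have h2 : Summable fun u => ∑' x, A v u * (ξ x * kerIter A s (dirac x) u) := by
      have heq : ∀ u, (∑' x, A v u * (ξ x * kerIter A s (dirac x) u))
          = A v u * kerIter A s ξ u := by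
        intro u
        rw [tsum_mul_left (a := A v u), ← ih]
      simp_rw [heq]
      refine Summable.of_nonneg_of_le (fun u => ?_) (fun u => ?_)
        (stoch_summable (kerIter_stoch hA hξ s))
      · exact mul_nonneg (hA.1 v u) ((kerIter_stoch hA hξ s).1 u)
      · calc A v u * kerIter A s ξ u ≤ 1 * kerIter A s ξ u :=
            mul_le_mul_of_nonneg_right (stoch_le_one (ker_col_stoch hA u) v)
              ((kerIter_stoch hA hξ s).1 u)
          _ = kerIter A s ξ u := one_mul _
    obtain ⟨-, -, -, hswap⟩ := fub h0 h1 h2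
    show (∑' u, A v u * kerIter A s ξ u) = _
    calc (∑' u, A v u * kerIter A s ξ u)
        = ∑' u, A v u * ∑' x, ξ x * kerIter A s (dirac x) u := by simp_rw [ih]
      _ = ∑' u, ∑' x, A v u * (ξ x * kerIter A s (dirac x) u) := by
          congr 1; funext u; exact tsum_mul_left.symm
      _ = ∑' x, ∑' u, A v u * (ξ x * kerIter A s (dirac x) u) := hswap
      _ = ∑' x, ξ x * ∑' u, A v u * kerIter A s (dirac x) u := by
          congr 1; funext x
          rw [← tsum_mul_left]
          congr 1; funext u; ring
      _ = ∑' x, ξ x * kerIter A (s+1) (dirac x) v := rfl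

theorem kerIter_fixed {A : ℕ → ℕ → ℝ} {π : ℕ → ℝ} (hπ : kerApp A π = π) :
    ∀ s, kerIter A s π = π
  | 0 => rfl
  | s + 1 => by show kerApp A (kerIter A s π) = π; rw [kerIter_fixed hπ s, hπ]

theorem step_lemma {A : ℕ → ℕ → ℝ} {p φ : ℕ → ℝ} (hA : IsKernel A) (hp : IsStochastic p)
    (h0 : ∀ x, 0 ≤ φ x) (h1 : ∀ x, φ x ≤ 1) (s : ℕ) :
    (∑' x0, p x0 * ∑' w, kerIter A s (kerApp A (dirac x0)) w * φ w)
      = ∑' w, kerIter A (s + 1) p w * φ w := by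
  simp_rw [kerIter_comm]
  have hK := fun x => kerIter_stoch hA (dirac_stoch x) (s+1)
  have hKle : ∀ x u, kerIter A (s+1) (dirac x) u ≤ 1 := fun x u => stoch_le_one (hK x) u
  have hKnn : ∀ x u, 0 ≤ kerIter A (s+1) (dirac x) u := fun x u => (hK x).1 u
  have h0' : ∀ x0 w, 0 ≤ p x0 * (kerIter A (s+1) (dirac x0) w * φ w) :=
    fun x0 w => mul_nonneg (hp.1 x0) (mul_nonneg (hKnn x0 w) (h0 w))
  have h1' : ∀ x0, Summable fun w => p x0 * (kerIter A (s+1) (dirac x0) w * φ w) := by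
    intro x0
    exact ((mul01 (hK x0) h0 h1).1).mul_left (p x0)
  have h2' : Summable fun x0 => ∑' w, p x0 * (kerIter A (s+1) (dirac x0) w * φ w) := by
    have heq : ∀ x0, (∑' w, p x0 * (kerIter A (s+1) (dirac x0) w * φ w))
        = p x0 * ∑' w, kerIter A (s+1) (dirac x0) w * φ w := fun x0 => tsum_mul_left
    simp_rw [heq]
    refine Summable.of_nonneg_of_le (fun x0 => ?_) (fun x0 => ?_) (stoch_summable hp)
    · exact mul_nonneg (hp.1 x0) (mul01 (hK x0) h0 h1).2.1
    · calc p x0 * ∑' w, kerIter A (s+1) (dirac x0) w * φ w ≤ p x0 * 1 :=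
          mul_le_mul_of_nonneg_left (mul01 (hK x0) h0 h1).2.2 (hp.1 x0)
        _ = p x0 := mul_one _
  obtain ⟨-, -, -, hswap⟩ := fub h0' h1' h2'
  calc (∑' x0, p x0 * ∑' w, kerIter A (s+1) (dirac x0) w * φ w)
      = ∑' x0, ∑' w, p x0 * (kerIter A (s+1) (dirac x0) w * φ w) := by
        congr 1; funext x0; exact tsum_mul_left.symm
    _ = ∑' w, ∑' x0, p x0 * (kerIter A (s+1) (dirac x0) w * φ w) := hswap
    _ = ∑' w, (∑' x0, p x0 * kerIter A (s+1) (dirac x0) w) * φ w := by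
        congr 1; funext w
        rw [← tsum_mul_right]
        congr 1; funext x0; ring
    _ = ∑' w, kerIter A (s+1) p w * φ w := by
        congr 1; funext w
        rw [← kerIter_linear hA hp]

end HMMAux
namespace HMMAux

theorem markovLaw_cons (p : ℕ → ℝ) (A : ℕ → ℕ → ℝ) (n : ℕ) (x0 : ℕ) (z : Fin n → ℕ) :
    markovLaw p A (n + 1) (Fin.cons x0 z) = p x0 * markovLaw (fun w => A w x0) A n z := by
  cases n with
  | zero => simp [markovLaw]
  | succ m =>
    simp only [markovLaw, Fin.cons_zero]
    congr 1
    rw [Fin.prod_univ_succ]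
    congr 1

theorem markovLaw_nonneg {p : ℕ → ℝ} {A : ℕ → ℕ → ℝ} (hp : ∀ x, 0 ≤ p x)
    (hA : IsKernel A) : ∀ n (x : Fin n → ℕ), 0 ≤ markovLaw p A n x := by
  intro n x
  cases n with
  | zero => exact zero_le_one
  | succ m =>
    exact mul_nonneg (hp _) (Finset.prod_nonneg fun i _ => hA.1 _ _)

theorem tsum_cons {n : ℕ} (F : (Fin (n + 1) → ℕ) → ℝ) (h0 : ∀ x, 0 ≤ F x)
    (h1 : ∀ x0, Summable fun z : Fin n → ℕ => F (Fin.cons x0 z))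
    (h2 : Summable fun x0 => ∑' z : Fin n → ℕ, F (Fin.cons x0 z)) :
    Summable F ∧ (∑' x, F x) = ∑' x0, ∑' z : Fin n → ℕ, F (Fin.cons x0 z) := by
  classical
  let e : (ℕ × (Fin n → ℕ)) ≃ (Fin (n+1) → ℕ) := Fin.consEquiv (fun _ => ℕ)
  have hG : Summable (F ∘ e) := by
    refine (summable_prod_of_nonneg (fun q => h0 _)).2 ⟨fun x0 => ?_, ?_⟩
    · exact h1 x0
    · exact h2
  refine ⟨e.summable_iff.1 hG, ?_⟩
  rw [← e.tsum_eq F]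
  exact Summable.tsum_prod hG

theorem markov_total {A : ℕ → ℕ → ℝ} (hA : IsKernel A) :
    ∀ (n : ℕ) (p : ℕ → ℝ), IsStochastic p →
      Summable (markovLaw p A n) ∧ (∑' x : Fin n → ℕ, markovLaw p A n x) = 1 := by
  intro n
  induction n with
  | zero =>
    intro p hp
    constructor
    · exact Summable.of_finite
    · rw [tsum_eq_single (fun i => i.elim0) (fun b hb => absurd (funext fun i => i.elim0) hb)]
      rfl
  | succ m ih =>
    intro p hp
    have key := fun x0 => ih (fun w => A w x0) (ker_col_stoch hA x0)
    have hcons : ∀ x0 (z : Fin m → ℕ),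
        markovLaw p A (m+1) (Fin.cons x0 z) = p x0 * markovLaw (fun w => A w x0) A m z :=
      fun x0 z => markovLaw_cons p A m x0 z
    have h1 : ∀ x0, Summable fun z : Fin m → ℕ => markovLaw p A (m+1) (Fin.cons x0 z) := by
      intro x0; simp_rw [hcons]; exact (key x0).1.mul_left (p x0)
    have hval : ∀ x0, (∑' z : Fin m → ℕ, markovLaw p A (m+1) (Fin.cons x0 z)) = p x0 := by
      intro x0
      simp_rw [hcons]
      rw [tsum_mul_left, (key x0).2, mul_one]
    have h2 : Summable fun x0 => ∑' z : Fin m → ℕ, markovLaw p A (m+1) (Fin.cons x0 z) := by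
      simp_rw [hval]; exact stoch_summable hp
    obtain ⟨hs, heq⟩ := tsum_cons (markovLaw p A (m+1))
      (markovLaw_nonneg hp.1 hA (m+1)) h1 h2
    refine ⟨hs, ?_⟩
    rw [heq]
    simp_rw [hval]
    exact hp.2

end HMMAux
namespace HMMAux

theorem markov_marg {A : ℕ → ℕ → ℝ} (hA : IsKernel A) :
    ∀ (n : ℕ) (i : Fin n) (p : ℕ → ℝ), IsStochastic p →
      ∀ (g : ℕ → ℝ), (∀ x, 0 ≤ g x) → (∀ x, g x ≤ 1) →
      Summable (fun x : Fin n → ℕ => markovLaw p A n x * g (x i)) ∧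
      (∑' x : Fin n → ℕ, markovLaw p A n x * g (x i))
        = ∑' w, kerIter A i.val p w * g w := by
  intro n
  induction n with
  | zero => exact fun i => i.elim0
  | succ m ih =>
    intro i
    induction i using Fin.cases with
    | zero =>
      intro p hp g hg0 hg1
      have hF0 : ∀ x : Fin (m+1) → ℕ, 0 ≤ markovLaw p A (m+1) x * g (x 0) :=
        fun x => mul_nonneg (markovLaw_nonneg hp.1 hA _ x) (hg0 _)
      have hc : ∀ (x0 : ℕ) (z : Fin m → ℕ),
          markovLaw p A (m+1) (Fin.cons x0 z) * g (Fin.cons (α := fun _ => ℕ) x0 z 0)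
            = (p x0 * g x0) * markovLaw (fun w => A w x0) A m z := by
        intro x0 z; rw [markovLaw_cons, Fin.cons_zero]; ring
      have hT := fun x0 => markov_total hA m (fun w => A w x0) (ker_col_stoch hA x0)
      have h1 : ∀ x0, Summable fun z : Fin m → ℕ =>
          markovLaw p A (m+1) (Fin.cons x0 z) * g (Fin.cons (α := fun _ => ℕ) x0 z 0) := by
        intro x0; simp_rw [hc]; exact (hT x0).1.mul_left _
      have hval : ∀ x0, (∑' z : Fin m → ℕ,
          markovLaw p A (m+1) (Fin.cons x0 z) * g (Fin.cons (α := fun _ => ℕ) x0 z 0)) = p x0 * g x0 := by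
        intro x0; simp_rw [hc]; rw [tsum_mul_left, (hT x0).2, mul_one]
      have h2 : Summable fun x0 => ∑' z : Fin m → ℕ,
          markovLaw p A (m+1) (Fin.cons x0 z) * g (Fin.cons (α := fun _ => ℕ) x0 z 0) := by
        simp_rw [hval]; exact (mul01 hp hg0 hg1).1
      obtain ⟨hs, heq⟩ := tsum_cons _ hF0 h1 h2
      refine ⟨hs, ?_⟩
      rw [heq]
      simp_rw [hval]
      rfl
    | succ j =>
      intro p hp g hg0 hg1
      have hF0 : ∀ x : Fin (m+1) → ℕ, 0 ≤ markovLaw p A (m+1) x * g (x j.succ) :=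
        fun x => mul_nonneg (markovLaw_nonneg hp.1 hA _ x) (hg0 _)
      have hc : ∀ (x0 : ℕ) (z : Fin m → ℕ),
          markovLaw p A (m+1) (Fin.cons x0 z) * g (Fin.cons (α := fun _ => ℕ) x0 z j.succ)
            = p x0 * (markovLaw (fun w => A w x0) A m z * g (z j)) := by
        intro x0 z; rw [markovLaw_cons, Fin.cons_succ]; ring
      have ihx := fun x0 => ih j (fun w => A w x0) (ker_col_stoch hA x0) g hg0 hg1
      have h1 : ∀ x0, Summable fun z : Fin m → ℕ =>
          markovLaw p A (m+1) (Fin.cons x0 z) * g (Fin.cons (α := fun _ => ℕ) x0 z j.succ) := by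
        intro x0; simp_rw [hc]; exact (ihx x0).1.mul_left _
      have hval : ∀ x0, (∑' z : Fin m → ℕ,
          markovLaw p A (m+1) (Fin.cons x0 z) * g (Fin.cons (α := fun _ => ℕ) x0 z j.succ))
            = p x0 * ∑' w, kerIter A j.val (kerApp A (dirac x0)) w * g w := by
        intro x0
        simp_rw [hc]
        rw [tsum_mul_left, (ihx x0).2, ← kerApp_dirac A x0]
      have hinner01 : ∀ x0, 0 ≤ (∑' w, kerIter A j.val (kerApp A (dirac x0)) w * g w)
          ∧ (∑' w, kerIter A j.val (kerApp A (dirac x0)) w * g w) ≤ 1 := by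
        intro x0
        have := mul01 (kerIter_stoch hA (kerApp_stoch hA (dirac_stoch x0)) j.val) hg0 hg1
        exact ⟨this.2.1, this.2.2⟩
      have h2 : Summable fun x0 => ∑' z : Fin m → ℕ,
          markovLaw p A (m+1) (Fin.cons x0 z) * g (Fin.cons (α := fun _ => ℕ) x0 z j.succ) := by
        simp_rw [hval]
        refine Summable.of_nonneg_of_le (fun x0 => ?_) (fun x0 => ?_) (stoch_summable hp)
        · exact mul_nonneg (hp.1 x0) (hinner01 x0).1
        · calc p x0 * _ ≤ p x0 * 1 :=
              mul_le_mul_of_nonneg_left (hinner01 x0).2 (hp.1 x0)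
            _ = p x0 := mul_one _
      obtain ⟨hs, heq⟩ := tsum_cons _ hF0 h1 h2
      refine ⟨hs, ?_⟩
      rw [heq]
      simp_rw [hval]
      rw [step_lemma hA hp hg0 hg1 j.val]
      rfl

theorem markov_marg2 {A : ℕ → ℕ → ℝ} (hA : IsKernel A) :
    ∀ (n : ℕ) (i j : Fin n), i.val < j.val → ∀ (p : ℕ → ℝ), IsStochastic p →
      ∀ (g h : ℕ → ℝ), (∀ x, 0 ≤ g x) → (∀ x, g x ≤ 1) →
        (∀ x, 0 ≤ h x) → (∀ x, h x ≤ 1) →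
      Summable (fun x : Fin n → ℕ => markovLaw p A n x * (g (x i) * h (x j))) ∧
      (∑' x : Fin n → ℕ, markovLaw p A n x * (g (x i) * h (x j)))
        = ∑' w, kerIter A i.val p w
            * (g w * ∑' w', kerIter A (j.val - i.val) (dirac w) w' * h w') := by
  intro n
  induction n with
  | zero => exact fun i => i.elim0
  | succ m ih =>
    intro i
    induction i using Fin.cases with
    | zero =>
      intro j hij p hp g h hg0 hg1 hh0 hh1
      obtain ⟨j', rfl⟩ : ∃ j' : Fin m, j'.succ = j := by
        refine Fin.exists_succ_eq.2 ?_
        intro hj0; rw [hj0] at hij; exact absurd hij (by simp)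
      have hF0 : ∀ x : Fin (m+1) → ℕ,
          0 ≤ markovLaw p A (m+1) x * (g (x 0) * h (x j'.succ)) :=
        fun x => mul_nonneg (markovLaw_nonneg hp.1 hA _ x) (mul_nonneg (hg0 _) (hh0 _))
      have hc : ∀ (x0 : ℕ) (z : Fin m → ℕ),
          markovLaw p A (m+1) (Fin.cons x0 z) * (g (Fin.cons (α := fun _ => ℕ) x0 z 0) * h (Fin.cons (α := fun _ => ℕ) x0 z j'.succ))
            = (p x0 * g x0) * (markovLaw (fun w => A w x0) A m z * h (z j')) := by
        intro x0 z; rw [markovLaw_cons, Fin.cons_zero, Fin.cons_succ]; ring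
      have ihx := fun x0 => markov_marg hA m j' (fun w => A w x0) (ker_col_stoch hA x0) h hh0 hh1
      have h1 : ∀ x0, Summable fun z : Fin m → ℕ =>
          markovLaw p A (m+1) (Fin.cons x0 z) * (g (Fin.cons (α := fun _ => ℕ) x0 z 0) * h (Fin.cons (α := fun _ => ℕ) x0 z j'.succ)) := by
        intro x0; simp_rw [hc]; exact (ihx x0).1.mul_left _
      have hval : ∀ x0, (∑' z : Fin m → ℕ,
          markovLaw p A (m+1) (Fin.cons x0 z) * (g (Fin.cons (α := fun _ => ℕ) x0 z 0) * h (Fin.cons (α := fun _ => ℕ) x0 z j'.succ)))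
            = (p x0 * g x0) * ∑' w', kerIter A (j'.val + 1) (dirac x0) w' * h w' := by
        intro x0
        simp_rw [hc]
        rw [tsum_mul_left, (ihx x0).2, ← kerApp_dirac A x0, kerIter_comm]
      have hinner01 : ∀ x0, 0 ≤ (∑' w', kerIter A (j'.val + 1) (dirac x0) w' * h w')
          ∧ (∑' w', kerIter A (j'.val + 1) (dirac x0) w' * h w') ≤ 1 := by
        intro x0
        have := mul01 (kerIter_stoch hA (dirac_stoch x0) (j'.val + 1)) hh0 hh1
        exact ⟨this.2.1, this.2.2⟩
      have h2 : Summable fun x0 => ∑' z : Fin m → ℕ,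
          markovLaw p A (m+1) (Fin.cons x0 z) * (g (Fin.cons (α := fun _ => ℕ) x0 z 0) * h (Fin.cons (α := fun _ => ℕ) x0 z j'.succ)) := by
        simp_rw [hval]
        refine Summable.of_nonneg_of_le (fun x0 => ?_) (fun x0 => ?_) (stoch_summable hp)
        · exact mul_nonneg (mul_nonneg (hp.1 x0) (hg0 x0)) (hinner01 x0).1
        · calc p x0 * g x0 * _
              ≤ p x0 * g x0 * 1 := mul_le_mul_of_nonneg_left (hinner01 x0).2 (mul_nonneg (hp.1 x0) (hg0 x0))
            _ = p x0 * g x0 := mul_one _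
            _ ≤ p x0 * 1 := mul_le_mul_of_nonneg_left (hg1 x0) (hp.1 x0)
            _ = p x0 := mul_one _
      obtain ⟨hs, heq⟩ := tsum_cons _ hF0 h1 h2
      refine ⟨hs, ?_⟩
      rw [heq]
      simp_rw [hval]
      have hidx : (j'.succ : Fin (m+1)).val - (0 : Fin (m+1)).val = j'.val + 1 := by simp
      rw [hidx]
      show _ = ∑' w, kerIter A (0 : Fin (m+1)).val p w
        * (g w * ∑' w', kerIter A (j'.val + 1) (dirac w) w' * h w')
      refine tsum_congr fun x0 => ?_
      show (p x0 * g x0) * _ = kerIter A 0 p x0 * (g x0 * _)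
      show (p x0 * g x0) * _ = p x0 * (g x0 * _)
      ring
    | succ i' =>
      intro j hij p hp g h hg0 hg1 hh0 hh1
      obtain ⟨j', rfl⟩ : ∃ j' : Fin m, j'.succ = j := by
        refine Fin.exists_succ_eq.2 ?_
        intro hj0; rw [hj0] at hij; exact absurd hij (by simp)
      have hij' : i'.val < j'.val := by
        have h1 : i'.succ.val = i'.val + 1 := Fin.val_succ i'
        have h2 : j'.succ.val = j'.val + 1 := Fin.val_succ j'
        omega
      have hF0 : ∀ x : Fin (m+1) → ℕ,
          0 ≤ markovLaw p A (m+1) x * (g (x i'.succ) * h (x j'.succ)) :=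
        fun x => mul_nonneg (markovLaw_nonneg hp.1 hA _ x) (mul_nonneg (hg0 _) (hh0 _))
      have hc : ∀ (x0 : ℕ) (z : Fin m → ℕ),
          markovLaw p A (m+1) (Fin.cons x0 z) * (g (Fin.cons (α := fun _ => ℕ) x0 z i'.succ) * h (Fin.cons (α := fun _ => ℕ) x0 z j'.succ))
            = p x0 * (markovLaw (fun w => A w x0) A m z * (g (z i') * h (z j'))) := by
        intro x0 z; rw [markovLaw_cons, Fin.cons_succ, Fin.cons_succ]; ring
      have ihx := fun x0 => ih i' j' hij' (fun w => A w x0) (ker_col_stoch hA x0) g h hg0 hg1 hh0 hh1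
      -- the bounded test function φ
      set φ : ℕ → ℝ := fun w =>
        g w * ∑' w', kerIter A (j'.val - i'.val) (dirac w) w' * h w' with hφ
      have hφ01 : ∀ w, 0 ≤ φ w ∧ φ w ≤ 1 := by
        intro w
        have := mul01 (kerIter_stoch hA (dirac_stoch w) (j'.val - i'.val)) hh0 hh1
        constructor
        · exact mul_nonneg (hg0 w) this.2.1
        · calc g w * _ ≤ 1 * 1 :=
              mul_le_mul (hg1 w) this.2.2 this.2.1 zero_le_one
            _ = 1 := mul_one _
      have h1 : ∀ x0, Summable fun z : Fin m → ℕ =>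
          markovLaw p A (m+1) (Fin.cons x0 z) * (g (Fin.cons (α := fun _ => ℕ) x0 z i'.succ) * h (Fin.cons (α := fun _ => ℕ) x0 z j'.succ)) := by
        intro x0; simp_rw [hc]; exact (ihx x0).1.mul_left _
      have hval : ∀ x0, (∑' z : Fin m → ℕ,
          markovLaw p A (m+1) (Fin.cons x0 z) * (g (Fin.cons (α := fun _ => ℕ) x0 z i'.succ) * h (Fin.cons (α := fun _ => ℕ) x0 z j'.succ)))
            = p x0 * ∑' w, kerIter A i'.val (kerApp A (dirac x0)) w * φ w := by
        intro x0
        simp_rw [hc]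
        rw [tsum_mul_left, (ihx x0).2, ← kerApp_dirac A x0]
      have hinner01 : ∀ x0, 0 ≤ (∑' w, kerIter A i'.val (kerApp A (dirac x0)) w * φ w)
          ∧ (∑' w, kerIter A i'.val (kerApp A (dirac x0)) w * φ w) ≤ 1 := by
        intro x0
        have := mul01 (kerIter_stoch hA (kerApp_stoch hA (dirac_stoch x0)) i'.val)
          (fun w => (hφ01 w).1) (fun w => (hφ01 w).2)
        exact ⟨this.2.1, this.2.2⟩
      have h2 : Summable fun x0 => ∑' z : Fin m → ℕ,
          markovLaw p A (m+1) (Fin.cons x0 z) * (g (Fin.cons (α := fun _ => ℕ) x0 z i'.succ) * h (Fin.cons (α := fun _ => ℕ) x0 z j'.succ)) := by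
        simp_rw [hval]
        refine Summable.of_nonneg_of_le (fun x0 => ?_) (fun x0 => ?_) (stoch_summable hp)
        · exact mul_nonneg (hp.1 x0) (hinner01 x0).1
        · calc p x0 * _ ≤ p x0 * 1 :=
              mul_le_mul_of_nonneg_left (hinner01 x0).2 (hp.1 x0)
            _ = p x0 := mul_one _
      obtain ⟨hs, heq⟩ := tsum_cons _ hF0 h1 h2
      refine ⟨hs, ?_⟩
      rw [heq]
      simp_rw [hval]
      rw [step_lemma hA hp (fun w => (hφ01 w).1) (fun w => (hφ01 w).2) i'.val]
      have hidx : (j'.succ : Fin (m+1)).val - (i'.succ : Fin (m+1)).val = j'.val - i'.val := by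
        simp [Fin.val_succ]
      rw [hidx]
      rfl

end HMMAux
namespace HMMAux

theorem tsum_pi_prod : ∀ (n : ℕ) (f : Fin n → ℕ → ℝ), (∀ i x, 0 ≤ f i x) →
    (∀ i, Summable (f i)) →
    Summable (fun y : Fin n → ℕ => ∏ i, f i (y i)) ∧
    (∑' y : Fin n → ℕ, ∏ i, f i (y i)) = ∏ i, ∑' x, f i x := by
  intro n
  induction n with
  | zero =>
    intro f h0 hs
    constructor
    · exact Summable.of_finite
    · rw [tsum_eq_single (fun i => i.elim0) (fun b hb => absurd (funext fun i => i.elim0) hb)]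
      simp
  | succ m ih =>
    intro f h0 hs
    have ihx := ih (fun i => f i.succ) (fun i x => h0 i.succ x) (fun i => hs i.succ)
    have hc : ∀ (x0 : ℕ) (z : Fin m → ℕ),
        (∏ i, f i (Fin.cons (α := fun _ => ℕ) x0 z i)) = f 0 x0 * ∏ i : Fin m, f i.succ (z i) := by
      intro x0 z
      rw [Fin.prod_univ_succ]
      congr 1
    have hF0 : ∀ y : Fin (m+1) → ℕ, 0 ≤ ∏ i, f i (y i) :=
      fun y => Finset.prod_nonneg fun i _ => h0 i (y i)
    have h1 : ∀ x0, Summable fun z : Fin m → ℕ => ∏ i, f i (Fin.cons (α := fun _ => ℕ) x0 z i) := by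
      intro x0; simp_rw [hc]; exact ihx.1.mul_left _
    have hval : ∀ x0, (∑' z : Fin m → ℕ, ∏ i, f i (Fin.cons (α := fun _ => ℕ) x0 z i))
        = f 0 x0 * ∏ i : Fin m, ∑' x, f i.succ x := by
      intro x0; simp_rw [hc]; rw [tsum_mul_left, ihx.2]
    have h2 : Summable fun x0 => ∑' z : Fin m → ℕ, ∏ i, f i (Fin.cons (α := fun _ => ℕ) x0 z i) := by
      simp_rw [hval]; exact (hs 0).mul_right _
    obtain ⟨hsum, heq⟩ := tsum_cons _ hF0 h1 h2
    refine ⟨hsum, ?_⟩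
    rw [heq]
    simp_rw [hval]
    rw [tsum_mul_right, Fin.prod_univ_succ]

theorem prod_two_special {n : ℕ} (F : Fin n → ℝ) (i₀ j₀ : Fin n) (hne : i₀ ≠ j₀)
    (h : ∀ i, i ≠ i₀ → i ≠ j₀ → F i = 1) : (∏ i, F i) = F i₀ * F j₀ := by
  classical
  rw [← Finset.mul_prod_erase Finset.univ F (Finset.mem_univ i₀)]
  rw [← Finset.mul_prod_erase (Finset.univ.erase i₀) F
    (Finset.mem_erase.2 ⟨Ne.symm hne, Finset.mem_univ j₀⟩)]
  rw [Finset.prod_eq_one, mul_one]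
  intro i hi
  rw [Finset.mem_erase, Finset.mem_erase] at hi
  exact h i hi.2.1 hi.1

theorem hmm_exch {A B : ℕ → ℕ → ℝ} {π : ℕ → ℝ} (hA : IsKernel A) (hB : IsKernel B)
    (hπ : IsStochastic π) (n : ℕ) (gj : Fin n → ℕ → ℝ)
    (hg0 : ∀ i x, 0 ≤ gj i x) (hg1 : ∀ i x, gj i x ≤ 1) :
    Summable (fun Y : Fin n → ℕ => hmmLaw π A B n Y * ∏ i, gj i (Y i)) ∧
    (∑' Y : Fin n → ℕ, hmmLaw π A B n Y * ∏ i, gj i (Y i))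
      = ∑' x : Fin n → ℕ, markovLaw π A n x * ∏ i, ∑' u, B u (x i) * gj i u := by
  classical
  have hMtot := markov_total hA n π hπ
  have hM0 : ∀ x, 0 ≤ markovLaw π A n x := markovLaw_nonneg hπ.1 hA n
  -- the doubly indexed family
  set q : (Fin n → ℕ) → (Fin n → ℕ) → ℝ :=
    fun x Y => markovLaw π A n x * ∏ i, (B (Y i) (x i) * gj i (Y i)) with hq
  have hq0 : ∀ x Y, 0 ≤ q x Y := fun x Y =>
    mul_nonneg (hM0 x) (Finset.prod_nonneg fun i _ =>
      mul_nonneg (hB.1 _ _) (hg0 i _))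
  have hrow : ∀ x, Summable (q x) := by
    intro x
    refine Summable.mul_left _ ?_
    exact (tsum_pi_prod n (fun i u => B u (x i) * gj i u)
      (fun i u => mul_nonneg (hB.1 _ _) (hg0 i u))
      (fun i => (mul01 (ker_col_stoch hB (x i)) (hg0 i) (hg1 i)).1)).1
  have hvalx : ∀ x, (∑' Y, q x Y) = markovLaw π A n x * ∏ i, ∑' u, B u (x i) * gj i u := by
    intro x
    rw [hq]
    rw [tsum_mul_left]
    congr 1
    exact (tsum_pi_prod n (fun i u => B u (x i) * gj i u)
      (fun i u => mul_nonneg (hB.1 _ _) (hg0 i u))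
      (fun i => (mul01 (ker_col_stoch hB (x i)) (hg0 i) (hg1 i)).1)).2
  have hfac01 : ∀ x : Fin n → ℕ, 0 ≤ (∏ i, ∑' u, B u (x i) * gj i u) ∧ (∏ i, ∑' u, B u (x i) * gj i u) ≤ 1 := by
    intro x
    have hf := fun i : Fin n => mul01 (ker_col_stoch hB (x i)) (hg0 i) (hg1 i)
    exact ⟨Finset.prod_nonneg fun i _ => (hf i).2.1,
      Finset.prod_le_one (fun i _ => (hf i).2.1) (fun i _ => (hf i).2.2)⟩
  have hcolsum : Summable fun x => ∑' Y, q x Y := by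
    simp_rw [hvalx]
    refine Summable.of_nonneg_of_le (fun x => ?_) (fun x => ?_) hMtot.1
    · exact mul_nonneg (hM0 x) (hfac01 x).1
    · calc markovLaw π A n x * _ ≤ markovLaw π A n x * 1 :=
          mul_le_mul_of_nonneg_left (hfac01 x).2 (hM0 x)
        _ = markovLaw π A n x := mul_one _
  obtain ⟨-, -, hmar, hswap⟩ := fub hq0 hrow hcolsum
  have hYval : ∀ Y, (∑' x, q x Y) = hmmLaw π A B n Y * ∏ i, gj i (Y i) := by
    intro Y
    rw [hmmLaw, ← tsum_mul_right]
    refine tsum_congr fun x => ?_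
    rw [hq]
    rw [mul_assoc, ← Finset.prod_mul_distrib]
  constructor
  · have := hmar
    simp_rw [hYval] at this
    exact this
  · calc (∑' Y : Fin n → ℕ, hmmLaw π A B n Y * ∏ i, gj i (Y i))
        = ∑' Y, ∑' x, q x Y := by refine tsum_congr fun Y => (hYval Y).symm
      _ = ∑' x, ∑' Y, q x Y := hswap.symm
      _ = ∑' x : Fin n → ℕ, markovLaw π A n x * ∏ i, ∑' u, B u (x i) * gj i u := by
          exact tsum_congr hvalx

end HMMAux
namespace HMMAux

theorem mul01' {α : Type*} {ξ φ : α → ℝ} (hξs : Summable ξ) (hξ0 : ∀ x, 0 ≤ ξ x)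
    (h0 : ∀ x, 0 ≤ φ x) (h1 : ∀ x, φ x ≤ 1) :
    Summable (fun x => ξ x * φ x) ∧ 0 ≤ (∑' x, ξ x * φ x)
      ∧ (∑' x, ξ x * φ x) ≤ ∑' x, ξ x := by
  have hs : Summable (fun x => ξ x * φ x) := by
    refine Summable.of_nonneg_of_le (fun x => mul_nonneg (hξ0 x) (h0 x)) (fun x => ?_) hξs
    calc ξ x * φ x ≤ ξ x * 1 := mul_le_mul_of_nonneg_left (h1 x) (hξ0 x)
      _ = ξ x := mul_one _
  refine ⟨hs, tsum_nonneg fun x => mul_nonneg (hξ0 x) (h0 x), ?_⟩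
  refine Summable.tsum_le_tsum (fun x => ?_) hs hξs
  calc ξ x * φ x ≤ ξ x * 1 := mul_le_mul_of_nonneg_left (h1 x) (hξ0 x)
    _ = ξ x := mul_one _

theorem dirac_nonneg (v u : ℕ) : 0 ≤ dirac v u := by unfold dirac; positivity
theorem dirac_le_one (v u : ℕ) : dirac v u ≤ 1 := by
  unfold dirac; split <;> norm_num

theorem hmm_nonneg {A B : ℕ → ℕ → ℝ} {π : ℕ → ℝ} (hA : IsKernel A) (hB : IsKernel B)
    (hπ : IsStochastic π) (n : ℕ) (Y : Fin n → ℕ) : 0 ≤ hmmLaw π A B n Y :=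
  tsum_nonneg fun x => mul_nonneg (markovLaw_nonneg hπ.1 hA n x)
    (Finset.prod_nonneg fun i _ => hB.1 _ _)

theorem hmm_total {A B : ℕ → ℕ → ℝ} {π : ℕ → ℝ} (hA : IsKernel A) (hB : IsKernel B)
    (hπ : IsStochastic π) (n : ℕ) :
    Summable (hmmLaw π A B n) ∧ (∑' Y : Fin n → ℕ, hmmLaw π A B n Y) = 1 := by
  have h := hmm_exch hA hB hπ n (fun _ _ => 1) (fun _ _ => zero_le_one) (fun _ _ => le_refl 1)
  simp only [Finset.prod_const_one, mul_one] at h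
  have hone : ∀ x : Fin n → ℕ, (∏ i : Fin n, ∑' u, B u (x i)) = 1 := by
    intro x
    refine Finset.prod_eq_one fun i _ => ?_
    exact hB.2 (x i)
  refine ⟨h.1, ?_⟩
  rw [h.2]
  have := markov_total hA n π hπ
  calc (∑' x : Fin n → ℕ, markovLaw π A n x * ∏ i : Fin n, ∑' u, B u (x i))
      = ∑' x : Fin n → ℕ, markovLaw π A n x := by
        refine tsum_congr fun x => ?_; rw [hone x, mul_one]
    _ = 1 := this.2

theorem hmm_P1 {A B : ℕ → ℕ → ℝ} {π : ℕ → ℝ} (hA : IsKernel A) (hB : IsKernel B)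
    (hπ : IsStochastic π) (hfix : kerApp A π = π) (n : ℕ) (i : Fin n) (v : ℕ) :
    Summable (fun Y : Fin n → ℕ => hmmLaw π A B n Y * dirac v (Y i)) ∧
    (∑' Y : Fin n → ℕ, hmmLaw π A B n Y * dirac v (Y i)) = kerApp B π v := by
  classical
  set gj : Fin n → ℕ → ℝ := fun i' => if i' = i then dirac v else fun _ => 1 with hgj
  have hg0 : ∀ i' x, 0 ≤ gj i' x := by
    intro i' x; rw [hgj]; dsimp only; split
    · exact dirac_nonneg v x
    · exact zero_le_one
  have hg1 : ∀ i' x, gj i' x ≤ 1 := by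
    intro i' x; rw [hgj]; dsimp only; split
    · exact dirac_le_one v x
    · exact le_refl 1
  have h := hmm_exch hA hB hπ n gj hg0 hg1
  have hprod : ∀ Y : Fin n → ℕ, (∏ i', gj i' (Y i')) = dirac v (Y i) := by
    intro Y
    have : ∀ i', gj i' (Y i') = if i' = i then dirac v (Y i') else 1 := by
      intro i'; rw [hgj]; dsimp only; split <;> rfl
    simp_rw [this]
    rw [Finset.prod_ite_eq' Finset.univ i (fun i' => dirac v (Y i'))]
    simp
  have hfacs : ∀ (x : Fin n → ℕ) (i' : Fin n),
      (∑' u, B u (x i') * gj i' u) = if i' = i then B v (x i') else 1 := by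
    intro x i'
    rw [hgj]; dsimp only
    split
    · exact tsum_mul_dirac v (fun u => B u (x i'))
    · simp only [mul_one]; exact hB.2 (x i')
  have hmarg := markov_marg hA n i π hπ (fun w => B v w) (fun w => hB.1 v w)
    (fun w => stoch_le_one (ker_col_stoch hB w) v)
  constructor
  · have := h.1; simp_rw [hprod] at this; exact this
  · calc (∑' Y : Fin n → ℕ, hmmLaw π A B n Y * dirac v (Y i))
        = ∑' Y : Fin n → ℕ, hmmLaw π A B n Y * ∏ i', gj i' (Y i') := by
          refine tsum_congr fun Y => ?_; rw [hprod]
      _ = ∑' x : Fin n → ℕ, markovLaw π A n x * ∏ i', ∑' u, B u (x i') * gj i' u := h.2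
      _ = ∑' x : Fin n → ℕ, markovLaw π A n x * B v (x i) := by
          refine tsum_congr fun x => ?_
          congr 1
          simp_rw [hfacs x]
          rw [Finset.prod_ite_eq' Finset.univ i (fun i' => B v (x i'))]
          simp
      _ = ∑' w, kerIter A i.val π w * B v w := hmarg.2
      _ = kerApp B π v := by
          rw [kerIter_fixed hfix]
          exact tsum_congr fun w => mul_comm _ _

theorem hmm_P2 {A B : ℕ → ℕ → ℝ} {π : ℕ → ℝ} (hA : IsKernel A) (hB : IsKernel B)
    (hπ : IsStochastic π) (hfix : kerApp A π = π) (n : ℕ) (i j : Fin n)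
    (hij : i.val < j.val) (v : ℕ) :
    Summable (fun Y : Fin n → ℕ => hmmLaw π A B n Y * (dirac v (Y i) * dirac v (Y j))) ∧
    (∑' Y : Fin n → ℕ, hmmLaw π A B n Y * (dirac v (Y i) * dirac v (Y j)))
      = ∑' w, π w * (B v w
          * ∑' w', kerIter A (j.val - i.val) (dirac w) w' * B v w') := by
  classical
  have hne : i ≠ j := fun h => by rw [h] at hij; exact lt_irrefl _ hij
  set gj : Fin n → ℕ → ℝ := fun i' => if i' = i ∨ i' = j then dirac v else fun _ => 1 with hgj
  have hg0 : ∀ i' x, 0 ≤ gj i' x := by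
    intro i' x; rw [hgj]; dsimp only; split
    · exact dirac_nonneg v x
    · exact zero_le_one
  have hg1 : ∀ i' x, gj i' x ≤ 1 := by
    intro i' x; rw [hgj]; dsimp only; split
    · exact dirac_le_one v x
    · exact le_refl 1
  have h := hmm_exch hA hB hπ n gj hg0 hg1
  have hprod : ∀ Y : Fin n → ℕ, (∏ i', gj i' (Y i')) = dirac v (Y i) * dirac v (Y j) := by
    intro Y
    rw [prod_two_special (fun i' => gj i' (Y i')) i j hne]
    · rw [hgj]; dsimp only
      rw [if_pos (Or.inl rfl), if_pos (Or.inr rfl)]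
    · intro i' h1' h2'
      rw [hgj]; dsimp only
      rw [if_neg (by tauto)]
  have hfacs : ∀ (x : Fin n → ℕ),
      (∏ i', ∑' u, B u (x i') * gj i' u) = B v (x i) * B v (x j) := by
    intro x
    rw [prod_two_special (fun i' => ∑' u, B u (x i') * gj i' u) i j hne]
    · rw [hgj]; dsimp only
      rw [if_pos (Or.inl rfl), if_pos (Or.inr rfl)]
      rw [tsum_mul_dirac v (fun u => B u (x i)), tsum_mul_dirac v (fun u => B u (x j))]
    · intro i' h1' h2'
      rw [hgj]; dsimp only
      rw [if_neg (by tauto)]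
      simp only [mul_one]
      exact hB.2 (x i')
  have hmarg := markov_marg2 hA n i j hij π hπ (fun w => B v w) (fun w => B v w)
    (fun w => hB.1 v w) (fun w => stoch_le_one (ker_col_stoch hB w) v)
    (fun w => hB.1 v w) (fun w => stoch_le_one (ker_col_stoch hB w) v)
  constructor
  · have := h.1; simp_rw [hprod] at this; exact this
  · calc (∑' Y : Fin n → ℕ, hmmLaw π A B n Y * (dirac v (Y i) * dirac v (Y j)))
        = ∑' Y : Fin n → ℕ, hmmLaw π A B n Y * ∏ i', gj i' (Y i') := by
          refine tsum_congr fun Y => ?_; rw [hprod]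
      _ = ∑' x : Fin n → ℕ, markovLaw π A n x * ∏ i', ∑' u, B u (x i') * gj i' u := h.2
      _ = ∑' x : Fin n → ℕ, markovLaw π A n x * (B v (x i) * B v (x j)) := by
          refine tsum_congr fun x => ?_
          rw [hfacs x]
      _ = ∑' w, kerIter A i.val π w
            * (B v w * ∑' w', kerIter A (j.val - i.val) (dirac w) w' * B v w') := hmarg.2
      _ = ∑' w, π w * (B v w
            * ∑' w', kerIter A (j.val - i.val) (dirac w) w' * B v w') := by
          rw [kerIter_fixed hfix]

theorem max_zero_eq (a : ℝ) : max a 0 = (|a| + a) / 2 := by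
  rcases le_total 0 a with h | h
  · rw [max_eq_left h, abs_of_nonneg h]; ring
  · rw [max_eq_right h, abs_of_nonpos h]; ring

theorem tv_pair {μ ν φ : ℕ → ℝ} (hμ : IsStochastic μ) (hν : IsStochastic ν)
    (h0 : ∀ x, 0 ≤ φ x) (h1 : ∀ x, φ x ≤ 1) :
    (∑' x, μ x * φ x) - (∑' x, ν x * φ x) ≤ tv μ ν := by
  have hμs := stoch_summable hμ
  have hνs := stoch_summable hν
  have hμφ := (mul01 hμ h0 h1).1
  have hνφ := (mul01 hν h0 h1).1
  have habs : Summable fun x => |μ x - ν x| := by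
    refine Summable.of_nonneg_of_le (fun x => abs_nonneg _) (fun x => ?_) (hμs.add hνs)
    calc |μ x - ν x| ≤ |μ x| + |ν x| := abs_sub _ _
      _ = μ x + ν x := by rw [abs_of_nonneg (hμ.1 x), abs_of_nonneg (hν.1 x)]
  have hdiff : Summable fun x => μ x - ν x := hμs.sub hνs
  have hmax : Summable fun x => max (μ x - ν x) 0 := by
    refine Summable.of_nonneg_of_le (fun x => le_max_right _ _) (fun x => ?_) habs
    exact max_le (le_abs_self _) (abs_nonneg _)
  calc (∑' x, μ x * φ x) - (∑' x, ν x * φ x)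
      = ∑' x, (μ x - ν x) * φ x := by
        rw [← Summable.tsum_sub hμφ hνφ]
        exact tsum_congr fun x => by ring
    _ ≤ ∑' x, max (μ x - ν x) 0 := by
        refine Summable.tsum_le_tsum (fun x => ?_) ((hμφ).sub hνφ |>.congr fun x => by ring) hmax
        rcases le_total 0 (μ x - ν x) with h | h
        · calc (μ x - ν x) * φ x ≤ (μ x - ν x) * 1 := mul_le_mul_of_nonneg_left (h1 x) h
            _ = μ x - ν x := mul_one _
            _ ≤ max (μ x - ν x) 0 := le_max_left _ _
        · calc (μ x - ν x) * φ x ≤ 0 := mul_nonpos_of_nonpos_of_nonneg h (h0 x)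
            _ ≤ max (μ x - ν x) 0 := le_max_right _ _
    _ = (1/2) * ∑' x, |μ x - ν x| + (1/2) * ∑' x, (μ x - ν x) := by
        simp_rw [max_zero_eq]
        rw [show (fun x => (|μ x - ν x| + (μ x - ν x)) / 2)
            = fun x => (1/2) * |μ x - ν x| + (1/2) * (μ x - ν x) from funext fun x => by ring]
        rw [Summable.tsum_add (habs.mul_left _) (hdiff.mul_left _), tsum_mul_left, tsum_mul_left]
    _ = tv μ ν := by
        rw [Summable.tsum_sub hμs hνs, hμ.2, hν.2, sub_self, mul_zero, add_zero]
        rfl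

end HMMAux
namespace HMMAux

section cov
variable {G θ : ℝ} {π : ℕ → ℝ} {A B : ℕ → ℕ → ℝ}

theorem rho_eq (B : ℕ → ℕ → ℝ) (π : ℕ → ℝ) (v : ℕ) :
    kerApp B π v = ∑' w, π w * B v w := tsum_congr fun w => mul_comm _ _

/-- Summability and domination of the pair probability `Q i j v` in `v`. -/
theorem Q_dom (hA : IsKernel A) (hB : IsKernel B) (hπ : IsStochastic π)
    (hfix : kerApp A π = π) (n : ℕ) (i j : Fin n) :
    (∀ v, 0 ≤ (∑' Y : Fin n → ℕ, hmmLaw π A B n Y * (dirac v (Y i) * dirac v (Y j))))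
    ∧ (∀ v, (∑' Y : Fin n → ℕ, hmmLaw π A B n Y * (dirac v (Y i) * dirac v (Y j)))
        ≤ kerApp B π v)
    ∧ Summable (fun v => ∑' Y : Fin n → ℕ,
        hmmLaw π A B n Y * (dirac v (Y i) * dirac v (Y j))) := by
  have hμ0 := hmm_nonneg hA hB hπ n
  have hμs := (hmm_total hA hB hπ n).1
  have h0 : ∀ v, 0 ≤ (∑' Y : Fin n → ℕ, hmmLaw π A B n Y * (dirac v (Y i) * dirac v (Y j))) :=
    fun v => tsum_nonneg fun Y => mul_nonneg (hμ0 Y)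
      (mul_nonneg (dirac_nonneg _ _) (dirac_nonneg _ _))
  have hle : ∀ v, (∑' Y : Fin n → ℕ, hmmLaw π A B n Y * (dirac v (Y i) * dirac v (Y j)))
      ≤ kerApp B π v := by
    intro v
    rw [← (hmm_P1 hA hB hπ hfix n i v).2]
    refine Summable.tsum_le_tsum (fun Y => ?_)
      (mul01' hμs hμ0 (fun Y => mul_nonneg (dirac_nonneg _ _) (dirac_nonneg _ _))
        (fun Y => mul_le_one₀ (dirac_le_one _ _) (dirac_nonneg _ _) (dirac_le_one _ _))).1
      (hmm_P1 hA hB hπ hfix n i v).1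
    refine mul_le_mul_of_nonneg_left ?_ (hμ0 Y)
    calc dirac v (Y i) * dirac v (Y j) ≤ dirac v (Y i) * 1 :=
        mul_le_mul_of_nonneg_left (dirac_le_one _ _) (dirac_nonneg _ _)
      _ = dirac v (Y i) := mul_one _
  refine ⟨h0, hle, ?_⟩
  exact Summable.of_nonneg_of_le h0 hle (stoch_summable (kerApp_stoch hB hπ))

/-- Covariance bound for an ordered pair `i < j`. -/
theorem cov_lt (hA : IsKernel A) (hB : IsKernel B) (hge : IsGeomErgodic A π G θ)
    (n : ℕ) (i j : Fin n) (hij : i.val < j.val) :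
    (∑' v, ((∑' Y : Fin n → ℕ, hmmLaw π A B n Y * (dirac v (Y i) * dirac v (Y j)))
        - kerApp B π v ^ 2)) ≤ G * θ ^ (j.val - i.val) := by
  obtain ⟨hG, hθ0, hθ1, hπ, hfix, htv⟩ := hge
  set s := j.val - i.val with hs
  set ρ := kerApp B π with hρ
  have hρst : IsStochastic ρ := kerApp_stoch hB hπ
  have hρs := stoch_summable hρst
  have hρ2s : Summable (fun v => ρ v ^ 2) := by
    refine Summable.of_nonneg_of_le (fun v => sq_nonneg _) (fun v => ?_) hρs
    calc ρ v ^ 2 = ρ v * ρ v := sq (ρ v)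
      _ ≤ 1 * ρ v := mul_le_mul_of_nonneg_right (stoch_le_one hρst v) (hρst.1 v)
      _ = ρ v := one_mul _
  obtain ⟨hQ0, hQle, hQsum⟩ := Q_dom hA hB hπ hfix n i j
  have hGθ : 0 ≤ G * θ ^ s := mul_nonneg (le_trans zero_le_one hG) (pow_nonneg hθ0 s)
  -- pointwise bound : Q v - ρ v ^ 2 ≤ ρ v * (G * θ ^ s)
  have hpt : ∀ v, (∑' Y : Fin n → ℕ, hmmLaw π A B n Y * (dirac v (Y i) * dirac v (Y j)))
      - ρ v ^ 2 ≤ ρ v * (G * θ ^ s) := by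
    intro v
    have hP2 := (hmm_P2 hA hB hπ hfix n i j hij v).2
    have hKst : ∀ w, IsStochastic (kerIter A s (dirac w)) :=
      fun w => kerIter_stoch hA (dirac_stoch w) s
    have hBb : ∀ w, 0 ≤ B v w ∧ B v w ≤ 1 :=
      fun w => ⟨hB.1 v w, stoch_le_one (ker_col_stoch hB w) v⟩
    -- inner integral bound
    have hinner : ∀ w, (∑' w', kerIter A s (dirac w) w' * B v w') - ρ v ≤ G * θ ^ s := by
      intro w
      have h1 := tv_pair (hKst w) hπ (fun w' => (hBb w').1) (fun w' => (hBb w').2)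
      rw [← rho_eq B π v] at h1
      exact le_trans h1 (htv s w)
    have hinner01 : ∀ w, 0 ≤ (∑' w', kerIter A s (dirac w) w' * B v w')
        ∧ (∑' w', kerIter A s (dirac w) w' * B v w') ≤ 1 := by
      intro w
      have := mul01 (hKst w) (fun w' => (hBb w').1) (fun w' => (hBb w').2)
      exact ⟨this.2.1, this.2.2⟩
    -- rewrite both terms as tsums over w
    have hQw : (∑' Y : Fin n → ℕ, hmmLaw π A B n Y * (dirac v (Y i) * dirac v (Y j)))
        = ∑' w, π w * (B v w * ∑' w', kerIter A s (dirac w) w' * B v w') := hP2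
    have hρ2w : ρ v ^ 2 = ∑' w, π w * (B v w * ρ v) := by
      calc ρ v ^ 2 = (∑' w, π w * B v w) * ρ v := by rw [← rho_eq B π v]; ring
        _ = ∑' w, π w * B v w * ρ v := (tsum_mul_right).symm
        _ = ∑' w, π w * (B v w * ρ v) := tsum_congr fun w => by ring
    have hsum1 : Summable fun w => π w * (B v w * ∑' w', kerIter A s (dirac w) w' * B v w') :=
      (mul01 hπ (fun w => mul_nonneg (hBb w).1 (hinner01 w).1)
        (fun w => mul_le_one₀ (hBb w).2 (hinner01 w).1 (hinner01 w).2)).1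
    have hsum2 : Summable fun w => π w * (B v w * ρ v) :=
      (mul01 hπ (fun w => mul_nonneg (hBb w).1 (hρst.1 v))
        (fun w => mul_le_one₀ (hBb w).2 (hρst.1 v) (stoch_le_one hρst v))).1
    rw [hQw, hρ2w, ← Summable.tsum_sub hsum1 hsum2]
    have hsum3 : Summable fun w => π w * (B v w * (G * θ ^ s)) := by
      refine Summable.of_nonneg_of_le
        (fun w => mul_nonneg (hπ.1 w) (mul_nonneg (hBb w).1 hGθ)) (fun w => ?_)
        ((stoch_summable hπ).mul_right (G * θ ^ s))
      calc π w * (B v w * (G * θ ^ s)) = π w * B v w * (G * θ ^ s) := by ring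
        _ ≤ π w * 1 * (G * θ ^ s) := by
            refine mul_le_mul_of_nonneg_right ?_ hGθ
            exact mul_le_mul_of_nonneg_left (hBb w).2 (hπ.1 w)
        _ = π w * (G * θ ^ s) := by ring
    calc (∑' w, (π w * (B v w * ∑' w', kerIter A s (dirac w) w' * B v w')
            - π w * (B v w * ρ v)))
        ≤ ∑' w, π w * (B v w * (G * θ ^ s)) := by
          refine Summable.tsum_le_tsum (fun w => ?_) (hsum1.sub hsum2) hsum3
          have h2 := hinner w
          have h3 : 0 ≤ π w * B v w := mul_nonneg (hπ.1 w) (hBb w).1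
          nlinarith [h3, h2]
      _ = (∑' w, π w * B v w) * (G * θ ^ s) := by
          rw [← tsum_mul_right]
          exact tsum_congr fun w => by ring
      _ = ρ v * (G * θ ^ s) := by rw [← rho_eq B π v]
  calc (∑' v, ((∑' Y : Fin n → ℕ, hmmLaw π A B n Y * (dirac v (Y i) * dirac v (Y j)))
          - ρ v ^ 2))
      ≤ ∑' v, ρ v * (G * θ ^ s) :=
        Summable.tsum_le_tsum hpt (hQsum.sub hρ2s) (hρs.mul_right _)
    _ = (∑' v, ρ v) * (G * θ ^ s) := tsum_mul_right
    _ = G * θ ^ s := by rw [hρst.2, one_mul]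

end cov

end HMMAux
namespace HMMAux

section cov2
variable {G θ : ℝ} {π : ℕ → ℝ} {A B : ℕ → ℕ → ℝ}

theorem Q_symm (hπ : IsStochastic π) (n : ℕ) (i j : Fin n) (v : ℕ) :
    (∑' Y : Fin n → ℕ, hmmLaw π A B n Y * (dirac v (Y i) * dirac v (Y j)))
      = ∑' Y : Fin n → ℕ, hmmLaw π A B n Y * (dirac v (Y j) * dirac v (Y i)) :=
  tsum_congr fun Y => by ring

theorem cov_diag (hA : IsKernel A) (hB : IsKernel B) (hπ : IsStochastic π)
    (hfix : kerApp A π = π) (n : ℕ) (i : Fin n) :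
    (∑' v, ((∑' Y : Fin n → ℕ, hmmLaw π A B n Y * (dirac v (Y i) * dirac v (Y i)))
        - kerApp B π v ^ 2)) ≤ 1 := by
  set ρ := kerApp B π with hρ
  have hρst : IsStochastic ρ := kerApp_stoch hB hπ
  have hρs := stoch_summable hρst
  have hρ2s : Summable (fun v => ρ v ^ 2) := by
    refine Summable.of_nonneg_of_le (fun v => sq_nonneg _) (fun v => ?_) hρs
    calc ρ v ^ 2 = ρ v * ρ v := sq (ρ v)
      _ ≤ 1 * ρ v := mul_le_mul_of_nonneg_right (stoch_le_one hρst v) (hρst.1 v)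
      _ = ρ v := one_mul _
  have hdd : ∀ (v : ℕ) (Y : Fin n → ℕ), dirac v (Y i) * dirac v (Y i) = dirac v (Y i) := by
    intro v Y; unfold dirac; split <;> norm_num
  have hQv : ∀ v, (∑' Y : Fin n → ℕ, hmmLaw π A B n Y * (dirac v (Y i) * dirac v (Y i)))
      = ρ v := by
    intro v
    rw [hρ, ← (hmm_P1 hA hB hπ hfix n i v).2]
    exact tsum_congr fun Y => by rw [hdd v Y]
  calc (∑' v, ((∑' Y : Fin n → ℕ, hmmLaw π A B n Y * (dirac v (Y i) * dirac v (Y i)))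
          - ρ v ^ 2))
      = ∑' v, (ρ v - ρ v ^ 2) := by exact tsum_congr fun v => by rw [hQv v]
    _ = (∑' v, ρ v) - ∑' v, ρ v ^ 2 := Summable.tsum_sub hρs hρ2s
    _ ≤ (∑' v, ρ v) := by
        have : 0 ≤ ∑' v, ρ v ^ 2 := tsum_nonneg fun v => sq_nonneg _
        linarith
    _ = 1 := hρst.2

theorem cov_all (hA : IsKernel A) (hB : IsKernel B) (hge : IsGeomErgodic A π G θ)
    (n : ℕ) (i j : Fin n) :
    (∑' v, ((∑' Y : Fin n → ℕ, hmmLaw π A B n Y * (dirac v (Y i) * dirac v (Y j)))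
        - kerApp B π v ^ 2))
      ≤ if i = j then 1 else G * θ ^ (max i.val j.val - min i.val j.val) := by
  obtain ⟨hG, hθ0, hθ1, hπ, hfix, htv⟩ := hge
  by_cases h : i = j
  · subst h
    rw [if_pos rfl]
    exact cov_diag hA hB hπ hfix n i
  · rw [if_neg h]
    have hvne : i.val ≠ j.val := fun hv => h (Fin.ext hv)
    rcases lt_or_gt_of_ne hvne with hlt | hgt
    · have := cov_lt hA hB ⟨hG, hθ0, hθ1, hπ, hfix, htv⟩ n i j hlt
      have hmax : max i.val j.val - min i.val j.val = j.val - i.val := by omega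
      rw [hmax]
      exact this
    · have := cov_lt hA hB ⟨hG, hθ0, hθ1, hπ, hfix, htv⟩ n j i hgt
      have hmax : max i.val j.val - min i.val j.val = i.val - j.val := by omega
      rw [hmax]
      calc (∑' v, ((∑' Y : Fin n → ℕ, hmmLaw π A B n Y * (dirac v (Y i) * dirac v (Y j)))
              - kerApp B π v ^ 2))
          = ∑' v, ((∑' Y : Fin n → ℕ, hmmLaw π A B n Y * (dirac v (Y j) * dirac v (Y i)))
              - kerApp B π v ^ 2) := tsum_congr fun v => by rw [Q_symm hπ n i j v]
        _ ≤ G * θ ^ (i.val - j.val) := this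

theorem geom_sum_bound {n : ℕ} {θ : ℝ} (hθ0 : 0 ≤ θ) (hθ1 : θ < 1) (d : Fin n → ℕ)
    (P : Fin n → Prop) [DecidablePred P] (hd : ∀ j, P j → 1 ≤ d j)
    (hinj : ∀ j1 j2, P j1 → P j2 → d j1 = d j2 → j1 = j2) :
    (∑ j : Fin n, if P j then θ ^ (d j) else 0) ≤ θ * (1 - θ)⁻¹ := by
  classical
  rw [← Finset.sum_filter]
  have hcong : ∀ j ∈ Finset.univ.filter P, θ ^ (d j) = (fun s => θ ^ (s + 1)) (d j - 1) := by
    intro j hj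
    have := hd j (Finset.mem_filter.1 hj).2
    simp only
    congr 1
    omega
  rw [Finset.sum_congr rfl hcong]
  rw [← Finset.sum_image (f := fun s => θ ^ (s + 1)) (g := fun j => d j - 1)
    (fun j1 hj1 j2 hj2 hj => hinj j1 j2 (Finset.mem_filter.1 hj1).2 (Finset.mem_filter.1 hj2).2
      (by dsimp only at hj; have := hd j1 (Finset.mem_filter.1 hj1).2; have := hd j2 (Finset.mem_filter.1 hj2).2; omega))]
  have hsummable : Summable fun s : ℕ => θ ^ (s + 1) := by
    simp_rw [pow_succ]
    exact (summable_geometric_of_lt_one hθ0 hθ1).mul_right θ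
  refine le_trans (Summable.sum_le_tsum _ (fun s _ => pow_nonneg hθ0 _) hsummable) ?_
  have : (∑' s : ℕ, θ ^ (s + 1)) = θ * (1 - θ)⁻¹ := by
    simp_rw [pow_succ]
    rw [tsum_mul_right, tsum_geometric_of_lt_one hθ0 hθ1]
    ring
  rw [this]

theorem double_sum_bound {G θ : ℝ} (hG : 1 ≤ G) (hθ0 : 0 ≤ θ) (hθ1 : θ < 1) (n : ℕ) :
    (∑ i : Fin n, ∑ j : Fin n,
        (if i = j then (1:ℝ) else G * θ ^ (max i.val j.val - min i.val j.val)))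
      ≤ n * (1 + 2 * G * (θ * (1 - θ)⁻¹)) := by
  classical
  have hG0 : 0 ≤ G := le_trans zero_le_one hG
  have hrow : ∀ i : Fin n, (∑ j : Fin n,
      (if i = j then (1:ℝ) else G * θ ^ (max i.val j.val - min i.val j.val)))
      ≤ 1 + 2 * G * (θ * (1 - θ)⁻¹) := by
    intro i
    have hpt : ∀ j : Fin n,
        (if i = j then (1:ℝ) else G * θ ^ (max i.val j.val - min i.val j.val))
        ≤ (if i = j then (1:ℝ) else 0)
          + G * (if j.val < i.val then θ ^ (i.val - j.val) else 0)
          + G * (if i.val < j.val then θ ^ (j.val - i.val) else 0) := by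
      intro j
      by_cases h : i = j
      · subst h
        simp [pow_nonneg hθ0, hG0]
      · rw [if_neg h, if_neg h]
        have hvne : i.val ≠ j.val := fun hv => h (Fin.ext hv)
        rcases lt_or_gt_of_ne hvne with hlt | hgt
        · rw [if_neg (by omega), if_pos hlt]
          have : max i.val j.val - min i.val j.val = j.val - i.val := by omega
          rw [this]
          simp
        · rw [if_pos hgt, if_neg (by omega)]
          have : max i.val j.val - min i.val j.val = i.val - j.val := by omega
          rw [this]
          simp [mul_nonneg hG0 (pow_nonneg hθ0 _)]
    calc (∑ j : Fin n, (if i = j then (1:ℝ) else G * θ ^ (max i.val j.val - min i.val j.val)))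
        ≤ ∑ j : Fin n, ((if i = j then (1:ℝ) else 0)
            + G * (if j.val < i.val then θ ^ (i.val - j.val) else 0)
            + G * (if i.val < j.val then θ ^ (j.val - i.val) else 0)) :=
          Finset.sum_le_sum fun j _ => hpt j
      _ = (∑ j : Fin n, (if i = j then (1:ℝ) else 0))
            + G * (∑ j : Fin n, (if j.val < i.val then θ ^ (i.val - j.val) else 0))
            + G * (∑ j : Fin n, (if i.val < j.val then θ ^ (j.val - i.val) else 0)) := by
          rw [Finset.sum_add_distrib, Finset.sum_add_distrib, Finset.mul_sum, Finset.mul_sum]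
      _ ≤ 1 + G * (θ * (1 - θ)⁻¹) + G * (θ * (1 - θ)⁻¹) := by
          have h1 : (∑ j : Fin n, (if i = j then (1:ℝ) else 0)) ≤ 1 := by
            rw [Finset.sum_ite_eq]
            simp
          have h2 : (∑ j : Fin n, (if j.val < i.val then θ ^ (i.val - j.val) else 0))
              ≤ θ * (1 - θ)⁻¹ :=
            geom_sum_bound hθ0 hθ1 (fun j => i.val - j.val) (fun j => j.val < i.val)
              (fun j hj => by omega)
              (fun j1 j2 h1' h2' hh => Fin.ext (by omega))
          have h3 : (∑ j : Fin n, (if i.val < j.val then θ ^ (j.val - i.val) else 0))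
              ≤ θ * (1 - θ)⁻¹ :=
            geom_sum_bound hθ0 hθ1 (fun j => j.val - i.val) (fun j => i.val < j.val)
              (fun j hj => by omega)
              (fun j1 j2 h1' h2' hh => Fin.ext (by omega))
          have hg2 : 0 ≤ G := hG0
          refine add_le_add (add_le_add h1 ?_) ?_
          · exact mul_le_mul_of_nonneg_left h2 hg2
          · exact mul_le_mul_of_nonneg_left h3 hg2
      _ = 1 + 2 * G * (θ * (1 - θ)⁻¹) := by ring
  calc (∑ i : Fin n, ∑ j : Fin n,
        (if i = j then (1:ℝ) else G * θ ^ (max i.val j.val - min i.val j.val)))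
      ≤ ∑ i : Fin n, (1 + 2 * G * (θ * (1 - θ)⁻¹)) := Finset.sum_le_sum fun i _ => hrow i
    _ = n * (1 + 2 * G * (θ * (1 - θ)⁻¹)) := by
        rw [Finset.sum_const, Finset.card_univ, Fintype.card_fin, nsmul_eq_mul]

end cov2

end HMMAux
namespace HMMAux

section moment
variable {G θ : ℝ} {π : ℕ → ℝ} {A B : ℕ → ℕ → ℝ}

theorem emp_eq {n : ℕ} (Y : Fin n → ℕ) (v : ℕ) :
    emp Y v = (∑ i : Fin n, dirac v (Y i)) / n := rfl

theorem emp_bounds {n : ℕ} (hn : 0 < n) (Y : Fin n → ℕ) (v : ℕ) :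
    0 ≤ emp Y v ∧ emp Y v ≤ 1 := by
  have hd0 : ∀ i : Fin n, 0 ≤ dirac v (Y i) := fun i => dirac_nonneg _ _
  have hsum0 : 0 ≤ ∑ i : Fin n, dirac v (Y i) := Finset.sum_nonneg fun i _ => hd0 i
  have hsumn : (∑ i : Fin n, dirac v (Y i)) ≤ n := by
    calc (∑ i : Fin n, dirac v (Y i)) ≤ ∑ _i : Fin n, (1:ℝ) :=
        Finset.sum_le_sum fun i _ => dirac_le_one _ _
      _ = n := by rw [Finset.sum_const, Finset.card_univ, Fintype.card_fin, nsmul_eq_mul, mul_one]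
  have hn' : (0:ℝ) < n := Nat.cast_pos.2 hn
  rw [emp_eq]
  constructor
  · positivity
  · rw [div_le_one hn']; exact hsumn

theorem emp_total {n : ℕ} (hn : 0 < n) (Y : Fin n → ℕ) :
    Summable (fun v => emp Y v) ∧ (∑' v, emp Y v) = 1 := by
  have hrw : ∀ i : Fin n, (fun v => dirac v (Y i)) = dirac (Y i) :=
    fun i => funext fun v => by simp [dirac, eq_comm]
  have hs : ∀ i : Fin n, Summable fun v => dirac v (Y i) := by
    intro i; rw [hrw i]; exact stoch_summable (dirac_stoch (Y i))
  have hn' : ((n:ℝ)) ≠ 0 := Nat.cast_ne_zero.2 hn.ne'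
  have hsum : Summable fun v => ∑ i : Fin n, dirac v (Y i) :=
    summable_sum fun i _ => hs i
  constructor
  · simp_rw [emp_eq]
    exact hsum.div_const _
  · simp_rw [emp_eq]
    rw [tsum_div_const, Summable.tsum_finsetSum fun i _ => hs i]
    have : ∀ i : Fin n, (∑' v, dirac v (Y i)) = 1 := by
      intro i; rw [hrw i]; exact (dirac_stoch (Y i)).2
    simp_rw [this]
    rw [Finset.sum_const, Finset.card_univ, Fintype.card_fin, nsmul_eq_mul, mul_one]
    exact div_self hn'

theorem sq_summable {n : ℕ} (hn : 0 < n) (hB : IsKernel B) (hπ : IsStochastic π)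
    (Y : Fin n → ℕ) :
    Summable (fun v => (kerApp B π v - emp Y v) ^ 2)
      ∧ (∑' v, (kerApp B π v - emp Y v) ^ 2) ≤ 4 := by
  set ρ := kerApp B π with hρ
  have hρst : IsStochastic ρ := kerApp_stoch hB hπ
  have hρs := stoch_summable hρst
  have hes := (emp_total hn Y).1
  have hmaj : Summable fun v => 2 * ρ v + 2 * emp Y v :=
    (hρs.mul_left 2).add (hes.mul_left 2)
  have hpt : ∀ v, (ρ v - emp Y v) ^ 2 ≤ 2 * ρ v + 2 * emp Y v := by
    intro v
    have h1 := hρst.1 v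
    have h2 := stoch_le_one hρst v
    have h3 := (emp_bounds hn Y v).1
    have h4 := (emp_bounds hn Y v).2
    nlinarith
  have hsum : Summable (fun v => (ρ v - emp Y v) ^ 2) :=
    Summable.of_nonneg_of_le (fun v => sq_nonneg _) hpt hmaj
  refine ⟨hsum, ?_⟩
  calc (∑' v, (ρ v - emp Y v) ^ 2) ≤ ∑' v, (2 * ρ v + 2 * emp Y v) :=
      Summable.tsum_le_tsum hpt hsum hmaj
    _ = 2 * (∑' v, ρ v) + 2 * (∑' v, emp Y v) := by
        rw [Summable.tsum_add (hρs.mul_left 2) (hes.mul_left 2), tsum_mul_left, tsum_mul_left]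
    _ = 4 := by rw [hρst.2, (emp_total hn Y).2]; norm_num

/-- The per-`v` second moment identity. -/
theorem Tv_eq (hA : IsKernel A) (hB : IsKernel B) (hπ : IsStochastic π)
    (hfix : kerApp A π = π) {n : ℕ} (hn : 0 < n) (v : ℕ) :
    (∑' Y : Fin n → ℕ, hmmLaw π A B n Y * (kerApp B π v - emp Y v) ^ 2)
      = (∑ i : Fin n, ∑ j : Fin n,
          ∑' Y : Fin n → ℕ, hmmLaw π A B n Y * (dirac v (Y i) * dirac v (Y j))) / (n:ℝ)^2
        - kerApp B π v ^ 2 := by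
  set ρ := kerApp B π with hρ
  set μn := hmmLaw π A B n with hμn
  have hμ0 := hmm_nonneg hA hB hπ n
  have hμs := (hmm_total hA hB hπ n).1
  have hμtot := (hmm_total hA hB hπ n).2
  have hρst : IsStochastic ρ := kerApp_stoch hB hπ
  have hn' : ((n:ℝ)) ≠ 0 := Nat.cast_ne_zero.2 hn.ne'
  have hemp := fun Y => emp_bounds hn Y v
  -- summabilities
  have h1 : Summable fun Y : Fin n → ℕ => μn Y * ρ v ^ 2 := hμs.mul_right _
  have h2 : Summable fun Y : Fin n → ℕ => μn Y * emp Y v :=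
    (mul01' hμs hμ0 (fun Y => (hemp Y).1) (fun Y => (hemp Y).2)).1
  have h3 : Summable fun Y : Fin n → ℕ => μn Y * emp Y v ^ 2 :=
    (mul01' hμs hμ0 (fun Y => sq_nonneg _)
      (fun Y => pow_le_one₀ (hemp Y).1 (hemp Y).2)).1
  have hQs : ∀ (i j : Fin n), Summable fun Y : Fin n → ℕ =>
      μn Y * (dirac v (Y i) * dirac v (Y j)) := by
    intro i j
    exact (mul01' hμs hμ0
      (fun Y => mul_nonneg (dirac_nonneg _ _) (dirac_nonneg _ _))
      (fun Y => mul_le_one₀ (dirac_le_one _ _) (dirac_nonneg _ _) (dirac_le_one _ _))).1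
  -- first moment of emp
  have hE1 : (∑' Y : Fin n → ℕ, μn Y * emp Y v) = ρ v := by
    have hrepr : ∀ Y : Fin n → ℕ,
        μn Y * emp Y v = (∑ i : Fin n, μn Y * dirac v (Y i)) / n := by
      intro Y
      rw [emp_eq, ← mul_div_assoc, Finset.mul_sum]
    have hP1s := fun i : Fin n => (hmm_P1 hA hB hπ hfix n i v).1
    calc (∑' Y : Fin n → ℕ, μn Y * emp Y v)
        = ∑' Y : Fin n → ℕ, (∑ i : Fin n, μn Y * dirac v (Y i)) / n := tsum_congr hrepr
      _ = (∑' Y : Fin n → ℕ, ∑ i : Fin n, μn Y * dirac v (Y i)) / n := tsum_div_const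
      _ = (∑ i : Fin n, ∑' Y : Fin n → ℕ, μn Y * dirac v (Y i)) / n := by
          rw [Summable.tsum_finsetSum fun i _ => hP1s i]
      _ = (∑ i : Fin n, ρ v) / n := by
          congr 1
          exact Finset.sum_congr rfl fun i _ => (hmm_P1 hA hB hπ hfix n i v).2
      _ = ρ v := by
          rw [Finset.sum_const, Finset.card_univ, Fintype.card_fin, nsmul_eq_mul]
          field_simp
  -- second moment of emp
  have hE2 : (∑' Y : Fin n → ℕ, μn Y * emp Y v ^ 2)
      = (∑ i : Fin n, ∑ j : Fin n,
          ∑' Y : Fin n → ℕ, μn Y * (dirac v (Y i) * dirac v (Y j))) / (n:ℝ)^2 := by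
    have hrepr : ∀ Y : Fin n → ℕ, μn Y * emp Y v ^ 2
        = (∑ i : Fin n, ∑ j : Fin n, μn Y * (dirac v (Y i) * dirac v (Y j))) / (n:ℝ)^2 := by
      intro Y
      rw [emp_eq, div_pow, ← mul_div_assoc]
      congr 1
      rw [sq, Finset.sum_mul_sum, Finset.mul_sum]
      refine Finset.sum_congr rfl fun i _ => ?_
      rw [Finset.mul_sum]
    have hin : ∀ i : Fin n, Summable fun Y : Fin n → ℕ =>
        ∑ j : Fin n, μn Y * (dirac v (Y i) * dirac v (Y j)) :=
      fun i => summable_sum fun j _ => hQs i j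
    calc (∑' Y : Fin n → ℕ, μn Y * emp Y v ^ 2)
        = ∑' Y : Fin n → ℕ, (∑ i : Fin n, ∑ j : Fin n,
            μn Y * (dirac v (Y i) * dirac v (Y j))) / (n:ℝ)^2 := tsum_congr hrepr
      _ = (∑' Y : Fin n → ℕ, ∑ i : Fin n, ∑ j : Fin n,
            μn Y * (dirac v (Y i) * dirac v (Y j))) / (n:ℝ)^2 := tsum_div_const
      _ = (∑ i : Fin n, ∑' Y : Fin n → ℕ, ∑ j : Fin n,
            μn Y * (dirac v (Y i) * dirac v (Y j))) / (n:ℝ)^2 := by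
          rw [Summable.tsum_finsetSum fun i _ => hin i]
      _ = (∑ i : Fin n, ∑ j : Fin n,
            ∑' Y : Fin n → ℕ, μn Y * (dirac v (Y i) * dirac v (Y j))) / (n:ℝ)^2 := by
          congr 1
          exact Finset.sum_congr rfl fun i _ => Summable.tsum_finsetSum fun j _ => hQs i j
  -- expand the square
  have hexp : ∀ Y : Fin n → ℕ, μn Y * (ρ v - emp Y v) ^ 2
      = (μn Y * ρ v ^ 2 - 2 * ρ v * (μn Y * emp Y v)) + μn Y * emp Y v ^ 2 := by
    intro Y; ring
  calc (∑' Y : Fin n → ℕ, μn Y * (ρ v - emp Y v) ^ 2)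
      = ∑' Y : Fin n → ℕ, ((μn Y * ρ v ^ 2 - 2 * ρ v * (μn Y * emp Y v))
          + μn Y * emp Y v ^ 2) := tsum_congr hexp
    _ = (∑' Y : Fin n → ℕ, (μn Y * ρ v ^ 2 - 2 * ρ v * (μn Y * emp Y v)))
          + ∑' Y : Fin n → ℕ, μn Y * emp Y v ^ 2 :=
        Summable.tsum_add (h1.sub (h2.mul_left _)) h3
    _ = ((∑' Y : Fin n → ℕ, μn Y * ρ v ^ 2)
          - ∑' Y : Fin n → ℕ, 2 * ρ v * (μn Y * emp Y v))
          + ∑' Y : Fin n → ℕ, μn Y * emp Y v ^ 2 := by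
        rw [Summable.tsum_sub h1 (h2.mul_left _)]
    _ = (ρ v ^ 2 - 2 * ρ v * ρ v)
          + ∑' Y : Fin n → ℕ, μn Y * emp Y v ^ 2 := by
        rw [tsum_mul_right, hμtot, one_mul, tsum_mul_left, hE1]
    _ = (∑ i : Fin n, ∑ j : Fin n,
          ∑' Y : Fin n → ℕ, μn Y * (dirac v (Y i) * dirac v (Y j))) / (n:ℝ)^2
        - ρ v ^ 2 := by
        rw [hE2]; ring

end moment

end HMMAux
namespace HMMAux

section final
variable {G θ : ℝ} {π : ℕ → ℝ} {A B : ℕ → ℕ → ℝ}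

theorem variance_bound (hA : IsKernel A) (hB : IsKernel B) (hge : IsGeomErgodic A π G θ)
    {n : ℕ} (hn : 0 < n) :
    (∑' Y : Fin n → ℕ, hmmLaw π A B n Y * ∑' v, (kerApp B π v - emp Y v) ^ 2)
      ≤ (1 + 2 * G * θ) / (n * (1 - θ)) := by
  obtain ⟨hG, hθ0, hθ1, hπ, hfix, htv⟩ := hge
  have hge' : IsGeomErgodic A π G θ := ⟨hG, hθ0, hθ1, hπ, hfix, htv⟩
  have hμ0 := hmm_nonneg hA hB hπ n
  have hμs := (hmm_total hA hB hπ n).1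
  have hρst : IsStochastic (kerApp B π) := kerApp_stoch hB hπ
  have hρs := stoch_summable hρst
  have hρ2s : Summable (fun v => kerApp B π v ^ 2) := by
    refine Summable.of_nonneg_of_le (fun v => sq_nonneg _) (fun v => ?_) hρs
    calc kerApp B π v ^ 2 = kerApp B π v * kerApp B π v := sq _
      _ ≤ 1 * kerApp B π v := mul_le_mul_of_nonneg_right (stoch_le_one hρst v) (hρst.1 v)
      _ = kerApp B π v := one_mul _
  have hSq := fun Y : Fin n → ℕ => sq_summable hn hB hπ Y
  -- Fubini between Y and v
  have h1 : ∀ Y : Fin n → ℕ, Summable fun v => hmmLaw π A B n Y * (kerApp B π v - emp Y v) ^ 2 :=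
    fun Y => (hSq Y).1.mul_left _
  have hswapin : ∀ Y : Fin n → ℕ,
      (∑' v, hmmLaw π A B n Y * (kerApp B π v - emp Y v) ^ 2)
        = hmmLaw π A B n Y * ∑' v, (kerApp B π v - emp Y v) ^ 2 := fun Y => tsum_mul_left
  have h2 : Summable fun Y : Fin n → ℕ =>
      ∑' v, hmmLaw π A B n Y * (kerApp B π v - emp Y v) ^ 2 := by
    simp_rw [hswapin]
    refine Summable.of_nonneg_of_le (fun Y => ?_) (fun Y => ?_) (hμs.mul_right 4)
    · exact mul_nonneg (hμ0 Y) (tsum_nonneg fun v => sq_nonneg _)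
    · exact mul_le_mul_of_nonneg_left (hSq Y).2 (hμ0 Y)
  obtain ⟨-, -, -, hswap⟩ := fub
    (f := fun (Y : Fin n → ℕ) (v : ℕ) => hmmLaw π A B n Y * (kerApp B π v - emp Y v) ^ 2)
    (fun Y v => mul_nonneg (hμ0 Y) (sq_nonneg _)) h1 h2
  have hDsum : ∀ i j : Fin n, Summable fun v =>
      (∑' Y : Fin n → ℕ, hmmLaw π A B n Y * (dirac v (Y i) * dirac v (Y j)))
        - kerApp B π v ^ 2 :=
    fun i j => ((Q_dom hA hB hπ hfix n i j).2.2).sub hρ2s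
  have hn' : ((n:ℝ)) ≠ 0 := Nat.cast_ne_zero.2 hn.ne'
  calc (∑' Y : Fin n → ℕ, hmmLaw π A B n Y * ∑' v, (kerApp B π v - emp Y v) ^ 2)
      = ∑' Y : Fin n → ℕ, ∑' v, hmmLaw π A B n Y * (kerApp B π v - emp Y v) ^ 2 := by
        exact tsum_congr fun Y => (hswapin Y).symm
    _ = ∑' v, ∑' Y : Fin n → ℕ, hmmLaw π A B n Y * (kerApp B π v - emp Y v) ^ 2 := hswap
    _ = ∑' v, ((∑ i : Fin n, ∑ j : Fin n,
          ∑' Y : Fin n → ℕ, hmmLaw π A B n Y * (dirac v (Y i) * dirac v (Y j))) / (n:ℝ)^2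
        - kerApp B π v ^ 2) := tsum_congr fun v => Tv_eq hA hB hπ hfix hn v
    _ = ∑' v, (∑ i : Fin n, ∑ j : Fin n,
          ((∑' Y : Fin n → ℕ, hmmLaw π A B n Y * (dirac v (Y i) * dirac v (Y j)))
            - kerApp B π v ^ 2)) / (n:ℝ)^2 := by
        refine tsum_congr fun v => ?_
        rw [eq_div_iff (by positivity), sub_mul, div_mul_cancel₀ _ (by positivity)]
        simp_rw [Finset.sum_sub_distrib, Finset.sum_const, Finset.card_univ, Fintype.card_fin,
          nsmul_eq_mul]
        ring
    _ = (∑ i : Fin n, ∑ j : Fin n, ∑' v,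
          ((∑' Y : Fin n → ℕ, hmmLaw π A B n Y * (dirac v (Y i) * dirac v (Y j)))
            - kerApp B π v ^ 2)) / (n:ℝ)^2 := by
        rw [tsum_div_const]
        congr 1
        rw [Summable.tsum_finsetSum fun i _ => summable_sum fun j _ => hDsum i j]
        exact Finset.sum_congr rfl fun i _ => Summable.tsum_finsetSum fun j _ => hDsum i j
    _ ≤ (∑ i : Fin n, ∑ j : Fin n,
          (if i = j then (1:ℝ) else G * θ ^ (max i.val j.val - min i.val j.val))) / (n:ℝ)^2 := by
        refine div_le_div_of_nonneg_right ?_ (by positivity)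
        refine Finset.sum_le_sum fun i _ => Finset.sum_le_sum fun j _ => ?_
        exact cov_all hA hB hge' n i j
    _ ≤ (n * (1 + 2 * G * (θ * (1 - θ)⁻¹))) / (n:ℝ)^2 := by
        refine div_le_div_of_nonneg_right ?_ (by positivity)
        exact double_sum_bound hG hθ0 hθ1 n
    _ ≤ (1 + 2 * G * θ) / (n * (1 - θ)) := by
        have h1θ : (0:ℝ) < 1 - θ := by linarith
        have hn0 : (0:ℝ) < n := Nat.cast_pos.2 hn
        rw [div_le_div_iff₀ (by positivity) (by positivity)]
        have hkey : (1 - θ) * (1 + 2 * G * (θ * (1 - θ)⁻¹)) = (1 - θ) + 2 * G * θ := by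
          field_simp
        calc (n:ℝ) * (1 + 2 * G * (θ * (1 - θ)⁻¹)) * ((n:ℝ) * (1 - θ))
            = (n:ℝ)^2 * ((1 - θ) * (1 + 2 * G * (θ * (1 - θ)⁻¹))) := by ring
          _ = (n:ℝ)^2 * ((1 - θ) + 2 * G * θ) := by rw [hkey]
          _ ≤ (n:ℝ)^2 * (1 + 2 * G * θ) := by
              refine mul_le_mul_of_nonneg_left (by linarith) (by positivity)
          _ = (1 + 2 * G * θ) * (n:ℝ)^2 := by ring

end final

end HMMAux
namespace HMMAux

theorem sqrt_mul_le_half_add {x y : ℝ} (hx : 0 ≤ x) (hy : 0 ≤ y) :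
    Real.sqrt (x * y) ≤ (x + y) / 2 := by
  rw [Real.sqrt_mul hx y]
  have h1 := Real.sq_sqrt hx
  have h2 := Real.sq_sqrt hy
  have h3 := Real.sqrt_nonneg x
  have h4 := Real.sqrt_nonneg y
  nlinarith [sq_nonneg (Real.sqrt x - Real.sqrt y)]

/-- Cauchy–Schwarz for infinite sums, in the form `E[√S] ≤ √(E[1] · E[S])`. -/
theorem tsum_CS {α : Type*} {μ S : α → ℝ} (hμ0 : ∀ Y, 0 ≤ μ Y) (hS0 : ∀ Y, 0 ≤ S Y)
    (hμs : Summable μ) (hμS : Summable (fun Y => μ Y * S Y)) :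
    (∑' Y, μ Y * Real.sqrt (S Y))
      ≤ Real.sqrt ((∑' Y, μ Y) * ∑' Y, μ Y * S Y) := by
  have hterm : ∀ Y, μ Y * Real.sqrt (S Y)
      = Real.sqrt (μ Y) * Real.sqrt (μ Y * S Y) := by
    intro Y
    rw [Real.sqrt_mul (hμ0 Y), ← mul_assoc, Real.mul_self_sqrt (hμ0 Y)]
  have hsummable : Summable fun Y => μ Y * Real.sqrt (S Y) := by
    refine Summable.of_nonneg_of_le
      (fun Y => mul_nonneg (hμ0 Y) (Real.sqrt_nonneg _)) (fun Y => ?_)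
      (((hμs.add hμS).div_const 2))
    rw [hterm Y, ← Real.sqrt_mul (hμ0 Y)]
    calc Real.sqrt (μ Y * (μ Y * S Y))
        ≤ (μ Y + μ Y * S Y) / 2 :=
          sqrt_mul_le_half_add (hμ0 Y) (mul_nonneg (hμ0 Y) (hS0 Y))
      _ = (fun Y => (μ Y + μ Y * S Y) / 2) Y := rfl
  refine Summable.tsum_le_of_sum_le hsummable fun F => ?_
  have hF1 : (∑ Y ∈ F, μ Y) ≤ ∑' Y, μ Y := Summable.sum_le_tsum F (fun Y _ => hμ0 Y) hμs
  have hF2 : (∑ Y ∈ F, μ Y * S Y) ≤ ∑' Y, μ Y * S Y :=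
    Summable.sum_le_tsum F (fun Y _ => mul_nonneg (hμ0 Y) (hS0 Y)) hμS
  have hCS := Finset.sum_mul_sq_le_sq_mul_sq F (fun Y => Real.sqrt (μ Y))
    (fun Y => Real.sqrt (μ Y * S Y))
  have hsq1 : ∀ Y, Real.sqrt (μ Y) ^ 2 = μ Y := fun Y => Real.sq_sqrt (hμ0 Y)
  have hsq2 : ∀ Y, Real.sqrt (μ Y * S Y) ^ 2 = μ Y * S Y :=
    fun Y => Real.sq_sqrt (mul_nonneg (hμ0 Y) (hS0 Y))
  have hflip : (∑ Y ∈ F, μ Y * Real.sqrt (S Y))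
      = ∑ Y ∈ F, Real.sqrt (μ Y) * Real.sqrt (μ Y * S Y) :=
    Finset.sum_congr rfl fun Y _ => hterm Y
  rw [hflip]
  refine (Real.le_sqrt (Finset.sum_nonneg fun Y _ =>
    mul_nonneg (Real.sqrt_nonneg _) (Real.sqrt_nonneg _)) ?_).2 ?_
  · exact mul_nonneg (tsum_nonneg hμ0) (tsum_nonneg fun Y => mul_nonneg (hμ0 Y) (hS0 Y))
  · calc (∑ Y ∈ F, Real.sqrt (μ Y) * Real.sqrt (μ Y * S Y)) ^ 2
        ≤ (∑ Y ∈ F, Real.sqrt (μ Y) ^ 2) * ∑ Y ∈ F, Real.sqrt (μ Y * S Y) ^ 2 := hCS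
      _ = (∑ Y ∈ F, μ Y) * ∑ Y ∈ F, μ Y * S Y := by simp_rw [hsq1, hsq2]
      _ ≤ (∑' Y, μ Y) * ∑' Y, μ Y * S Y := by
          refine mul_le_mul hF1 hF2 (Finset.sum_nonneg fun Y _ =>
            mul_nonneg (hμ0 Y) (hS0 Y)) (tsum_nonneg hμ0)

end HMMAux
open HMMAux in
/-- **Lemma 4.** For a stationary `(G,θ)`-geometrically ergodic hidden Markov chain with
stationary output distribution `ρ = Bπ`, `𝔼‖ρ − ρ̂‖_∞ ≤ √((1+2Gθ)/(n(1−θ)))`. -/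
theorem expected_sup_le (G θ : ℝ) (π : ℕ → ℝ) (A B : ℕ → ℕ → ℝ)
    (hA : IsKernel A) (hB : IsKernel B) (hge : IsGeomErgodic A π G θ)
    (n : ℕ) (hn : 0 < n) :
    expect (hmmLaw π A B n) (fun Y => ⨆ v : ℕ, |kerApp B π v - emp Y v|)
      ≤ Real.sqrt ((1 + 2 * G * θ) / (n * (1 - θ))) := by
  classical
  obtain ⟨hG, hθ0, hθ1, hπ, hfix, htv⟩ := hge
  have hge' : IsGeomErgodic A π G θ := ⟨hG, hθ0, hθ1, hπ, hfix, htv⟩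
  have hμ0 := hmm_nonneg hA hB hπ n
  have hμs := (hmm_total hA hB hπ n).1
  have hμtot := (hmm_total hA hB hπ n).2
  have hSq := fun Y : Fin n → ℕ => sq_summable hn hB hπ Y
  set S : (Fin n → ℕ) → ℝ := fun Y => ∑' v, (kerApp B π v - emp Y v) ^ 2 with hS
  have hS0 : ∀ Y, 0 ≤ S Y := fun Y => tsum_nonneg fun v => sq_nonneg _
  have hf_le : ∀ Y : Fin n → ℕ,
      (⨆ v : ℕ, |kerApp B π v - emp Y v|) ≤ Real.sqrt (S Y) := by
    intro Y
    refine ciSup_le fun v => ?_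
    rw [← Real.sqrt_sq_eq_abs]
    exact Real.sqrt_le_sqrt (Summable.le_tsum (hSq Y).1 v fun v' _ => sq_nonneg _)
  have hf0 : ∀ Y : Fin n → ℕ, 0 ≤ ⨆ v : ℕ, |kerApp B π v - emp Y v| :=
    fun Y => Real.iSup_nonneg fun v => abs_nonneg _
  have hsqrt2 : ∀ Y, Real.sqrt (S Y) ≤ 2 := by
    intro Y
    calc Real.sqrt (S Y) ≤ Real.sqrt 4 := Real.sqrt_le_sqrt (hSq Y).2
      _ = 2 := by rw [show (4:ℝ) = 2^2 by norm_num, Real.sqrt_sq (by norm_num)]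
  have hfs : Summable fun Y : Fin n → ℕ =>
      hmmLaw π A B n Y * ⨆ v : ℕ, |kerApp B π v - emp Y v| := by
    refine Summable.of_nonneg_of_le (fun Y => mul_nonneg (hμ0 Y) (hf0 Y)) (fun Y => ?_)
      (hμs.mul_right 2)
    exact mul_le_mul_of_nonneg_left ((hf_le Y).trans (hsqrt2 Y)) (hμ0 Y)
  have hgs : Summable fun Y : Fin n → ℕ => hmmLaw π A B n Y * Real.sqrt (S Y) := by
    refine Summable.of_nonneg_of_le (fun Y => mul_nonneg (hμ0 Y) (Real.sqrt_nonneg _))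
      (fun Y => ?_) (hμs.mul_right 2)
    exact mul_le_mul_of_nonneg_left (hsqrt2 Y) (hμ0 Y)
  have hμSs : Summable fun Y : Fin n → ℕ => hmmLaw π A B n Y * S Y := by
    refine Summable.of_nonneg_of_le (fun Y => mul_nonneg (hμ0 Y) (hS0 Y)) (fun Y => ?_)
      (hμs.mul_right 4)
    exact mul_le_mul_of_nonneg_left (hSq Y).2 (hμ0 Y)
  calc expect (hmmLaw π A B n) (fun Y => ⨆ v : ℕ, |kerApp B π v - emp Y v|)
      = ∑' Y : Fin n → ℕ, hmmLaw π A B n Y * ⨆ v : ℕ, |kerApp B π v - emp Y v| := rfl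
    _ ≤ ∑' Y : Fin n → ℕ, hmmLaw π A B n Y * Real.sqrt (S Y) :=
        Summable.tsum_le_tsum (fun Y => mul_le_mul_of_nonneg_left (hf_le Y) (hμ0 Y)) hfs hgs
    _ ≤ Real.sqrt ((∑' Y : Fin n → ℕ, hmmLaw π A B n Y)
          * ∑' Y : Fin n → ℕ, hmmLaw π A B n Y * S Y) :=
        tsum_CS hμ0 hS0 hμs hμSs
    _ = Real.sqrt (∑' Y : Fin n → ℕ, hmmLaw π A B n Y * S Y) := by rw [hμtot, one_mul]
    _ ≤ Real.sqrt ((1 + 2 * G * θ) / (n * (1 - θ))) :=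
        Real.sqrt_le_sqrt (variance_bound hA hB hge' hn)

end
end

section
/- Let Y₁,…,Yₙ be a stationary (G,θ)-geometrically ergodic hidden Markov chain on ℕ with stationary output distribution ρ, and let ρ̂ = ρ̂⁽ⁿ⁾ be the empirical distribution ρ̂_y = (1/n)∑_{i=1}^n 1[Y_i = y]. Then for every y ∈ ℕ, Var[ρ̂_y] ≤ ρ_y·(1+2Gθ)/(n(1−θ)), and consequently E[ ∑_{y∈ℕ} (ρ_y − ρ̂_y)² ] ≤ (1+2Gθ)/(n(1−θ)). -/
open scoped BigOperators ENNReal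
open Filter

noncomputable section

set_option maxHeartbeats 1000000

namespace VB
variable {A B : ℕ → ℕ → ℝ} {π : ℕ → ℝ} {G θ : ℝ}




lemma summable_of_tsum_ne_zero {α : Type*} {f : α → ℝ} (h : ∑' x, f x ≠ 0) : Summable f := by
  by_contra hs
  exact h (tsum_eq_zero_of_not_summable hs)

def oK (A : ℕ → ℕ → ℝ) : ℕ → ℕ → ℝ≥0∞ := fun y x => ENNReal.ofReal (A y x)

lemma summable_row {A : ℕ → ℕ → ℝ} (hA : IsKernel A) (x : ℕ) : Summable (A · x) :=
  summable_of_tsum_ne_zero (by rw [hA.2 x]; norm_num)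

lemma oK_row {A : ℕ → ℕ → ℝ} (hA : IsKernel A) (x : ℕ) : ∑' y, oK A y x = 1 := by
  simp only [oK]
  rw [← ENNReal.ofReal_tsum_of_nonneg (fun y => hA.1 y x) (summable_row hA x), hA.2 x,
    ENNReal.ofReal_one]

lemma oK_le_one {A : ℕ → ℕ → ℝ} (hA : IsKernel A) (y x : ℕ) : oK A y x ≤ 1 := by
  rw [← oK_row hA x]
  exact ENNReal.le_tsum y

lemma A_le_one {A : ℕ → ℕ → ℝ} (hA : IsKernel A) (y x : ℕ) : A y x ≤ 1 := by
  rw [← hA.2 x]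
  exact Summable.le_tsum (summable_row hA x) y (fun j _ => hA.1 j x)

def oS (ξ : ℕ → ℝ) : ℕ → ℝ≥0∞ := fun x => ENNReal.ofReal (ξ x)

lemma oS_sum {ξ : ℕ → ℝ} (hξ : IsStochastic ξ) : ∑' x, oS ξ x = 1 := by
  simp only [oS]; rw [← ENNReal.ofReal_tsum_of_nonneg hξ.1
    (summable_of_tsum_ne_zero (by rw [hξ.2]; norm_num)), hξ.2, ENNReal.ofReal_one]

lemma oS_ne_top (ξ : ℕ → ℝ) (x : ℕ) : oS ξ x ≠ ⊤ := ENNReal.ofReal_ne_top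




def oML (A : ℕ → ℕ → ℝ) (p : ℕ → ℝ≥0∞) : (n : ℕ) → (Fin n → ℕ) → ℝ≥0∞
  | 0, _ => 1
  | n + 1, x => p (x 0) * ∏ i : Fin n, oK A (x i.succ) (x i.castSucc)

lemma tsum_unique {α : Type*} [Unique α] (f : α → ℝ≥0∞) : ∑' a, f a = f default :=
  tsum_eq_single default (fun b' hb' => absurd (Subsingleton.elim _ _) hb')

lemma oML_head (p : ℕ → ℝ≥0∞) (n : ℕ) (x : Fin (n + 1) → ℕ) :
    oML A p (n + 1) x = p (x 0) * oML A (fun z => oK A z (x 0)) n (x ∘ Fin.succ) := by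
  cases n with
  | zero => simp [oML]
  | succ m =>
    simp only [oML, Fin.prod_univ_succ, Function.comp_apply, Fin.succ_castSucc]
    have h0 : (0 : Fin (m+1)).castSucc = 0 := rfl
    have h1 : x ((0 : Fin (m+1)).succ) = (x ∘ Fin.succ) 0 := rfl
    rw [h0, h1]

lemma tsum_pi_prod : ∀ (n : ℕ) (h : Fin n → ℕ → ℝ≥0∞),
    ∑' y : Fin n → ℕ, ∏ i, h i (y i) = ∏ i, ∑' w, h i w := by
  intro n
  induction n with
  | zero => intro h; simp [tsum_unique]
  | succ m ih =>
    intro h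
    rw [← Equiv.tsum_eq (Fin.consEquiv (fun _ : Fin (m+1) => ℕ)) (fun y => ∏ i, h i (y i)),
      ENNReal.tsum_prod']
    simp only [Fin.consEquiv_apply]
    have : ∀ (a : ℕ) (b : Fin m → ℕ),
        (∏ i, h i (Fin.cons (α := fun _ => ℕ) a b i)) = h 0 a * ∏ i : Fin m, h i.succ (b i) := by
      intro a b
      rw [Fin.prod_univ_succ]
      simp
    simp only [this]
    calc ∑' (a : ℕ) (b : Fin m → ℕ), h 0 a * ∏ i, h i.succ (b i)
        = ∑' a : ℕ, h 0 a * ∑' b : Fin m → ℕ, ∏ i, h i.succ (b i) := by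
          congr 1; funext a; rw [ENNReal.tsum_mul_left]
      _ = (∑' a : ℕ, h 0 a) * ∑' b : Fin m → ℕ, ∏ i, h i.succ (b i) :=
          ENNReal.tsum_mul_right
      _ = (∑' a : ℕ, h 0 a) * ∏ i : Fin m, ∑' w, h i.succ w := by rw [ih]
      _ = ∏ i : Fin (m+1), ∑' w, h i w := (Fin.prod_univ_succ (fun i => ∑' w, h i w)).symm




def val (A : ℕ → ℕ → ℝ) : (n : ℕ) → (Fin n → ℕ → ℝ≥0∞) → ℕ → ℝ≥0∞
  | 0, _, _ => 1
  | n + 1, f, z => f 0 z * ∑' z', oK A z' z * val A n (fun i => f i.succ) z'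

def oadj (A : ℕ → ℕ → ℝ) : ℕ → (ℕ → ℝ≥0∞) → ℕ → ℝ≥0∞
  | 0, h => h
  | s + 1, h => fun z => ∑' z', oK A z' z * oadj A s h z'

def oIter (A : ℕ → ℕ → ℝ) : ℕ → (ℕ → ℝ≥0∞) → ℕ → ℝ≥0∞
  | 0, ξ => ξ
  | s + 1, ξ => fun y => ∑' x, oK A y x * oIter A s ξ x

lemma val_congr : ∀ (n : ℕ) (f g : Fin n → ℕ → ℝ≥0∞), (∀ i w, f i w = g i w) →
    ∀ z, val A n f z = val A n g z := by
  intro n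
  induction n with
  | zero => intro f g h z; rfl
  | succ m ih =>
    intro f g h z
    simp only [val, h 0 z]
    exact congrArg _ (tsum_congr fun z' => by
      rw [ih (fun i => f i.succ) (fun i => g i.succ) (fun i w => h i.succ w) z'])

lemma val_one (hA : IsKernel A) : ∀ (n : ℕ) (f : Fin n → ℕ → ℝ≥0∞),
    (∀ i w, f i w = 1) → ∀ z, val A n f z = 1 := by
  intro n
  induction n with
  | zero => intro f h z; rfl
  | succ m ih =>
    intro f h z
    simp only [val, h 0 z, one_mul]
    have : ∀ z', oK A z' z * val A m (fun i => f i.succ) z' = oK A z' z := by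
      intro z'
      rw [ih (fun i => f i.succ) (fun i w => h i.succ w) z', mul_one]
    simp only [this]
    exact oK_row hA z

lemma master (hA : IsKernel A) : ∀ (n : ℕ) (f : Fin n → ℕ → ℝ≥0∞) (p : ℕ → ℝ≥0∞),
    (∑' z, p z = 1) →
    ∑' x : Fin n → ℕ, oML A p n x * ∏ i, f i (x i) = ∑' z, p z * val A n f z := by
  intro n
  induction n with
  | zero =>
    intro f p hp
    rw [tsum_unique]
    simp [oML, val, hp]
  | succ m ih =>
    intro f p hp
    rw [← Equiv.tsum_eq (Fin.consEquiv (fun _ : Fin (m+1) => ℕ))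
      (fun x => oML A p (m+1) x * ∏ i, f i (x i)), ENNReal.tsum_prod']
    simp only [Fin.consEquiv_apply]
    have key : ∀ a : ℕ, ∑' (b : Fin m → ℕ),
        oML A p (m+1) (Fin.cons (α := fun _ => ℕ) a b) *
          ∏ i, f i (Fin.cons (α := fun _ => ℕ) a b i)
        = p a * val A (m+1) f a := by
      intro a
      have h1 : ∀ b : Fin m → ℕ,
          oML A p (m+1) (Fin.cons (α := fun _ => ℕ) a b) *
            ∏ i, f i (Fin.cons (α := fun _ => ℕ) a b i)
          = (p a * f 0 a) * (oML A (fun z => oK A z a) m b * ∏ i : Fin m, f i.succ (b i)) := by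
        intro b
        rw [oML_head, Fin.prod_univ_succ]
        have hc0 : Fin.cons (α := fun _ => ℕ) a b 0 = a := rfl
        have hcs : (Fin.cons (α := fun _ => ℕ) a b) ∘ Fin.succ = b := by
          funext i; simp [Fin.cons_succ]
        rw [hc0, hcs]
        have : ∀ i : Fin m, f i.succ (Fin.cons (α := fun _ => ℕ) a b i.succ) = f i.succ (b i) := by
          intro i; rw [Fin.cons_succ]
        rw [Finset.prod_congr rfl (fun i _ => this i)]
        ring
      simp only [h1]
      rw [ENNReal.tsum_mul_left, ih (fun i => f i.succ) (fun z => oK A z a) (oK_row hA a)]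
      simp only [val]
      ring
    exact tsum_congr key

lemma val_single (hA : IsKernel A) : ∀ (n k : ℕ) (h : ℕ → ℝ≥0∞), k < n → ∀ z,
    val A n (fun i w => if (i : ℕ) = k then h w else 1) z = oadj A k h z := by
  intro n
  induction n with
  | zero => intro k h hk; omega
  | succ m ih =>
    intro k h hk z
    cases k with
    | zero =>
      simp only [val]
      have h0 : ((0 : Fin (m+1)) : ℕ) = 0 := rfl
      rw [if_pos h0]
      have : ∀ z', val A m (fun i w => if ((i.succ : Fin (m+1)) : ℕ) = 0 then h w else 1) z' = 1 := by
        intro z'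
        apply val_one hA
        intro i w
        simp [Fin.val_succ]
      simp only [this, mul_one, oK_row hA z, oadj]
    | succ k' =>
      simp only [val]
      have h0 : ¬ (((0 : Fin (m+1)) : ℕ) = k' + 1) := by simp
      rw [if_neg h0, one_mul]
      have : ∀ z', val A m (fun i w => if ((i.succ : Fin (m+1)) : ℕ) = k' + 1 then h w else 1) z'
          = oadj A k' h z' := by
        intro z'
        rw [val_congr m _ (fun i w => if (i : ℕ) = k' then h w else 1)
          (by intro i w; simp [Fin.val_succ])]
        exact ih k' h (by omega) z'
      simp only [this]
      rfl

lemma val_double (hA : IsKernel A) : ∀ (n i j : ℕ) (h1 h2 : ℕ → ℝ≥0∞), i < j → j < n → ∀ z,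
    val A n (fun t w => if (t : ℕ) = i then h1 w else if (t : ℕ) = j then h2 w else 1) z
      = oadj A i (fun w => h1 w * oadj A (j - i) h2 w) z := by
  intro n
  induction n with
  | zero => intro i j h1 h2 hij hj; omega
  | succ m ih =>
    intro i j h1 h2 hij hj z
    cases i with
    | zero =>
      obtain ⟨j', rfl⟩ : ∃ j', j = j' + 1 := ⟨j - 1, by omega⟩
      simp only [val]
      have h0 : ((0 : Fin (m+1)) : ℕ) = 0 := rfl
      rw [if_pos h0]
      have : ∀ z', val A m (fun i w =>
          if ((i.succ : Fin (m+1)) : ℕ) = 0 then h1 w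
          else if ((i.succ : Fin (m+1)) : ℕ) = j' + 1 then h2 w else 1) z'
          = oadj A j' h2 z' := by
        intro z'
        rw [val_congr m _ (fun i w => if (i : ℕ) = j' then h2 w else 1)
          (by intro i w; simp [Fin.val_succ])]
        exact val_single hA m j' h2 (by omega) z'
      simp only [this]
      simp only [oadj, Nat.zero_sub, Nat.sub_zero]
    | succ i' =>
      obtain ⟨j', rfl⟩ : ∃ j', j = j' + 1 := ⟨j - 1, by omega⟩
      simp only [val]
      have h0 : ¬ (((0 : Fin (m+1)) : ℕ) = i' + 1) := by simp
      have h0' : ¬ (((0 : Fin (m+1)) : ℕ) = j' + 1) := by simp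
      rw [if_neg h0, if_neg h0', one_mul]
      have : ∀ z', val A m (fun t w =>
          if ((t.succ : Fin (m+1)) : ℕ) = i' + 1 then h1 w
          else if ((t.succ : Fin (m+1)) : ℕ) = j' + 1 then h2 w else 1) z'
          = oadj A i' (fun w => h1 w * oadj A (j' - i') h2 w) z' := by
        intro z'
        rw [val_congr m _ (fun t w => if (t : ℕ) = i' then h1 w else if (t : ℕ) = j' then h2 w else 1)
          (by intro t w; simp [Fin.val_succ])]
        exact ih i' j' h1 h2 (by omega) (by omega) z'
      simp only [this]
      have : j' + 1 - (i' + 1) = j' - i' := by omega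
      rw [this]
      rfl

lemma oadj_le_one (hA : IsKernel A) {h : ℕ → ℝ≥0∞} (hh : ∀ w, h w ≤ 1) :
    ∀ (s : ℕ) (z : ℕ), oadj A s h z ≤ 1 := by
  intro s
  induction s with
  | zero => exact hh
  | succ t ih =>
    intro z
    calc ∑' z', oK A z' z * oadj A t h z' ≤ ∑' z', oK A z' z * 1 :=
          ENNReal.tsum_le_tsum (fun z' => mul_le_mul_right (ih z') _)
      _ = 1 := by simp [oK_row hA z]

lemma oadj_succ' (s : ℕ) (h : ℕ → ℝ≥0∞) :
    oadj A (s + 1) h = oadj A s (fun u => ∑' w, oK A w u * h w) := by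
  induction s with
  | zero => rfl
  | succ t ih =>
    funext z
    show ∑' z', oK A z' z * oadj A (t+1) h z' = _
    simp only [ih]
    rfl

lemma oadj_dual : ∀ (s : ℕ) (h : ℕ → ℝ≥0∞) (z : ℕ),
    oadj A s h z = ∑' w, oIter A s (fun w' => if w' = z then 1 else 0) w * h w := by
  intro s
  induction s with
  | zero =>
    intro h z
    rw [tsum_eq_single z]
    · simp [oIter, oadj]
    · intro w hw; simp [oIter, hw]
  | succ t ih =>
    intro h z
    rw [oadj_succ', ih]
    have swap : ∑' w, oIter A t (fun w' => if w' = z then 1 else 0) w * ∑' u, oK A u w * h u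
        = ∑' u, (∑' w, oK A u w * oIter A t (fun w' => if w' = z then 1 else 0) w) * h u := by
      have e1 : ∀ w, oIter A t (fun w' => if w' = z then 1 else 0) w * ∑' u, oK A u w * h u
          = ∑' u, oIter A t (fun w' => if w' = z then 1 else 0) w * (oK A u w * h u) :=
        fun w => (ENNReal.tsum_mul_left).symm
      simp only [e1]
      rw [ENNReal.tsum_comm]
      exact tsum_congr fun u => by
        rw [← ENNReal.tsum_mul_right]
        exact tsum_congr fun w => by ring
    rw [swap]
    rfl



lemma tsum_of_ofReal {α : Type*} {f : α → ℝ} (hf : ∀ a, 0 ≤ f a) {c : ℝ} (hc : 0 ≤ c)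
    (h : ∑' a, ENNReal.ofReal (f a) = ENNReal.ofReal c) : Summable f ∧ ∑' a, f a = c := by
  have hne : ∑' a, ENNReal.ofReal (f a) ≠ ⊤ := by rw [h]; exact ENNReal.ofReal_ne_top
  have hs : Summable f := by
    have h2 := ENNReal.summable_toReal hne
    have h3 : (fun a => (ENNReal.ofReal (f a)).toReal) = f :=
      funext fun a => ENNReal.toReal_ofReal (hf a)
    rwa [h3] at h2
  refine ⟨hs, ?_⟩
  have h4 := ENNReal.ofReal_tsum_of_nonneg hf hs
  rw [h] at h4
  exact (ENNReal.ofReal_eq_ofReal_iff (tsum_nonneg hf) hc).mp h4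

lemma summable_of_stochastic {ξ : ℕ → ℝ} (hξ : IsStochastic ξ) : Summable ξ :=
  summable_of_tsum_ne_zero (by rw [hξ.2]; norm_num)

lemma dirac_stochastic (z : ℕ) : IsStochastic (dirac z) := by
  constructor
  · intro w; unfold dirac; split <;> norm_num
  · rw [tsum_eq_single z (fun w hw => by simp [dirac, hw])]
    simp [dirac]

lemma oS_dirac (z : ℕ) : oS (dirac z) = fun w => if w = z then (1 : ℝ≥0∞) else 0 := by
  funext w
  by_cases hw : w = z <;> simp [oS, dirac, hw]

lemma kerApp_conv {A : ℕ → ℕ → ℝ} (hA : IsKernel A) {η : ℕ → ℝ} (hη : IsStochastic η) (y : ℕ) :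
    ENNReal.ofReal (kerApp A η y) = ∑' x, oK A y x * oS η x := by
  have hsum : Summable (fun x => A y x * η x) :=
    Summable.of_nonneg_of_le (fun x => mul_nonneg (hA.1 y x) (hη.1 x))
      (fun x => mul_le_of_le_one_left (hη.1 x) (A_le_one hA y x))
      (summable_of_stochastic hη)
  rw [show kerApp A η y = ∑' x, A y x * η x from rfl,
    ENNReal.ofReal_tsum_of_nonneg (fun x => mul_nonneg (hA.1 y x) (hη.1 x)) hsum]
  exact tsum_congr fun x => ENNReal.ofReal_mul (hA.1 y x)

lemma kerApp_stochastic {A : ℕ → ℕ → ℝ} (hA : IsKernel A) {η : ℕ → ℝ} (hη : IsStochastic η) :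
    IsStochastic (kerApp A η) := by
  have hnn : ∀ y, 0 ≤ kerApp A η y :=
    fun y => tsum_nonneg (fun x => mul_nonneg (hA.1 y x) (hη.1 x))
  have hmass : ∑' y, ∑' x, oK A y x * oS η x = 1 := by
    rw [ENNReal.tsum_comm]
    calc ∑' x, ∑' y, oK A y x * oS η x = ∑' x : ℕ, oS η x := by
          refine tsum_congr fun x => ?_
          rw [ENNReal.tsum_mul_right, oK_row hA x, one_mul]
      _ = 1 := oS_sum hη
  have h2 : ∑' y, ENNReal.ofReal (kerApp A η y) = ENNReal.ofReal 1 := by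
    simp only [kerApp_conv hA hη]
    rw [hmass, ENNReal.ofReal_one]
  exact ⟨hnn, (tsum_of_ofReal hnn zero_le_one h2).2⟩

lemma kerIter_facts {A : ℕ → ℕ → ℝ} (hA : IsKernel A) {ξ : ℕ → ℝ} (hξ : IsStochastic ξ) :
    ∀ s, IsStochastic (kerIter A s ξ) ∧ ∀ w, oIter A s (oS ξ) w = oS (kerIter A s ξ) w := by
  intro s
  induction s with
  | zero => exact ⟨hξ, fun w => rfl⟩
  | succ t ih =>
    have hη := ih.1
    refine ⟨kerApp_stochastic hA hη, fun w => ?_⟩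
    show ∑' x, oK A w x * oIter A t (oS ξ) x = _
    rw [tsum_congr (fun x => by rw [ih.2 x])]
    exact (kerApp_conv hA hη w).symm

lemma ost {A : ℕ → ℕ → ℝ} (hA : IsKernel A) (hπ : IsStochastic π) (hst : kerApp A π = π)
    (y : ℕ) : ∑' x, oK A y x * oS π x = oS π y := by
  rw [← kerApp_conv hA hπ y, hst]
  rfl

lemma stat {A : ℕ → ℕ → ℝ} (hA : IsKernel A) (hπ : IsStochastic π) (hst : kerApp A π = π) :
    ∀ (s : ℕ) (h : ℕ → ℝ≥0∞), ∑' z, oS π z * oadj A s h z = ∑' z, oS π z * h z := by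
  intro s
  induction s with
  | zero => intro h; rfl
  | succ t ih =>
    intro h
    calc ∑' z, oS π z * oadj A (t+1) h z
        = ∑' z, ∑' z', oS π z * (oK A z' z * oadj A t h z') := by
          refine tsum_congr fun z => ?_
          rw [show oadj A (t+1) h z = ∑' z', oK A z' z * oadj A t h z' from rfl,
            ← ENNReal.tsum_mul_left]
      _ = ∑' z', (∑' z, oK A z' z * oS π z) * oadj A t h z' := by
          rw [ENNReal.tsum_comm]
          refine tsum_congr fun z' => ?_
          rw [← ENNReal.tsum_mul_right]
          exact tsum_congr fun z => by ring
      _ = ∑' z', oS π z' * oadj A t h z' := by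
          refine tsum_congr fun z' => ?_
          rw [ost hA hπ hst z']
      _ = ∑' z, oS π z * h z := ih h

lemma pair_tv {K P : ℕ → ℝ} (hK : IsStochastic K) (hP : IsStochastic P)
    {h : ℕ → ℝ} (h0 : ∀ w, 0 ≤ h w) (h1 : ∀ w, h w ≤ 1) :
    |(∑' w, K w * h w) - ∑' w, P w * h w| ≤ tv K P := by
  have sK := summable_of_stochastic hK
  have sP := summable_of_stochastic hP
  have sKh : Summable (fun w => K w * h w) :=
    Summable.of_nonneg_of_le (fun w => mul_nonneg (hK.1 w) (h0 w))
      (fun w => mul_le_of_le_one_right (hK.1 w) (h1 w)) sK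
  have sPh : Summable (fun w => P w * h w) :=
    Summable.of_nonneg_of_le (fun w => mul_nonneg (hP.1 w) (h0 w))
      (fun w => mul_le_of_le_one_right (hP.1 w) (h1 w)) sP
  have sD : Summable (fun w => K w - P w) := sK.sub sP
  have sDabs : Summable (fun w => |K w - P w|) := sD.abs
  have sDh : Summable (fun w => (K w - P w) * (h w - 1/2)) := by
    rw [← summable_abs_iff]
    refine Summable.of_nonneg_of_le (fun w => abs_nonneg _) (fun w => ?_)
      (sDabs.mul_right (1/2))
    rw [abs_mul]
    have hb : |h w - 1/2| ≤ 1/2 := by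
      rw [abs_le]; constructor <;> [linarith [h0 w]; linarith [h1 w]]
    exact mul_le_mul_of_nonneg_left hb (abs_nonneg _)
  have key : (∑' w, K w * h w) - ∑' w, P w * h w = ∑' w, (K w - P w) * (h w - 1/2) := by
    rw [← Summable.tsum_sub sKh sPh]
    have e1 : ∀ w, K w * h w - P w * h w = (K w - P w) * (h w - 1/2) + (1/2) * (K w - P w) := by
      intro w; ring
    rw [tsum_congr e1, Summable.tsum_add sDh (sD.mul_left (1/2)), tsum_mul_left,
      Summable.tsum_sub sK sP, hK.2, hP.2]
    ring
  rw [key]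
  have hsabs2 : Summable (fun w => |K w - P w| * |h w - 1/2|) := by
    simpa [abs_mul] using sDh.abs
  have habs : |∑' w, (K w - P w) * (h w - 1/2)| ≤ ∑' w, |K w - P w| * |h w - 1/2| := by
    have hnorm : Summable (fun w => ‖(K w - P w) * (h w - 1/2)‖) := sDh.abs
    simpa [Real.norm_eq_abs, abs_mul] using norm_tsum_le_tsum_norm hnorm
  refine habs.trans ?_
  have hle : ∀ w, |K w - P w| * |h w - 1/2| ≤ |K w - P w| * (1/2) := by
    intro w
    have hb : |h w - 1/2| ≤ 1/2 := by
      rw [abs_le]; constructor <;> [linarith [h0 w]; linarith [h1 w]]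
    exact mul_le_mul_of_nonneg_left hb (abs_nonneg _)
  refine (Summable.tsum_le_tsum hle hsabs2 (sDabs.mul_right (1/2))).trans ?_
  rw [tsum_mul_right, tv]
  ring_nf
  exact le_refl _


/-- indicator of `Y k = v` -/
def eInd (v : ℕ) {n : ℕ} (k : Fin n) (Y : Fin n → ℕ) : ℝ := if Y k = v then 1 else 0

lemma markov_nonneg (hA : IsKernel A) (hπ : IsStochastic π) (n : ℕ) (x : Fin n → ℕ) :
    0 ≤ markovLaw π A n x := by
  cases n with
  | zero => norm_num [markovLaw]
  | succ m =>
    exact mul_nonneg (hπ.1 _) (Finset.prod_nonneg fun i _ => hA.1 _ _)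

lemma markov_oML (hA : IsKernel A) (hπ : IsStochastic π) (n : ℕ) (x : Fin n → ℕ) :
    ENNReal.ofReal (markovLaw π A n x) = oML A (oS π) n x := by
  cases n with
  | zero => simp [markovLaw, oML]
  | succ m =>
    show ENNReal.ofReal (π (x 0) * ∏ i : Fin m, A (x i.succ) (x i.castSucc)) = _
    rw [ENNReal.ofReal_mul (hπ.1 _),
      ENNReal.ofReal_prod_of_nonneg (fun i _ => hA.1 _ _)]
    rfl

lemma oML_norm (hA : IsKernel A) (hπ : IsStochastic π) (n : ℕ) :
    ∑' x : Fin n → ℕ, oML A (oS π) n x = 1 := by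
  have h := master hA n (fun _ _ => (1 : ℝ≥0∞)) (oS π) (oS_sum hπ)
  simp only [Finset.prod_const_one, mul_one] at h
  rw [h]
  have h1 := val_one hA n (fun _ _ => (1 : ℝ≥0∞)) (fun _ _ => rfl)
  simp only [h1, mul_one]
  exact oS_sum hπ

lemma markov_facts (hA : IsKernel A) (hπ : IsStochastic π) (n : ℕ) :
    Summable (markovLaw π A n) ∧ ∑' x : Fin n → ℕ, markovLaw π A n x = 1 := by
  refine tsum_of_ofReal (markov_nonneg hA hπ n) zero_le_one ?_
  rw [ENNReal.ofReal_one]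
  calc ∑' x : Fin n → ℕ, ENNReal.ofReal (markovLaw π A n x)
      = ∑' x : Fin n → ℕ, oML A (oS π) n x := tsum_congr fun x => markov_oML hA hπ n x
    _ = 1 := oML_norm hA hπ n

lemma prodB_nonneg (hB : IsKernel B) (n : ℕ) (Y x : Fin n → ℕ) :
    0 ≤ ∏ i, B (Y i) (x i) := Finset.prod_nonneg fun i _ => hB.1 _ _

lemma prodB_le_one (hB : IsKernel B) (n : ℕ) (Y x : Fin n → ℕ) :
    ∏ i, B (Y i) (x i) ≤ 1 :=
  Finset.prod_le_one (fun i _ => hB.1 _ _) (fun i _ => A_le_one hB _ _)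

lemma hmm_summand_summable (hA : IsKernel A) (hB : IsKernel B) (hπ : IsStochastic π)
    (n : ℕ) (Y : Fin n → ℕ) :
    Summable (fun x : Fin n → ℕ => markovLaw π A n x * ∏ i, B (Y i) (x i)) :=
  Summable.of_nonneg_of_le
    (fun x => mul_nonneg (markov_nonneg hA hπ n x) (prodB_nonneg hB n Y x))
    (fun x => mul_le_of_le_one_right (markov_nonneg hA hπ n x) (prodB_le_one hB n Y x))
    (markov_facts hA hπ n).1

lemma ohmm (hA : IsKernel A) (hB : IsKernel B) (hπ : IsStochastic π) (n : ℕ) (Y : Fin n → ℕ) :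
    ENNReal.ofReal (hmmLaw π A B n Y)
      = ∑' x : Fin n → ℕ, oML A (oS π) n x * ∏ i, oK B (Y i) (x i) := by
  rw [show hmmLaw π A B n Y = ∑' x : Fin n → ℕ, markovLaw π A n x * ∏ i, B (Y i) (x i) from rfl,
    ENNReal.ofReal_tsum_of_nonneg
      (fun x => mul_nonneg (markov_nonneg hA hπ n x) (prodB_nonneg hB n Y x))
      (hmm_summand_summable hA hB hπ n Y)]
  refine tsum_congr fun x => ?_
  rw [ENNReal.ofReal_mul (markov_nonneg hA hπ n x),
    ENNReal.ofReal_prod_of_nonneg (fun i _ => hB.1 _ _), markov_oML hA hπ n x]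
  rfl

lemma hmm_moment (hA : IsKernel A) (hB : IsKernel B) (hπ : IsStochastic π)
    (n : ℕ) (g : Fin n → ℕ → ℝ≥0∞) :
    ∑' Y : Fin n → ℕ, ENNReal.ofReal (hmmLaw π A B n Y) * ∏ i, g i (Y i)
      = ∑' z, oS π z * val A n (fun i zz => ∑' w, oK B w zz * g i w) z := by
  calc ∑' Y : Fin n → ℕ, ENNReal.ofReal (hmmLaw π A B n Y) * ∏ i, g i (Y i)
      = ∑' Y : Fin n → ℕ, ∑' x : Fin n → ℕ,
          oML A (oS π) n x * ∏ i, (oK B (Y i) (x i) * g i (Y i)) := by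
        refine tsum_congr fun Y => ?_
        rw [ohmm hA hB hπ n Y, ← ENNReal.tsum_mul_right]
        refine tsum_congr fun x => ?_
        rw [mul_assoc, ← Finset.prod_mul_distrib]
    _ = ∑' x : Fin n → ℕ, ∑' Y : Fin n → ℕ,
          oML A (oS π) n x * ∏ i, (oK B (Y i) (x i) * g i (Y i)) := ENNReal.tsum_comm
    _ = ∑' x : Fin n → ℕ, oML A (oS π) n x * ∏ i, (∑' w, oK B w (x i) * g i w) := by
        refine tsum_congr fun x => ?_
        rw [ENNReal.tsum_mul_left, tsum_pi_prod n (fun i w => oK B w (x i) * g i w)]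
    _ = ∑' z, oS π z * val A n (fun i zz => ∑' w, oK B w zz * g i w) z :=
        master hA n (fun i zz => ∑' w, oK B w zz * g i w) (oS π) (oS_sum hπ)

lemma ind_prod (v : ℕ) {n : ℕ} (k : Fin n) (Y : Fin n → ℕ) :
    (if Y k = v then (1:ℝ≥0∞) else 0)
      = ∏ i, (if i = k then (if Y i = v then (1:ℝ≥0∞) else 0) else 1) := by
  rw [Finset.prod_ite_eq' Finset.univ k (fun i => if Y i = v then (1:ℝ≥0∞) else 0)]
  simp

lemma tsum_oK_ind (hB : IsKernel B) (v zz : ℕ) :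
    ∑' w, oK B w zz * (if w = v then (1:ℝ≥0∞) else 0) = oK B v zz := by
  rw [tsum_eq_single v (fun w hw => by simp [hw])]
  simp

lemma moment1 (hA : IsKernel A) (hB : IsKernel B) (hπ : IsStochastic π)
    (hst : kerApp A π = π) (n : ℕ) (v : ℕ) (k : Fin n) :
    ∑' Y : Fin n → ℕ, ENNReal.ofReal (hmmLaw π A B n Y) * (if Y k = v then 1 else 0)
      = ∑' z, oS π z * oK B v z := by
  have h1 : ∑' Y : Fin n → ℕ, ENNReal.ofReal (hmmLaw π A B n Y) * (if Y k = v then 1 else 0)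
      = ∑' Y : Fin n → ℕ, ENNReal.ofReal (hmmLaw π A B n Y)
          * ∏ i, (fun i w => if i = k then (if w = v then (1:ℝ≥0∞) else 0) else 1) i (Y i) := by
    refine tsum_congr fun Y => ?_
    rw [← ind_prod v k Y]
  rw [h1, hmm_moment hA hB hπ n
    (fun i w => if i = k then (if w = v then (1:ℝ≥0∞) else 0) else 1)]
  have h2 : ∀ z, val A n (fun i zz => ∑' w, oK B w zz *
        (if i = k then (if w = v then (1:ℝ≥0∞) else 0) else 1)) z
      = oadj A (k : ℕ) (fun w => oK B v w) z := by
    intro z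
    rw [val_congr n _ (fun i zz => if (i : ℕ) = (k : ℕ) then oK B v zz else 1) ?_ z]
    · exact val_single hA n k (oK B v) k.isLt z
    · intro i zz
      show _ = if (i : ℕ) = (k : ℕ) then oK B v zz else 1
      by_cases hik : i = k
      · subst hik
        rw [if_pos rfl]
        calc ∑' w, oK B w zz * (if (i:Fin n) = i then (if w = v then (1:ℝ≥0∞) else 0) else 1)
            = ∑' w, oK B w zz * (if w = v then (1:ℝ≥0∞) else 0) :=
              tsum_congr fun w => by rw [if_pos rfl]
          _ = oK B v zz := tsum_oK_ind hB v zz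
      · rw [if_neg (fun hc => hik (Fin.ext hc))]
        calc ∑' w, oK B w zz * (if i = k then (if w = v then (1:ℝ≥0∞) else 0) else 1)
            = ∑' w, oK B w zz := tsum_congr fun w => by rw [if_neg hik, mul_one]
          _ = 1 := oK_row hB zz
  calc ∑' z, oS π z * val A n _ z
      = ∑' z, oS π z * oadj A (k : ℕ) (fun w => oK B v w) z :=
        tsum_congr fun z => by rw [h2 z]
    _ = ∑' z, oS π z * oK B v z := stat hA hπ hst (k : ℕ) _

lemma ind_prod2 (v : ℕ) {n : ℕ} (k l : Fin n) (hkl : k ≠ l) (Y : Fin n → ℕ) :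
    (if Y k = v then (1:ℝ≥0∞) else 0) * (if Y l = v then 1 else 0)
      = ∏ i, (fun i w => if i = k then (if w = v then (1:ℝ≥0∞) else 0)
          else if i = l then (if w = v then (1:ℝ≥0∞) else 0) else 1) i (Y i) := by
  rw [← Finset.mul_prod_erase Finset.univ _ (Finset.mem_univ k)]
  simp only [if_pos rfl]
  congr 1
  have h1 : ∀ i ∈ Finset.univ.erase k,
      (if i = k then (if Y i = v then (1:ℝ≥0∞) else 0)
        else if i = l then (if Y i = v then (1:ℝ≥0∞) else 0) else 1)
      = (if i = l then (if Y i = v then (1:ℝ≥0∞) else 0) else 1) := by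
    intro i hi
    rw [if_neg (Finset.ne_of_mem_erase hi)]
  rw [Finset.prod_congr rfl h1,
    Finset.prod_ite_eq' (Finset.univ.erase k) l (fun i => if Y i = v then (1:ℝ≥0∞) else 0)]
  rw [if_pos (Finset.mem_erase.mpr ⟨hkl.symm, Finset.mem_univ l⟩)]

lemma moment2 (hA : IsKernel A) (hB : IsKernel B) (hπ : IsStochastic π)
    (hst : kerApp A π = π) (n : ℕ) (v : ℕ) (k l : Fin n) (hkl : (k : ℕ) < (l : ℕ)) :
    ∑' Y : Fin n → ℕ, ENNReal.ofReal (hmmLaw π A B n Y)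
        * ((if Y k = v then 1 else 0) * (if Y l = v then 1 else 0))
      = ∑' z, oS π z * (oK B v z * oadj A ((l : ℕ) - (k : ℕ)) (fun w => oK B v w) z) := by
  have hkl' : k ≠ l := fun h => by subst h; exact lt_irrefl _ hkl
  have h1 : ∑' Y : Fin n → ℕ, ENNReal.ofReal (hmmLaw π A B n Y)
        * ((if Y k = v then 1 else 0) * (if Y l = v then 1 else 0))
      = ∑' Y : Fin n → ℕ, ENNReal.ofReal (hmmLaw π A B n Y)
          * ∏ i, (fun i w => if i = k then (if w = v then (1:ℝ≥0∞) else 0)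
              else if i = l then (if w = v then (1:ℝ≥0∞) else 0) else 1) i (Y i) := by
    refine tsum_congr fun Y => ?_
    rw [← ind_prod2 v k l hkl' Y]
  rw [h1, hmm_moment hA hB hπ n
    (fun i w => if i = k then (if w = v then (1:ℝ≥0∞) else 0)
      else if i = l then (if w = v then (1:ℝ≥0∞) else 0) else 1)]
  have h2 : ∀ z, val A n (fun i zz => ∑' w, oK B w zz *
        (if i = k then (if w = v then (1:ℝ≥0∞) else 0)
          else if i = l then (if w = v then (1:ℝ≥0∞) else 0) else 1)) z
      = oadj A (k : ℕ) (fun w => oK B v w * oadj A ((l : ℕ) - (k : ℕ)) (fun u => oK B v u) w) z := by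
    intro z
    rw [val_congr n _ (fun t zz => if (t : ℕ) = (k : ℕ) then oK B v zz
        else if (t : ℕ) = (l : ℕ) then oK B v zz else 1) ?_ z]
    · exact val_double hA n (k : ℕ) (l : ℕ) (oK B v) (oK B v) hkl l.isLt z
    · intro i zz
      show _ = if (i : ℕ) = (k : ℕ) then oK B v zz
        else if (i : ℕ) = (l : ℕ) then oK B v zz else 1
      by_cases hik : i = k
      · subst hik
        rw [if_pos rfl]
        calc ∑' w, oK B w zz * (if (i:Fin n) = i then (if w = v then (1:ℝ≥0∞) else 0)
                else if (i:Fin n) = l then (if w = v then (1:ℝ≥0∞) else 0) else 1)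
            = ∑' w, oK B w zz * (if w = v then (1:ℝ≥0∞) else 0) :=
              tsum_congr fun w => by rw [if_pos rfl]
          _ = oK B v zz := tsum_oK_ind hB v zz
      · rw [if_neg (fun hc => hik (Fin.ext hc))]
        by_cases hil : i = l
        · subst hil
          rw [if_pos rfl]
          calc ∑' w, oK B w zz * (if (i:Fin n) = k then (if w = v then (1:ℝ≥0∞) else 0)
                  else if (i:Fin n) = i then (if w = v then (1:ℝ≥0∞) else 0) else 1)
              = ∑' w, oK B w zz * (if w = v then (1:ℝ≥0∞) else 0) :=
                tsum_congr fun w => by rw [if_neg hik, if_pos rfl]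
            _ = oK B v zz := tsum_oK_ind hB v zz
        · rw [if_neg (fun hc => hil (Fin.ext hc))]
          calc ∑' w, oK B w zz * (if i = k then (if w = v then (1:ℝ≥0∞) else 0)
                  else if i = l then (if w = v then (1:ℝ≥0∞) else 0) else 1)
              = ∑' w, oK B w zz := tsum_congr fun w => by rw [if_neg hik, if_neg hil, mul_one]
            _ = 1 := oK_row hB zz
  calc ∑' z, oS π z * val A n _ z
      = ∑' z, oS π z * oadj A (k : ℕ)
          (fun w => oK B v w * oadj A ((l : ℕ) - (k : ℕ)) (fun u => oK B v u) w) z :=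
        tsum_congr fun z => by rw [h2 z]
    _ = ∑' z, oS π z * (oK B v z * oadj A ((l : ℕ) - (k : ℕ)) (fun w => oK B v w) z) :=
        stat hA hπ hst (k : ℕ) _


/-! ## Real-side conversions -/

lemma summable_mul_of_bounded {α : Type*} {μ : α → ℝ} (hμ : Summable μ) (h0 : ∀ a, 0 ≤ μ a)
    {g : α → ℝ} {C : ℝ} (hg : ∀ a, |g a| ≤ C) : Summable (fun a => μ a * g a) := by
  rw [← summable_abs_iff]
  refine Summable.of_nonneg_of_le (fun a => abs_nonneg _) (fun a => ?_) (hμ.mul_right C)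
  rw [abs_mul, abs_of_nonneg (h0 a)]
  exact mul_le_mul_of_nonneg_left (hg a) (h0 a)

lemma hmm_facts (hA : IsKernel A) (hB : IsKernel B) (hπ : IsStochastic π) (n : ℕ) :
    (∀ Y, 0 ≤ hmmLaw π A B n Y) ∧ Summable (hmmLaw π A B n)
      ∧ ∑' Y : Fin n → ℕ, hmmLaw π A B n Y = 1 := by
  have hnn : ∀ Y, 0 ≤ hmmLaw π A B n Y := fun Y =>
    tsum_nonneg fun x => mul_nonneg (markov_nonneg hA hπ n x) (prodB_nonneg hB n Y x)
  have hofr : ∑' Y : Fin n → ℕ, ENNReal.ofReal (hmmLaw π A B n Y) = ENNReal.ofReal 1 := by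
    rw [ENNReal.ofReal_one]
    calc ∑' Y : Fin n → ℕ, ENNReal.ofReal (hmmLaw π A B n Y)
        = ∑' Y : Fin n → ℕ, ∑' x : Fin n → ℕ, oML A (oS π) n x * ∏ i, oK B (Y i) (x i) :=
          tsum_congr fun Y => ohmm hA hB hπ n Y
      _ = ∑' x : Fin n → ℕ, ∑' Y : Fin n → ℕ, oML A (oS π) n x * ∏ i, oK B (Y i) (x i) :=
          ENNReal.tsum_comm
      _ = ∑' x : Fin n → ℕ, oML A (oS π) n x := by
          refine tsum_congr fun x => ?_
          rw [ENNReal.tsum_mul_left, tsum_pi_prod n (fun i w => oK B w (x i))]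
          have : ∀ i : Fin n, ∑' w, oK B w (x i) = 1 := fun i => oK_row hB (x i)
          rw [Finset.prod_congr rfl (fun i _ => this i), Finset.prod_const_one, mul_one]
      _ = 1 := oML_norm hA hπ n
  obtain ⟨hs, h1⟩ := tsum_of_ofReal hnn zero_le_one hofr
  exact ⟨hnn, hs, h1⟩

lemma orho (hB : IsKernel B) (hπ : IsStochastic π) (v : ℕ) :
    ∑' z, oS π z * oK B v z = ENNReal.ofReal (kerApp B π v) := by
  have hsum : Summable (fun x => B v x * π x) :=
    Summable.of_nonneg_of_le (fun x => mul_nonneg (hB.1 v x) (hπ.1 x))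
      (fun x => mul_le_of_le_one_left (hπ.1 x) (A_le_one hB v x))
      (summable_of_stochastic hπ)
  rw [show kerApp B π v = ∑' x, B v x * π x from rfl,
    ENNReal.ofReal_tsum_of_nonneg (fun x => mul_nonneg (hB.1 v x) (hπ.1 x)) hsum]
  refine tsum_congr fun x => ?_
  rw [ENNReal.ofReal_mul (hB.1 v x)]
  exact mul_comm _ _

lemma rho_nonneg (hB : IsKernel B) (hπ : IsStochastic π) (v : ℕ) : 0 ≤ kerApp B π v :=
  tsum_nonneg fun x => mul_nonneg (hB.1 v x) (hπ.1 x)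

lemma rho_eq2 (v : ℕ) : kerApp B π v = ∑' w, π w * B v w :=
  tsum_congr fun w => mul_comm _ _

lemma rho_facts (hB : IsKernel B) (hπ : IsStochastic π) :
    Summable (kerApp B π) ∧ ∑' v, kerApp B π v = 1 := by
  refine tsum_of_ofReal (rho_nonneg hB hπ) zero_le_one ?_
  rw [ENNReal.ofReal_one]
  calc ∑' v, ENNReal.ofReal (kerApp B π v)
      = ∑' v, ∑' z, oS π z * oK B v z := tsum_congr fun v => (orho hB hπ v).symm
    _ = ∑' z, ∑' v, oS π z * oK B v z := ENNReal.tsum_comm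
    _ = ∑' z, oS π z := by
        refine tsum_congr fun z => ?_
        rw [ENNReal.tsum_mul_left, oK_row hB z, mul_one]
    _ = 1 := oS_sum hπ

lemma rho_le_one (hB : IsKernel B) (hπ : IsStochastic π) (v : ℕ) : kerApp B π v ≤ 1 := by
  rw [← (rho_facts hB hπ).2]
  exact Summable.le_tsum (rho_facts hB hπ).1 v (fun w _ => rho_nonneg hB hπ w)

lemma eInd_ofReal (v : ℕ) {n : ℕ} (k : Fin n) (Y : Fin n → ℕ) :
    ENNReal.ofReal (eInd v k Y) = (if Y k = v then 1 else 0) := by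
  unfold eInd; split <;> simp

lemma m1_real (hA : IsKernel A) (hB : IsKernel B) (hπ : IsStochastic π)
    (hst : kerApp A π = π) (n : ℕ) (v : ℕ) (k : Fin n) :
    Summable (fun Y : Fin n → ℕ => hmmLaw π A B n Y * eInd v k Y)
      ∧ ∑' Y : Fin n → ℕ, hmmLaw π A B n Y * eInd v k Y = kerApp B π v := by
  have hμ0 := (hmm_facts hA hB hπ n).1
  refine tsum_of_ofReal
    (fun Y => mul_nonneg (hμ0 Y) (by unfold eInd; split <;> norm_num))
    (rho_nonneg hB hπ v) ?_
  calc ∑' Y : Fin n → ℕ, ENNReal.ofReal (hmmLaw π A B n Y * eInd v k Y)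
      = ∑' Y : Fin n → ℕ, ENNReal.ofReal (hmmLaw π A B n Y) * (if Y k = v then 1 else 0) := by
        refine tsum_congr fun Y => ?_
        rw [ENNReal.ofReal_mul (hμ0 Y), eInd_ofReal]
    _ = ∑' z, oS π z * oK B v z := moment1 hA hB hπ hst n v k
    _ = ENNReal.ofReal (kerApp B π v) := orho hB hπ v

/-! ## radj : real adjoint -/

def radj (A B : ℕ → ℕ → ℝ) (v : ℕ) (s z : ℕ) : ℝ :=
  (oadj A s (fun w => oK B v w) z).toReal

lemma oKB_le_one (hB : IsKernel B) (v w : ℕ) : oK B v w ≤ 1 :=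
  ENNReal.ofReal_le_one.mpr (A_le_one hB v w)

lemma oadjB_le_one (hA : IsKernel A) (hB : IsKernel B) (v s z : ℕ) :
    oadj A s (fun w => oK B v w) z ≤ 1 :=
  oadj_le_one hA (fun w => oKB_le_one hB v w) s z

lemma oadjB_ne_top (hA : IsKernel A) (hB : IsKernel B) (v s z : ℕ) :
    oadj A s (fun w => oK B v w) z ≠ ⊤ :=
  ne_top_of_le_ne_top ENNReal.one_ne_top (oadjB_le_one hA hB v s z)

lemma radj_ofReal (hA : IsKernel A) (hB : IsKernel B) (v s z : ℕ) :
    ENNReal.ofReal (radj A B v s z) = oadj A s (fun w => oK B v w) z :=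
  ENNReal.ofReal_toReal (oadjB_ne_top hA hB v s z)

lemma radj_nonneg (v s z : ℕ) : 0 ≤ radj A B v s z := ENNReal.toReal_nonneg

lemma radj_le_one (hA : IsKernel A) (hB : IsKernel B) (v s z : ℕ) : radj A B v s z ≤ 1 := by
  have := ENNReal.toReal_mono ENNReal.one_ne_top (oadjB_le_one hA hB v s z)
  simpa [radj] using this

lemma radj_eq (hA : IsKernel A) (hB : IsKernel B) (v s z : ℕ) :
    radj A B v s z = ∑' w, kerIter A s (dirac z) w * B v w := by
  have hK := (kerIter_facts hA (dirac_stochastic z) s).1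
  have h1 : oadj A s (fun w => oK B v w) z
      = ∑' w, oS (kerIter A s (dirac z)) w * oK B v w := by
    rw [oadj_dual s (fun w => oK B v w) z, ← oS_dirac z]
    exact tsum_congr fun w => by rw [(kerIter_facts hA (dirac_stochastic z) s).2 w]
  rw [radj, h1]
  rw [ENNReal.tsum_toReal_eq (f := fun w => oS (kerIter A s (dirac z)) w * oK B v w)
    (fun w => ENNReal.mul_ne_top ENNReal.ofReal_ne_top ENNReal.ofReal_ne_top)]
  refine tsum_congr fun w => ?_
  rw [ENNReal.toReal_mul]
  rw [show oS (kerIter A s (dirac z)) w = ENNReal.ofReal (kerIter A s (dirac z) w) from rfl,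
    show oK B v w = ENNReal.ofReal (B v w) from rfl,
    ENNReal.toReal_ofReal (hK.1 w), ENNReal.toReal_ofReal (hB.1 v w)]

lemma radj_tv_bound (hA : IsKernel A) (hB : IsKernel B) (hπ : IsStochastic π)
    (htv : ∀ (s x : ℕ), tv (kerIter A s (dirac x)) π ≤ G * θ ^ s) (v s z : ℕ) :
    |radj A B v s z - kerApp B π v| ≤ G * θ ^ s := by
  rw [radj_eq hA hB v s z, rho_eq2 v]
  exact le_trans
    (pair_tv (kerIter_facts hA (dirac_stochastic z) s).1 hπ (hB.1 v) (A_le_one hB v)) (htv s z)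

lemma m2_real (hA : IsKernel A) (hB : IsKernel B) (hπ : IsStochastic π)
    (hst : kerApp A π = π) (n : ℕ) (v : ℕ) (k l : Fin n) (hkl : (k : ℕ) < (l : ℕ)) :
    Summable (fun Y : Fin n → ℕ => hmmLaw π A B n Y * (eInd v k Y * eInd v l Y))
      ∧ ∑' Y : Fin n → ℕ, hmmLaw π A B n Y * (eInd v k Y * eInd v l Y)
          = ∑' z, π z * (B v z * radj A B v ((l : ℕ) - (k : ℕ)) z) := by
  have hμ0 := (hmm_facts hA hB hπ n).1
  have he0 : ∀ (k : Fin n) (Y : Fin n → ℕ), 0 ≤ eInd v k Y := by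
    intro k Y; unfold eInd; split <;> norm_num
  have hc0 : 0 ≤ ∑' z, π z * (B v z * radj A B v ((l : ℕ) - (k : ℕ)) z) :=
    tsum_nonneg fun z => mul_nonneg (hπ.1 z) (mul_nonneg (hB.1 v z) (radj_nonneg v _ z))
  refine tsum_of_ofReal
    (fun Y => mul_nonneg (hμ0 Y) (mul_nonneg (he0 k Y) (he0 l Y))) hc0 ?_
  have hsum : Summable (fun z => π z * (B v z * radj A B v ((l : ℕ) - (k : ℕ)) z)) := by
    refine Summable.of_nonneg_of_le
      (fun z => mul_nonneg (hπ.1 z) (mul_nonneg (hB.1 v z) (radj_nonneg v _ z)))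
      (fun z => mul_le_of_le_one_right (hπ.1 z) ?_) (summable_of_stochastic hπ)
    exact mul_le_one₀ (A_le_one hB v z) (radj_nonneg v _ z) (radj_le_one hA hB v _ z)
  calc ∑' Y : Fin n → ℕ, ENNReal.ofReal (hmmLaw π A B n Y * (eInd v k Y * eInd v l Y))
      = ∑' Y : Fin n → ℕ, ENNReal.ofReal (hmmLaw π A B n Y)
          * ((if Y k = v then 1 else 0) * (if Y l = v then 1 else 0)) := by
        refine tsum_congr fun Y => ?_
        rw [ENNReal.ofReal_mul (hμ0 Y), ENNReal.ofReal_mul (he0 k Y),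
          eInd_ofReal, eInd_ofReal]
    _ = ∑' z, oS π z * (oK B v z * oadj A ((l : ℕ) - (k : ℕ)) (fun w => oK B v w) z) :=
        moment2 hA hB hπ hst n v k l hkl
    _ = ENNReal.ofReal (∑' z, π z * (B v z * radj A B v ((l : ℕ) - (k : ℕ)) z)) := by
        rw [ENNReal.ofReal_tsum_of_nonneg
          (fun z => mul_nonneg (hπ.1 z) (mul_nonneg (hB.1 v z) (radj_nonneg v _ z))) hsum]
        refine (tsum_congr fun z => ?_).symm
        rw [ENNReal.ofReal_mul (hπ.1 z), ENNReal.ofReal_mul (hB.1 v z),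
          radj_ofReal hA hB v _ z]
        rfl

lemma m2_bound (hA : IsKernel A) (hB : IsKernel B) (hπ : IsStochastic π)
    (hst : kerApp A π = π)
    (htv : ∀ (s x : ℕ), tv (kerIter A s (dirac x)) π ≤ G * θ ^ s)
    (n : ℕ) (v : ℕ) (k l : Fin n) (hkl : (k : ℕ) < (l : ℕ)) :
    ∑' Y : Fin n → ℕ, hmmLaw π A B n Y * (eInd v k Y * eInd v l Y)
      ≤ kerApp B π v * kerApp B π v
        + kerApp B π v * (G * θ ^ ((l : ℕ) - (k : ℕ))) := by
  set s := (l : ℕ) - (k : ℕ) with hs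
  set ρ := kerApp B π v with hρ
  have hπBs : Summable (fun z => π z * B v z) :=
    Summable.of_nonneg_of_le (fun z => mul_nonneg (hπ.1 z) (hB.1 v z))
      (fun z => mul_le_of_le_one_right (hπ.1 z) (A_le_one hB v z))
      (summable_of_stochastic hπ)
  have h1 : Summable (fun z => π z * (B v z * radj A B v s z)) := by
    refine Summable.of_nonneg_of_le
      (fun z => mul_nonneg (hπ.1 z) (mul_nonneg (hB.1 v z) (radj_nonneg v _ z)))
      (fun z => mul_le_of_le_one_right (hπ.1 z) ?_) (summable_of_stochastic hπ)
    exact mul_le_one₀ (A_le_one hB v z) (radj_nonneg v _ z) (radj_le_one hA hB v _ z)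
  have h2 : Summable (fun z => π z * (B v z * ρ)) :=
    (hπBs.mul_right ρ).congr (fun z => by ring)
  have hρρ : ρ * ρ = ∑' z, π z * (B v z * ρ) := by
    calc ρ * ρ = (∑' z, π z * B v z) * ρ := by rw [← rho_eq2 v]
      _ = ∑' z, (π z * B v z) * ρ := (tsum_mul_right).symm
      _ = ∑' z, π z * (B v z * ρ) := tsum_congr fun z => by ring
  have hdiff : (∑' z, π z * (B v z * radj A B v s z)) - ρ * ρ
      = ∑' z, (π z * B v z) * (radj A B v s z - ρ) := by
    rw [hρρ, ← Summable.tsum_sub h1 h2]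
    exact tsum_congr fun z => by ring
  have hb : ∑' z, (π z * B v z) * (radj A B v s z - ρ)
      ≤ ∑' z, (π z * B v z) * (G * θ ^ s) := by
    refine Summable.tsum_le_tsum (fun z => ?_) ((h1.sub h2).congr (fun z => by ring))
      (hπBs.mul_right _)
    refine mul_le_mul_of_nonneg_left ?_ (mul_nonneg (hπ.1 z) (hB.1 v z))
    exact (le_abs_self _).trans (radj_tv_bound hA hB hπ htv v s z)
  have hend : ∑' z, (π z * B v z) * (G * θ ^ s) = ρ * (G * θ ^ s) := by
    rw [tsum_mul_right, ← rho_eq2 v]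
  rw [(m2_real hA hB hπ hst n v k l hkl).2]
  have := hdiff ▸ (hb.trans_eq hend)
  linarith

/-! ## double sum geometric bound -/

lemma geom_bound {θ : ℝ} (hθ0 : 0 ≤ θ) (hθ1 : θ < 1) (m : ℕ) :
    ∑ j ∈ Finset.range m, θ ^ j ≤ (1 - θ)⁻¹ :=
  le_trans (Summable.sum_le_tsum _ (fun i _ => pow_nonneg hθ0 i)
      (summable_geometric_of_lt_one hθ0 hθ1))
    (le_of_eq (tsum_geometric_of_lt_one hθ0 hθ1))

lemma inner_geom {θ G : ℝ} (hG : 0 ≤ G) (hθ0 : 0 ≤ θ) (hθ1 : θ < 1) (n lv : ℕ)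
    (hlv : lv ≤ n) :
    ∑ kv ∈ Finset.range n, (if kv < lv then G * θ ^ (lv - kv) else 0)
      ≤ G * (θ / (1 - θ)) := by
  have h1 : ∑ kv ∈ Finset.range n, (if kv < lv then G * θ ^ (lv - kv) else 0)
      = ∑ kv ∈ Finset.range lv, (if kv < lv then G * θ ^ (lv - kv) else 0) :=
    (Finset.sum_subset (Finset.range_subset_range.mpr hlv) (fun x _ hx => by
      rw [if_neg (by simpa using hx)])).symm
  have h2 : ∀ kv ∈ Finset.range lv,
      (if kv < lv then G * θ ^ (lv - kv) else 0) = G * θ ^ (lv - kv) :=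
    fun kv hkv => if_pos (Finset.mem_range.mp hkv)
  rw [h1, Finset.sum_congr rfl h2, ← Finset.mul_sum]
  refine mul_le_mul_of_nonneg_left ?_ hG
  have h3 : ∑ kv ∈ Finset.range lv, θ ^ (lv - kv)
      = ∑ j ∈ Finset.range lv, θ ^ (j + 1) := by
    rw [← Finset.sum_range_reflect (fun j => θ ^ (lv - j)) lv]
    refine Finset.sum_congr rfl fun j hj => ?_
    have hj' := Finset.mem_range.mp hj
    congr 1
    omega
  rw [h3]
  calc ∑ j ∈ Finset.range lv, θ ^ (j + 1) = θ * ∑ j ∈ Finset.range lv, θ ^ j := by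
        rw [Finset.mul_sum]
        exact Finset.sum_congr rfl fun j _ => by ring
    _ ≤ θ * (1 - θ)⁻¹ := mul_le_mul_of_nonneg_left (geom_bound hθ0 hθ1 lv) hθ0
    _ = θ / (1 - θ) := (div_eq_mul_inv θ (1 - θ)).symm

lemma dsum_bound (G θ : ℝ) (hG : 0 ≤ G) (hθ0 : 0 ≤ θ) (hθ1 : θ < 1) (n : ℕ) :
    ∑ k : Fin n, ∑ l : Fin n,
        (if k = l then (1 : ℝ) else G * θ ^ (Nat.dist (k : ℕ) (l : ℕ)))
      ≤ n * (1 + 2 * G * (θ / (1 - θ))) := by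
  have hpt : ∀ k l : Fin n,
      (if k = l then (1 : ℝ) else G * θ ^ (Nat.dist (k : ℕ) (l : ℕ)))
        ≤ (if k = l then (1 : ℝ) else 0)
          + ((if (k : ℕ) < (l : ℕ) then G * θ ^ ((l : ℕ) - (k : ℕ)) else 0)
            + (if (l : ℕ) < (k : ℕ) then G * θ ^ ((k : ℕ) - (l : ℕ)) else 0)) := by
    intro k l
    rcases lt_trichotomy (k : ℕ) (l : ℕ) with h | h | h
    · have hkl : k ≠ l := fun hc => by rw [hc] at h; exact lt_irrefl _ h
      rw [if_neg hkl, if_pos h, if_neg (show ¬((l : ℕ) < (k : ℕ)) from by omega),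
        Nat.dist_eq_sub_of_le (le_of_lt h)]
      rw [if_neg hkl]
      exact le_of_eq (by ring)
    · have hkl : k = l := Fin.ext h
      subst hkl
      simp
    · have hkl : k ≠ l := fun hc => by rw [hc] at h; exact lt_irrefl _ h
      rw [if_neg hkl, if_neg (show ¬((k : ℕ) < (l : ℕ)) from by omega), if_pos h,
        Nat.dist_comm, Nat.dist_eq_sub_of_le (le_of_lt h)]
      rw [if_neg hkl]
      exact le_of_eq (by ring)
  refine le_trans
    (Finset.sum_le_sum (fun k _ => Finset.sum_le_sum (fun l _ => hpt k l))) ?_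
  have hsplit : ∑ k : Fin n, ∑ l : Fin n,
      ((if k = l then (1 : ℝ) else 0)
        + ((if (k : ℕ) < (l : ℕ) then G * θ ^ ((l : ℕ) - (k : ℕ)) else 0)
          + (if (l : ℕ) < (k : ℕ) then G * θ ^ ((k : ℕ) - (l : ℕ)) else 0)))
      = (∑ k : Fin n, ∑ l : Fin n, (if k = l then (1 : ℝ) else 0))
        + ((∑ k : Fin n, ∑ l : Fin n,
            (if (k : ℕ) < (l : ℕ) then G * θ ^ ((l : ℕ) - (k : ℕ)) else 0))
          + (∑ k : Fin n, ∑ l : Fin n,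
            (if (l : ℕ) < (k : ℕ) then G * θ ^ ((k : ℕ) - (l : ℕ)) else 0))) := by
    simp only [Finset.sum_add_distrib]
  rw [hsplit]
  have hS1 : ∑ k : Fin n, ∑ l : Fin n, (if k = l then (1 : ℝ) else 0) = n := by
    have : ∀ k : Fin n, ∑ l : Fin n, (if k = l then (1 : ℝ) else 0) = 1 := by
      intro k
      rw [Finset.sum_ite_eq Finset.univ k (fun _ => (1 : ℝ))]
      simp
    rw [Finset.sum_congr rfl (fun k _ => this k), Finset.sum_const, Finset.card_univ,
      Fintype.card_fin, nsmul_eq_mul, mul_one]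
  have hS3 : ∑ k : Fin n, ∑ l : Fin n,
      (if (l : ℕ) < (k : ℕ) then G * θ ^ ((k : ℕ) - (l : ℕ)) else 0)
        ≤ n * (G * (θ / (1 - θ))) := by
    have hknn : ∀ k : Fin n, ∑ l : Fin n,
        (if (l : ℕ) < (k : ℕ) then G * θ ^ ((k : ℕ) - (l : ℕ)) else 0)
          ≤ G * (θ / (1 - θ)) := by
      intro k
      rw [Fin.sum_univ_eq_sum_range
        (fun lv => if lv < (k : ℕ) then G * θ ^ ((k : ℕ) - lv) else 0) n]
      exact inner_geom hG hθ0 hθ1 n (k : ℕ) (le_of_lt k.isLt)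
    calc ∑ k : Fin n, ∑ l : Fin n,
        (if (l : ℕ) < (k : ℕ) then G * θ ^ ((k : ℕ) - (l : ℕ)) else 0)
        ≤ ∑ _k : Fin n, G * (θ / (1 - θ)) := Finset.sum_le_sum fun k _ => hknn k
      _ = n * (G * (θ / (1 - θ))) := by
          rw [Finset.sum_const, Finset.card_univ, Fintype.card_fin, nsmul_eq_mul]
  have hS2 : ∑ k : Fin n, ∑ l : Fin n,
      (if (k : ℕ) < (l : ℕ) then G * θ ^ ((l : ℕ) - (k : ℕ)) else 0)
        ≤ n * (G * (θ / (1 - θ))) := by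
    rw [Finset.sum_comm]
    have hknn : ∀ l : Fin n, ∑ k : Fin n,
        (if (k : ℕ) < (l : ℕ) then G * θ ^ ((l : ℕ) - (k : ℕ)) else 0)
          ≤ G * (θ / (1 - θ)) := by
      intro l
      rw [Fin.sum_univ_eq_sum_range
        (fun kv => if kv < (l : ℕ) then G * θ ^ ((l : ℕ) - kv) else 0) n]
      exact inner_geom hG hθ0 hθ1 n (l : ℕ) (le_of_lt l.isLt)
    calc ∑ l : Fin n, ∑ k : Fin n,
        (if (k : ℕ) < (l : ℕ) then G * θ ^ ((l : ℕ) - (k : ℕ)) else 0)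
        ≤ ∑ _l : Fin n, G * (θ / (1 - θ)) := Finset.sum_le_sum fun l _ => hknn l
      _ = n * (G * (θ / (1 - θ))) := by
          rw [Finset.sum_const, Finset.card_univ, Fintype.card_fin, nsmul_eq_mul]
  rw [hS1]
  have := add_le_add hS2 hS3
  linarith


end VB

/-- **Variance bound from the proof of Lemma 4.** For a stationary `(G,θ)`-geometrically
ergodic hidden Markov chain with stationary output distribution `ρ = Bπ`:
`Var[ρ̂_y] ≤ ρ_y (1+2Gθ)/(n(1−θ))` for every `y`, and consequently
`𝔼 ∑_y (ρ_y − ρ̂_y)² ≤ (1+2Gθ)/(n(1−θ))`. -/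
theorem variance_bound (G θ : ℝ) (π : ℕ → ℝ) (A B : ℕ → ℕ → ℝ)
    (hA : IsKernel A) (hB : IsKernel B) (hge : IsGeomErgodic A π G θ)
    (n : ℕ) (hn : 0 < n) :
    (∀ v : ℕ,
      expect (hmmLaw π A B n)
          (fun Y => (emp Y v - expect (hmmLaw π A B n) (fun Y' => emp Y' v)) ^ 2)
        ≤ kerApp B π v * ((1 + 2 * G * θ) / (n * (1 - θ)))) ∧
    expect (hmmLaw π A B n) (fun Y => ∑' v : ℕ, (kerApp B π v - emp Y v) ^ 2)
      ≤ (1 + 2 * G * θ) / (n * (1 - θ)) := by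

  obtain ⟨hG, hθ0, hθ1, hπ, hst, htv⟩ := hge
  have hG0 : (0:ℝ) ≤ G := zero_le_one.trans hG
  have h1θ : (0:ℝ) < 1 - θ := by linarith
  have hn' : (0:ℝ) < n := by exact_mod_cast hn
  obtain ⟨hμ0, hμs, hμ1⟩ := VB.hmm_facts hA hB hπ n
  obtain ⟨hρs, hρ1⟩ := VB.rho_facts hB hπ
  have hρ0 : ∀ v, 0 ≤ kerApp B π v := VB.rho_nonneg hB hπ
  have hρle1 : ∀ v, kerApp B π v ≤ 1 := VB.rho_le_one hB hπ
  have he0 : ∀ (v : ℕ) (k : Fin n) (Y : Fin n → ℕ), 0 ≤ VB.eInd v k Y := by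
    intro v k Y; unfold VB.eInd; split <;> norm_num
  have he1 : ∀ (v : ℕ) (k : Fin n) (Y : Fin n → ℕ), VB.eInd v k Y ≤ 1 := by
    intro v k Y; unfold VB.eInd; split <;> norm_num
  have hm1 : ∀ (v : ℕ) (k : Fin n),
      Summable (fun Y : Fin n → ℕ => hmmLaw π A B n Y * VB.eInd v k Y)
        ∧ ∑' Y : Fin n → ℕ, hmmLaw π A B n Y * VB.eInd v k Y = kerApp B π v :=
    fun v k => VB.m1_real hA hB hπ hst n v k
  have hEemp : ∀ v : ℕ, expect (hmmLaw π A B n) (fun Y' => emp Y' v) = kerApp B π v := by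
    intro v
    calc expect (hmmLaw π A B n) (fun Y' => emp Y' v)
        = ∑' Y : Fin n → ℕ, ∑ k : Fin n, hmmLaw π A B n Y * VB.eInd v k Y / n := by
          refine tsum_congr fun Y => ?_
          show hmmLaw π A B n Y * emp Y v = _
          rw [show emp Y v = (∑ k : Fin n, VB.eInd v k Y) / n from rfl,
            Finset.sum_div, Finset.mul_sum]
          exact Finset.sum_congr rfl fun k _ => by ring
      _ = ∑ k : Fin n, ∑' Y : Fin n → ℕ, hmmLaw π A B n Y * VB.eInd v k Y / n :=
          Summable.tsum_finsetSum (fun k _ => ((hm1 v k).1).div_const _)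
      _ = ∑ k : Fin n, kerApp B π v / n :=
          Finset.sum_congr rfl fun k _ => by rw [tsum_div_const, (hm1 v k).2]
      _ = kerApp B π v := by
          rw [Finset.sum_const, Finset.card_univ, Fintype.card_fin, nsmul_eq_mul]
          field_simp
  have part1 : ∀ v : ℕ,
      expect (hmmLaw π A B n)
          (fun Y => (emp Y v - expect (hmmLaw π A B n) (fun Y' => emp Y' v)) ^ 2)
        ≤ kerApp B π v * ((1 + 2 * G * θ) / (n * (1 - θ))) := by
    intro v
    rw [hEemp v]
    have hT1s : ∀ k l : Fin n, Summable (fun Y : Fin n → ℕ =>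
        hmmLaw π A B n Y * (VB.eInd v k Y * VB.eInd v l Y)) := by
      intro k l
      refine VB.summable_mul_of_bounded hμs hμ0 (C := 1) (fun Y => ?_)
      rw [abs_of_nonneg (mul_nonneg (he0 v k Y) (he0 v l Y))]
      exact mul_le_one₀ (he1 v k Y) (he0 v l Y) (he1 v l Y)
    have hT1diag : ∀ k : Fin n,
        (∑' Y : Fin n → ℕ, hmmLaw π A B n Y * (VB.eInd v k Y * VB.eInd v k Y)) = (kerApp B π v) := by
      intro k
      rw [← (hm1 v k).2]
      refine tsum_congr fun Y => ?_
      unfold VB.eInd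
      by_cases hc : Y k = v <;> simp [hc]
    have hcov : ∀ k l : Fin n,
        Summable (fun Y : Fin n → ℕ =>
          hmmLaw π A B n Y * ((VB.eInd v k Y - (kerApp B π v)) * (VB.eInd v l Y - (kerApp B π v))))
        ∧ (∑' Y : Fin n → ℕ,
            hmmLaw π A B n Y * ((VB.eInd v k Y - (kerApp B π v)) * (VB.eInd v l Y - (kerApp B π v))))
            = (∑' Y : Fin n → ℕ, hmmLaw π A B n Y * (VB.eInd v k Y * VB.eInd v l Y))
              - (kerApp B π v) * (kerApp B π v) := by
      intro k l
      have hfs : Summable (fun Y : Fin n → ℕ =>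
          hmmLaw π A B n Y * (VB.eInd v k Y * VB.eInd v l Y)
            - (kerApp B π v) * (hmmLaw π A B n Y * VB.eInd v k Y)
            - (kerApp B π v) * (hmmLaw π A B n Y * VB.eInd v l Y)
            + (kerApp B π v) * (kerApp B π v) * hmmLaw π A B n Y) :=
        (((hT1s k l).sub ((hm1 v k).1.mul_left (kerApp B π v))).sub
          ((hm1 v l).1.mul_left (kerApp B π v))).add (hμs.mul_left ((kerApp B π v) * (kerApp B π v)))
      refine ⟨hfs.congr fun Y => by ring, ?_⟩
      calc (∑' Y : Fin n → ℕ,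
            hmmLaw π A B n Y * ((VB.eInd v k Y - (kerApp B π v)) * (VB.eInd v l Y - (kerApp B π v))))
          = ∑' Y : Fin n → ℕ,
              (hmmLaw π A B n Y * (VB.eInd v k Y * VB.eInd v l Y)
                - (kerApp B π v) * (hmmLaw π A B n Y * VB.eInd v k Y)
                - (kerApp B π v) * (hmmLaw π A B n Y * VB.eInd v l Y)
                + (kerApp B π v) * (kerApp B π v) * hmmLaw π A B n Y) := tsum_congr fun Y => by ring
        _ = (∑' Y : Fin n → ℕ, hmmLaw π A B n Y * (VB.eInd v k Y * VB.eInd v l Y))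
              - (kerApp B π v) * (kerApp B π v) := by
            rw [Summable.tsum_add (((hT1s k l).sub ((hm1 v k).1.mul_left (kerApp B π v))).sub
                ((hm1 v l).1.mul_left (kerApp B π v))) (hμs.mul_left ((kerApp B π v) * (kerApp B π v))),
              Summable.tsum_sub ((hT1s k l).sub ((hm1 v k).1.mul_left (kerApp B π v)))
                ((hm1 v l).1.mul_left (kerApp B π v)),
              Summable.tsum_sub (hT1s k l) ((hm1 v k).1.mul_left (kerApp B π v)),
              tsum_mul_left, tsum_mul_left, tsum_mul_left,
              (hm1 v k).2, (hm1 v l).2, hμ1]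
            ring
    have hcovb : ∀ k l : Fin n,
        (∑' Y : Fin n → ℕ,
            hmmLaw π A B n Y * ((VB.eInd v k Y - (kerApp B π v)) * (VB.eInd v l Y - (kerApp B π v))))
          ≤ (kerApp B π v) * (if k = l then (1:ℝ) else G * θ ^ (Nat.dist (k:ℕ) (l:ℕ))) := by
      intro k l
      rw [(hcov k l).2]
      by_cases hkl : k = l
      · subst hkl
        rw [if_pos rfl, hT1diag k, mul_one]
        nlinarith [hρ0 v]
      · rw [if_neg hkl]
        have hne : (k:ℕ) ≠ (l:ℕ) := fun hc => hkl (Fin.ext hc)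
        rcases lt_or_gt_of_ne hne with h | h
        · rw [Nat.dist_eq_sub_of_le (le_of_lt h)]
          have hb := VB.m2_bound hA hB hπ hst htv n v k l h
          linarith
        · rw [Nat.dist_comm, Nat.dist_eq_sub_of_le (le_of_lt h)]
          have hb := VB.m2_bound hA hB hπ hst htv n v l k h
          have hsym : (∑' Y : Fin n → ℕ,
              hmmLaw π A B n Y * (VB.eInd v k Y * VB.eInd v l Y))
              = ∑' Y : Fin n → ℕ,
                  hmmLaw π A B n Y * (VB.eInd v l Y * VB.eInd v k Y) :=
            tsum_congr fun Y => by ring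
          rw [hsym]
          linarith
    have hpt : ∀ Y : Fin n → ℕ, (emp Y v - (kerApp B π v)) ^ 2
        = (∑ k : Fin n, ∑ l : Fin n,
            (VB.eInd v k Y - (kerApp B π v)) * (VB.eInd v l Y - (kerApp B π v))) / ((n:ℝ) * n) := by
      intro Y
      have h1 : emp Y v - (kerApp B π v) = (∑ k : Fin n, (VB.eInd v k Y - (kerApp B π v))) / n := by
        rw [Finset.sum_sub_distrib, Finset.sum_const, Finset.card_univ, Fintype.card_fin,
          nsmul_eq_mul, sub_div,
          show emp Y v = (∑ k : Fin n, VB.eInd v k Y) / n from rfl]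
        congr 1
        field_simp
      rw [h1, div_pow, pow_two, pow_two, Finset.sum_mul_sum]
    have hVar : expect (hmmLaw π A B n) (fun Y => (emp Y v - (kerApp B π v)) ^ 2)
        = (∑ k : Fin n, ∑ l : Fin n, ∑' Y : Fin n → ℕ,
            hmmLaw π A B n Y * ((VB.eInd v k Y - (kerApp B π v)) * (VB.eInd v l Y - (kerApp B π v)))) / ((n:ℝ) * n) := by
      calc expect (hmmLaw π A B n) (fun Y => (emp Y v - (kerApp B π v)) ^ 2)
          = ∑' Y : Fin n → ℕ, (∑ k : Fin n, ∑ l : Fin n,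
              hmmLaw π A B n Y * ((VB.eInd v k Y - (kerApp B π v)) * (VB.eInd v l Y - (kerApp B π v)))) / ((n:ℝ) * n) := by
            refine tsum_congr fun Y => ?_
            show hmmLaw π A B n Y * (emp Y v - (kerApp B π v)) ^ 2 = _
            rw [hpt Y, ← mul_div_assoc]
            congr 1
            rw [Finset.mul_sum]
            exact Finset.sum_congr rfl fun k _ => by rw [Finset.mul_sum]
        _ = (∑' Y : Fin n → ℕ, ∑ k : Fin n, ∑ l : Fin n,
              hmmLaw π A B n Y * ((VB.eInd v k Y - (kerApp B π v)) * (VB.eInd v l Y - (kerApp B π v)))) / ((n:ℝ) * n) :=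
            tsum_div_const
        _ = (∑ k : Fin n, ∑ l : Fin n, ∑' Y : Fin n → ℕ,
              hmmLaw π A B n Y * ((VB.eInd v k Y - (kerApp B π v)) * (VB.eInd v l Y - (kerApp B π v)))) / ((n:ℝ) * n) := by
            congr 1
            rw [Summable.tsum_finsetSum (fun k _ => summable_sum (fun l _ => (hcov k l).1))]
            exact Finset.sum_congr rfl fun k _ => Summable.tsum_finsetSum (fun l _ => (hcov k l).1)
    rw [hVar]
    have hb1 : (∑ k : Fin n, ∑ l : Fin n, ∑' Y : Fin n → ℕ,
        hmmLaw π A B n Y * ((VB.eInd v k Y - (kerApp B π v)) * (VB.eInd v l Y - (kerApp B π v))))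
        ≤ (kerApp B π v) * ((n:ℝ) * (1 + 2 * G * (θ / (1 - θ)))) := by
      calc (∑ k : Fin n, ∑ l : Fin n, ∑' Y : Fin n → ℕ,
          hmmLaw π A B n Y * ((VB.eInd v k Y - (kerApp B π v)) * (VB.eInd v l Y - (kerApp B π v))))
          ≤ ∑ k : Fin n, ∑ l : Fin n,
              (kerApp B π v) * (if k = l then (1:ℝ) else G * θ ^ (Nat.dist (k:ℕ) (l:ℕ))) :=
            Finset.sum_le_sum fun k _ => Finset.sum_le_sum fun l _ => hcovb k l
        _ = (kerApp B π v) * ∑ k : Fin n, ∑ l : Fin n,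
              (if k = l then (1:ℝ) else G * θ ^ (Nat.dist (k:ℕ) (l:ℕ))) := by
            rw [Finset.mul_sum]
            exact Finset.sum_congr rfl fun k _ => by rw [Finset.mul_sum]
        _ ≤ (kerApp B π v) * ((n:ℝ) * (1 + 2 * G * (θ / (1 - θ)))) :=
            mul_le_mul_of_nonneg_left (VB.dsum_bound G θ hG0 hθ0 hθ1 n) (hρ0 v)
    have hnn : (0:ℝ) < (n:ℝ) * n := mul_pos hn' hn'
    refine le_trans ((div_le_div_iff_of_pos_right hnn).mpr hb1) ?_
    have key : (n:ℝ) * (1 + 2 * G * (θ / (1 - θ))) / ((n:ℝ) * n)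
        ≤ (1 + 2 * G * θ) / ((n:ℝ) * (1 - θ)) := by
      have hne : (1:ℝ) - θ ≠ 0 := ne_of_gt h1θ
      have k1 : 1 + 2 * G * (θ / (1 - θ)) ≤ (1 + 2 * G * θ) / (1 - θ) := by
        rw [le_div_iff₀ h1θ]
        have hexp : (1 + 2 * G * (θ / (1 - θ))) * (1 - θ) = (1 - θ) + 2 * G * θ := by
          field_simp
        rw [hexp]
        have := mul_nonneg hG0 hθ0
        linarith
      rw [mul_div_mul_left _ _ (ne_of_gt hn')]
      calc (1 + 2 * G * (θ / (1 - θ))) / (n:ℝ)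
          ≤ ((1 + 2 * G * θ) / (1 - θ)) / (n:ℝ) := by
            exact (div_le_div_iff_of_pos_right hn').mpr k1
        _ = (1 + 2 * G * θ) / ((n:ℝ) * (1 - θ)) := by rw [div_div, mul_comm (1 - θ) ((n:ℝ))]
    calc (kerApp B π v) * ((n:ℝ) * (1 + 2 * G * (θ / (1 - θ)))) / ((n:ℝ) * n)
        = (kerApp B π v) * ((n:ℝ) * (1 + 2 * G * (θ / (1 - θ))) / ((n:ℝ) * n)) := by
          rw [mul_div_assoc]
      _ ≤ (kerApp B π v) * ((1 + 2 * G * θ) / ((n:ℝ) * (1 - θ))) :=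
          mul_le_mul_of_nonneg_left key (hρ0 v)
  refine ⟨part1, ?_⟩
  have hemp0 : ∀ (Y : Fin n → ℕ) (v : ℕ), 0 ≤ emp Y v := by
    intro Y v
    refine div_nonneg (Finset.sum_nonneg fun i _ => ?_) (le_of_lt hn')
    split <;> norm_num
  have hemple : ∀ (Y : Fin n → ℕ) (v : ℕ), emp Y v ≤ 1 := by
    intro Y v
    unfold emp
    rw [div_le_one hn']
    calc (∑ i : Fin n, if Y i = v then (1:ℝ) else 0) ≤ ∑ _i : Fin n, (1:ℝ) :=
        Finset.sum_le_sum fun i _ => by split <;> norm_num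
      _ = n := by rw [Finset.sum_const, Finset.card_univ, Fintype.card_fin, nsmul_eq_mul, mul_one]
  have hempS : ∀ Y : Fin n → ℕ, Summable (fun v => emp Y v) := by
    intro Y
    apply summable_of_ne_finset_zero (s := Finset.image Y Finset.univ)
    intro v hv
    unfold emp
    rw [Finset.sum_eq_zero, zero_div]
    intro i _
    rw [if_neg]
    intro hc
    exact hv (Finset.mem_image.mpr ⟨i, Finset.mem_univ i, hc⟩)
  have hempsum : ∀ Y : Fin n → ℕ, ∑' v, emp Y v = 1 := by
    intro Y
    have hsing : ∀ i : Fin n, Summable (fun v => (if Y i = v then (1:ℝ) else 0) / n) := by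
      intro i
      apply summable_of_ne_finset_zero (s := {Y i})
      intro v hv
      rw [if_neg (fun hc => hv (by simp [hc])), zero_div]
    calc ∑' v, emp Y v
        = ∑' v, ∑ i : Fin n, (if Y i = v then (1:ℝ) else 0) / n :=
          tsum_congr fun v => Finset.sum_div _ _ _
      _ = ∑ i : Fin n, ∑' v, (if Y i = v then (1:ℝ) else 0) / n :=
          Summable.tsum_finsetSum (fun i _ => hsing i)
      _ = ∑ i : Fin n, 1 / (n:ℝ) := by
          refine Finset.sum_congr rfl fun i _ => ?_
          rw [tsum_eq_single (Y i) (fun v hv => by rw [if_neg (fun hc => hv hc.symm), zero_div])]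
          rw [if_pos rfl]
      _ = 1 := by
          rw [Finset.sum_const, Finset.card_univ, Fintype.card_fin, nsmul_eq_mul]
          field_simp
  have hgb : ∀ (v : ℕ) (Y : Fin n → ℕ),
      (kerApp B π v - emp Y v) ^ 2 ≤ 2 * kerApp B π v + 2 * emp Y v := by
    intro v Y
    nlinarith [hρ0 v, hρle1 v, hemp0 Y v, hemple Y v, sq_nonneg (kerApp B π v + emp Y v)]
  have hsumbound : ∀ Y : Fin n → ℕ,
      Summable (fun v => 2 * kerApp B π v + 2 * emp Y v) :=
    fun Y => (hρs.mul_left 2).add ((hempS Y).mul_left 2)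
  have hsum_g : ∀ Y : Fin n → ℕ, Summable (fun v => (kerApp B π v - emp Y v) ^ 2) :=
    fun Y => Summable.of_nonneg_of_le (fun v => sq_nonneg _) (fun v => hgb v Y) (hsumbound Y)
  have hgsum_le : ∀ Y : Fin n → ℕ, ∑' v, (kerApp B π v - emp Y v) ^ 2 ≤ 4 := by
    intro Y
    calc ∑' v, (kerApp B π v - emp Y v) ^ 2
        ≤ ∑' v, (2 * kerApp B π v + 2 * emp Y v) :=
          Summable.tsum_le_tsum (fun v => hgb v Y) (hsum_g Y) (hsumbound Y)
      _ = 2 * (∑' v, kerApp B π v) + 2 * (∑' v, emp Y v) := by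
          rw [Summable.tsum_add (hρs.mul_left 2) ((hempS Y).mul_left 2), tsum_mul_left, tsum_mul_left]
      _ = 4 := by rw [hρ1, hempsum Y]; norm_num
  have hf0 : ∀ (Y : Fin n → ℕ) (v : ℕ),
      0 ≤ hmmLaw π A B n Y * (kerApp B π v - emp Y v) ^ 2 :=
    fun Y v => mul_nonneg (hμ0 Y) (sq_nonneg _)
  have hfY : ∀ Y : Fin n → ℕ,
      Summable (fun v => hmmLaw π A B n Y * (kerApp B π v - emp Y v) ^ 2) :=
    fun Y => (hsum_g Y).mul_left _
  have hfsumY : ∀ Y : Fin n → ℕ,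
      ∑' v, hmmLaw π A B n Y * (kerApp B π v - emp Y v) ^ 2 ≤ 4 * hmmLaw π A B n Y := by
    intro Y
    calc ∑' v, hmmLaw π A B n Y * (kerApp B π v - emp Y v) ^ 2
        = hmmLaw π A B n Y * ∑' v, (kerApp B π v - emp Y v) ^ 2 := tsum_mul_left
      _ ≤ hmmLaw π A B n Y * 4 := mul_le_mul_of_nonneg_left (hgsum_le Y) (hμ0 Y)
      _ = 4 * hmmLaw π A B n Y := mul_comm _ _
  have hfT : Summable (fun Y : Fin n → ℕ =>
      ∑' v, hmmLaw π A B n Y * (kerApp B π v - emp Y v) ^ 2) :=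
    Summable.of_nonneg_of_le (fun Y => tsum_nonneg (hf0 Y)) hfsumY (hμs.mul_left 4)
  have hfv : ∀ v : ℕ,
      Summable (fun Y : Fin n → ℕ => hmmLaw π A B n Y * (kerApp B π v - emp Y v) ^ 2) := by
    intro v
    refine VB.summable_mul_of_bounded hμs hμ0 (C := 4) (fun Y => ?_)
    rw [abs_of_nonneg (sq_nonneg _)]
    refine (hgb v Y).trans ?_
    linarith [hρle1 v, hemple Y v]
  have huncurry : Summable (fun p : (Fin n → ℕ) × ℕ =>
      hmmLaw π A B n p.1 * (kerApp B π p.2 - emp p.1 p.2) ^ 2) := by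
    rw [summable_prod_of_nonneg (fun p => hf0 p.1 p.2)]
    exact ⟨fun Y => hfY Y, hfT⟩
  have hswap : ∑' (Y : Fin n → ℕ), ∑' (v : ℕ),
        hmmLaw π A B n Y * (kerApp B π v - emp Y v) ^ 2
      = ∑' (v : ℕ), ∑' (Y : Fin n → ℕ),
          hmmLaw π A B n Y * (kerApp B π v - emp Y v) ^ 2 :=
    (Summable.tsum_comm' (by exact huncurry) hfY hfv).symm
  have hexpect : expect (hmmLaw π A B n) (fun Y => ∑' v : ℕ, (kerApp B π v - emp Y v) ^ 2)
      = ∑' (v : ℕ), ∑' (Y : Fin n → ℕ),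
          hmmLaw π A B n Y * (kerApp B π v - emp Y v) ^ 2 := by
    calc expect (hmmLaw π A B n) (fun Y => ∑' v : ℕ, (kerApp B π v - emp Y v) ^ 2)
        = ∑' (Y : Fin n → ℕ), ∑' (v : ℕ),
            hmmLaw π A B n Y * (kerApp B π v - emp Y v) ^ 2 :=
          tsum_congr fun Y => tsum_mul_left.symm
      _ = _ := hswap
  rw [hexpect]
  have hvar_v : ∀ v : ℕ,
      ∑' (Y : Fin n → ℕ), hmmLaw π A B n Y * (kerApp B π v - emp Y v) ^ 2
        ≤ kerApp B π v * ((1 + 2 * G * θ) / (n * (1 - θ))) := by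
    intro v
    have heq : ∑' (Y : Fin n → ℕ), hmmLaw π A B n Y * (kerApp B π v - emp Y v) ^ 2
        = expect (hmmLaw π A B n)
            (fun Y => (emp Y v - expect (hmmLaw π A B n) (fun Y' => emp Y' v)) ^ 2) := by
      rw [hEemp v]
      exact tsum_congr fun Y => by ring
    rw [heq]
    exact part1 v
  calc ∑' (v : ℕ), ∑' (Y : Fin n → ℕ),
        hmmLaw π A B n Y * (kerApp B π v - emp Y v) ^ 2
      ≤ ∑' (v : ℕ), kerApp B π v * ((1 + 2 * G * θ) / (n * (1 - θ))) :=
        Summable.tsum_le_tsum hvar_v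
          (Summable.of_nonneg_of_le (fun v => tsum_nonneg fun Y => hf0 Y v) hvar_v
            (hρs.mul_right _))
          (hρs.mul_right _)
    _ = (∑' (v : ℕ), kerApp B π v) * ((1 + 2 * G * θ) / (n * (1 - θ))) := tsum_mul_right
    _ = (1 + 2 * G * θ) / (n * (1 - θ)) := by rw [hρ1, one_mul]

end
end

section
/- Let ρ be any probability distribution on ℕ. Then (1/√n)·∑_{y : ρ_y ≥ 1/n} √ρ_y → 0 as n → ∞. -/
open scoped BigOperators
open Filter

noncomputable section

/-- **Equation (17) / Lemma 7 of Berend–Kontorovich.** For any probability distribution `ρ` on ℕ,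
`(1/√n) ∑_{y : ρ_y ≥ 1/n} √ρ_y → 0` as `n → ∞`. -/
theorem sqrt_sum_tendsto_zero (ρ : ℕ → ℝ) (hρ : IsStochastic ρ) :
    Filter.Tendsto
      (fun n : ℕ => (1 / Real.sqrt n) * ∑' y, if 1 / (n : ℝ) ≤ ρ y then Real.sqrt (ρ y) else 0)
      Filter.atTop (nhds 0) := by
  obtain ⟨hnn, hsum⟩ : (∀ x, 0 ≤ ρ x) ∧ ∑' x, ρ x = 1 := hρ
  have hsummable : Summable ρ := by
    by_contra h
    rw [tsum_eq_zero_of_not_summable h] at hsum; norm_num at hsum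
  have hle1 : ∀ y, ρ y ≤ 1 := fun y => hsum ▸ Summable.le_tsum hsummable y (fun b _ => hnn b)
  have hfin : ∀ c : ℝ, 0 < c → {y | c ≤ ρ y}.Finite := by
    intro c hc
    have h1 : ∀ᶠ y in Filter.cofinite, ρ y ∈ Set.Iio c :=
      hsummable.tendsto_cofinite_zero (Iio_mem_nhds hc)
    exact (Filter.eventually_cofinite.mp h1).subset
      (fun y hy => by simp [Set.mem_setOf_eq] at hy ⊢; linarith [hy])
  have hind2 : ∀ m : ℕ, Summable (fun y => if ρ y < 1/(m:ℝ) then ρ y else 0) := by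
    intro m
    refine Summable.of_nonneg_of_le (fun y => ?_) (fun y => ?_) hsummable
    · split <;> simp [hnn]
    · split <;> simp [hnn]
  set g : ℕ → ℝ := fun m => ∑' y, if ρ y < 1/(m:ℝ) then ρ y else 0 with hg
  have hgto : Tendsto g atTop (nhds 0) := by
    have : Tendsto g atTop (nhds (∑' _ : ℕ, (0:ℝ))) := by
      apply tendsto_tsum_of_dominated_convergence hsummable
      · intro y
        rcases eq_or_lt_of_le (hnn y) with h | h
        · simpa [← h] using tendsto_const_nhds.congr (fun m => by simp [← h])
        · have : ∀ᶠ m : ℕ in atTop, (if ρ y < 1/(m:ℝ) then ρ y else 0) = 0 := by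
            have := Filter.Tendsto.eventually_lt (tendsto_one_div_atTop_nhds_zero_nat)
              tendsto_const_nhds h
            filter_upwards [this] with m hm
            rw [if_neg (not_lt.mpr hm.le)]
          exact Tendsto.congr' (this.mono fun m hm => hm.symm) tendsto_const_nhds
      · filter_upwards with m y
        rw [Real.norm_eq_abs, abs_of_nonneg (by split <;> simp [hnn])]
        split <;> simp [hnn]
    simpa using this
  rw [NormedAddCommGroup.tendsto_nhds_zero]
  intro ε hε
  obtain ⟨m, hm1, hgm⟩ : ∃ m : ℕ, 1 ≤ m ∧ g m < ε/2 := by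
    have := (hgto.eventually (eventually_lt_nhds (by linarith : (0:ℝ) < ε/2))).and
      (eventually_ge_atTop 1)
    obtain ⟨m, h1, h2⟩ := this.exists
    exact ⟨m, h2, h1⟩
  have hmpos : (0:ℝ) < 1/(m:ℝ) := by positivity
  set S := (hfin (1/m) hmpos).toFinset with hS
  set C : ℝ := (S.card : ℝ) with hC
  have hCnn : (0:ℝ) ≤ C := by positivity
  have hzero1 : ∀ y ∉ S, (if 1/(m:ℝ) ≤ ρ y then (1:ℝ) else 0) = 0 := by
    intro y hy
    simp only [hS, Set.Finite.mem_toFinset, Set.mem_setOf_eq] at hy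
    rw [if_neg hy]
  have hind1 : Summable (fun y => if 1/(m:ℝ) ≤ ρ y then (1:ℝ) else 0) :=
    summable_of_ne_finset_zero hzero1
  have hsum1 : (∑' y, if 1/(m:ℝ) ≤ ρ y then (1:ℝ) else 0) ≤ C := by
    rw [tsum_eq_sum hzero1]
    calc ∑ y ∈ S, (if 1/(m:ℝ) ≤ ρ y then (1:ℝ) else 0) ≤ ∑ y ∈ S, 1 := by
          apply Finset.sum_le_sum; intro i _; split <;> norm_num
      _ = C := by simp [hC]
  obtain ⟨N, hN⟩ : ∃ N : ℕ, 2 * C / ε < Real.sqrt N := by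
    obtain ⟨N, hN⟩ :=
      ((tendsto_natCast_atTop_atTop (R := ℝ)).eventually_ge_atTop ((2*C/ε)^2 + 1)).exists
    refine ⟨N, ?_⟩
    have h2 : ((2*C/ε)^2 : ℝ) < (N:ℝ) := by linarith
    nlinarith [Real.sq_sqrt (le_of_lt (lt_of_le_of_lt (by positivity) h2) : (0:ℝ) ≤ (N:ℝ)),
      Real.sqrt_nonneg (N:ℝ), div_nonneg (by positivity : (0:ℝ) ≤ 2*C) (le_of_lt hε)]
  filter_upwards [eventually_ge_atTop (max 1 N), eventually_gt_atTop 0] with n hn hn0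
  have hnR : (0:ℝ) < n := by exact_mod_cast hn0
  have hsn : (0:ℝ) < Real.sqrt n := Real.sqrt_pos.mpr hnR
  have hpt : ∀ y, (if 1/(n:ℝ) ≤ ρ y then Real.sqrt (ρ y) else 0)
      ≤ (if 1/(m:ℝ) ≤ ρ y then (1:ℝ) else 0)
        + Real.sqrt n * (if ρ y < 1/(m:ℝ) then ρ y else 0) := by
    intro y
    by_cases h1 : 1/(n:ℝ) ≤ ρ y
    · by_cases h2 : 1/(m:ℝ) ≤ ρ y
      · simp only [if_pos h1, if_pos h2, if_neg (not_lt.mpr h2), mul_zero, add_zero]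
        rw [show (1:ℝ) = Real.sqrt 1 by simp]
        exact Real.sqrt_le_sqrt (hle1 y)
      · have h2' : ρ y < 1/(m:ℝ) := not_le.mp h2
        simp only [if_pos h1, if_neg h2, if_pos h2', zero_add]
        have hs1 : Real.sqrt (1/(n:ℝ)) ≤ Real.sqrt (ρ y) := Real.sqrt_le_sqrt h1
        have hs2 : Real.sqrt (1/(n:ℝ)) = 1 / Real.sqrt n := by
          rw [one_div, Real.sqrt_inv, one_div]
        have hsq : Real.sqrt (ρ y) * Real.sqrt (ρ y) = ρ y := Real.mul_self_sqrt (hnn y)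
        have h3 : 1 / Real.sqrt n ≤ Real.sqrt (ρ y) := hs2 ▸ hs1
        have h6 : 1 ≤ Real.sqrt (ρ y) * Real.sqrt n := (div_le_iff₀ hsn).mp h3
        nlinarith [mul_nonneg (sub_nonneg.mpr h6) (Real.sqrt_nonneg (ρ y)), hsq]
    · simp only [if_neg h1]
      have h5 : (0:ℝ) ≤ (if 1/(m:ℝ) ≤ ρ y then (1:ℝ) else 0) := by split <;> norm_num
      have h4 : (0:ℝ) ≤ (if ρ y < 1/(m:ℝ) then ρ y else 0) := by split <;> simp [hnn]
      positivity
  have hn1 : 1 ≤ n := le_trans (le_max_left 1 N) hn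
  have hnpos : (0:ℝ) < 1/(n:ℝ) := by positivity
  set Sn := (hfin (1/n) hnpos).toFinset with hSn
  have hzeron : ∀ y ∉ Sn, (if 1/(n:ℝ) ≤ ρ y then Real.sqrt (ρ y) else 0) = 0 := by
    intro y hy
    simp only [hSn, Set.Finite.mem_toFinset, Set.mem_setOf_eq] at hy
    rw [if_neg hy]
  have hfn : Summable (fun y => if 1/(n:ℝ) ≤ ρ y then Real.sqrt (ρ y) else 0) :=
    summable_of_ne_finset_zero hzeron
  have hrhs : Summable (fun y => (if 1/(m:ℝ) ≤ ρ y then (1:ℝ) else 0)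
      + Real.sqrt n * (if ρ y < 1/(m:ℝ) then ρ y else 0)) :=
    hind1.add ((hind2 m).mul_left _)
  have hbound : (∑' y, if 1/(n:ℝ) ≤ ρ y then Real.sqrt (ρ y) else 0)
      ≤ C + Real.sqrt n * g m := by
    calc (∑' y, if 1/(n:ℝ) ≤ ρ y then Real.sqrt (ρ y) else 0)
        ≤ ∑' y, ((if 1/(m:ℝ) ≤ ρ y then (1:ℝ) else 0)
            + Real.sqrt n * (if ρ y < 1/(m:ℝ) then ρ y else 0)) :=
          Summable.tsum_le_tsum hpt hfn hrhs
      _ = (∑' y, if 1/(m:ℝ) ≤ ρ y then (1:ℝ) else 0) + Real.sqrt n * g m := by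
          rw [Summable.tsum_add hind1 ((hind2 m).mul_left _), tsum_mul_left]
      _ ≤ C + Real.sqrt n * g m := by linarith [hsum1]
  have htnn : (0:ℝ) ≤ ∑' y, if 1/(n:ℝ) ≤ ρ y then Real.sqrt (ρ y) else 0 :=
    tsum_nonneg (fun y => by split <;> simp [Real.sqrt_nonneg])
  have hgnn : 0 ≤ g m := tsum_nonneg (fun y => by split <;> simp [hnn])
  rw [Real.norm_eq_abs, abs_of_nonneg (by positivity)]
  have key : (1 / Real.sqrt n) * (∑' y, if 1/(n:ℝ) ≤ ρ y then Real.sqrt (ρ y) else 0)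
      ≤ C / Real.sqrt n + g m := by
    rw [one_div, inv_mul_le_iff₀ hsn]
    calc (∑' y, if 1/(n:ℝ) ≤ ρ y then Real.sqrt (ρ y) else 0)
        ≤ C + Real.sqrt n * g m := hbound
      _ = Real.sqrt n * (C / Real.sqrt n + g m) := by field_simp
  have hsnN : Real.sqrt N ≤ Real.sqrt n :=
    Real.sqrt_le_sqrt (by exact_mod_cast le_trans (le_max_right 1 N) hn)
  have hCd : C / Real.sqrt n < ε/2 := by
    have h5 : 2 * C / ε < Real.sqrt n := lt_of_lt_of_le hN hsnN
    rw [div_lt_iff₀ hsn]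
    rw [div_lt_iff₀ hε] at h5
    nlinarith
  linarith


end
end
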